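/- arXiv:2503.18259 — 7 statements merged into one kernel-verified Lean document; each statement's English description precedes it below -/
import Mathlib

section
/- Let α ∈ (0,1) and let (φ_n)_{n≥1} be the base kernel. There exist a constant C_R > 0 and s_0 ∈ (0,1] such that for all s ∈ (0, s_0), |φ̂(s) − (1 − s^α)| ≤ C_R · s. Consequently, for any δ ∈ (0, 1−α], |φ̂(s) − (1 − s^α)| ≤ C_R · s^{α+δ} for all s ∈ (0, s_0]. (Second-order Abelian bound for the chosen base kernel.) -/
open MeasureTheory Filter Set

/-- The base kernel `(φ_n)_{n ≥ 1}` (with `φ_0 := 0`). -/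
noncomputable def baseKernel (α : ℝ) (n : ℕ) : ℝ :=
  if n = 0 then 0
  else if n = 1 then 1 - 1 / Real.Gamma (1 - α)
  else (1 / Real.Gamma (1 - α)) * (((n : ℝ) - 1) ^ (-α) - (n : ℝ) ^ (-α))

/-- `φ̂(s) = Σ_{n ≥ 1} φ_n e^{-sn}`. -/
noncomputable def phiHat (α s : ℝ) : ℝ :=
  ∑' n : ℕ, baseKernel α n * Real.exp (-(s * n))

noncomputable def wT (α s : ℝ) (n : ℕ) : ℝ := ((n:ℝ)+1) ^ (-α) * Real.exp (-(s * ((n:ℝ)+1)))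

lemma aux_integrable {α s : ℝ} (hα1 : α < 1) (hs : 0 < s) :
    IntegrableOn (fun x : ℝ => x ^ (-α) * Real.exp (-(s * x))) (Ioi 0) := by
  have h1 : IntegrableOn (fun x : ℝ => Real.exp (-x) * x ^ (-α)) (Ioi 0) := by
    have := Real.GammaIntegral_convergent (s := 1 - α) (by linarith)
    have e : (1 - α - 1) = -α := by ring
    simpa [e] using this
  have h2 : IntegrableOn (fun x : ℝ => Real.exp (-(s*x)) * (s*x) ^ (-α)) (Ioi 0) := by
    have := (integrableOn_Ioi_comp_mul_left_iff
      (fun x : ℝ => Real.exp (-x) * x ^ (-α)) 0 hs).mpr (by simpa using h1)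
    simpa using this
  have h3 := h2.const_mul (s ^ α)
  refine IntegrableOn.congr_fun h3 ?_ measurableSet_Ioi
  intro x hx
  have hx0 : (0:ℝ) < x := hx
  simp only
  rw [Real.mul_rpow hs.le hx0.le]
  have h4 : s ^ α * s ^ (-α) = 1 := by
    rw [← Real.rpow_add hs]; simp
  calc s ^ α * (Real.exp (-(s*x)) * (s ^ (-α) * x ^ (-α)))
      = (s ^ α * s ^ (-α)) * (x ^ (-α) * Real.exp (-(s*x))) := by ring
    _ = x ^ (-α) * Real.exp (-(s*x)) := by rw [h4, one_mul]

lemma aux_integral {α s : ℝ} (hα1 : α < 1) (hs : 0 < s) :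
    ∫ x in Ioi (0:ℝ), x ^ (-α) * Real.exp (-(s * x)) = Real.Gamma (1 - α) * s ^ (α - 1) := by
  have hG : Real.Gamma (1 - α) = ∫ x in Ioi (0:ℝ), Real.exp (-x) * x ^ (-α) := by
    rw [Real.Gamma_eq_integral (by linarith)]
    congr 1 with x; congr 2; ring
  have key := integral_comp_mul_left_Ioi (fun x : ℝ => Real.exp (-x) * x ^ (-α)) 0 hs
  rw [mul_zero] at key
  have congr1 : ∫ x in Ioi (0:ℝ), x ^ (-α) * Real.exp (-(s * x))
      = ∫ x in Ioi (0:ℝ), s ^ α * (Real.exp (-(s*x)) * (s*x) ^ (-α)) := by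
    refine setIntegral_congr_fun measurableSet_Ioi fun x hx => ?_
    have hx0 : (0:ℝ) < x := hx
    rw [Real.mul_rpow hs.le hx0.le]
    have h1 : s ^ α * s ^ (-α) = 1 := by rw [← Real.rpow_add hs]; simp
    calc x ^ (-α) * Real.exp (-(s*x))
        = (s ^ α * s ^ (-α)) * (x ^ (-α) * Real.exp (-(s*x))) := by rw [h1, one_mul]
      _ = s ^ α * (Real.exp (-(s*x)) * (s ^ (-α) * x ^ (-α))) := by ring
  rw [congr1, integral_const_mul, key, ← hG, smul_eq_mul]
  have : s ^ α * s⁻¹ = s ^ (α - 1) := by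
    rw [← Real.rpow_neg_one s, ← Real.rpow_add hs]; ring_nf
  calc s ^ α * (s⁻¹ * Real.Gamma (1-α)) = (s ^ α * s⁻¹) * Real.Gamma (1-α) := by ring
    _ = Real.Gamma (1-α) * s ^ (α-1) := by rw [this]; ring

-- term of the series T


lemma wT_nonneg (α s : ℝ) (n : ℕ) : 0 ≤ wT α s n :=
  mul_nonneg (Real.rpow_nonneg (by positivity) _) (Real.exp_pos _).le

lemma wT_le_geom {α s : ℝ} (hα0 : 0 < α) (hs : 0 < s) (n : ℕ) :
    wT α s n ≤ Real.exp (-s) ^ n := by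
  have h1 : ((n:ℝ)+1) ^ (-α) ≤ 1 :=
    Real.rpow_le_one_of_one_le_of_nonpos (le_add_of_nonneg_left (Nat.cast_nonneg n)) (by linarith)
  have h2 : Real.exp (-(s * ((n:ℝ)+1))) ≤ Real.exp (-s) ^ n := by
    rw [← Real.exp_nat_mul]
    apply Real.exp_le_exp.mpr
    have : (0:ℝ) ≤ (n:ℝ) * s := by positivity
    nlinarith [hs.le]
  calc wT α s n ≤ 1 * (Real.exp (-s) ^ n) := by
        apply mul_le_mul h1 h2 (Real.exp_pos _).le one_pos.le
    _ = Real.exp (-s) ^ n := one_mul _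

lemma summable_wT {α s : ℝ} (hα0 : 0 < α) (hs : 0 < s) : Summable (wT α s) :=
  Summable.of_nonneg_of_le (wT_nonneg α s) (wT_le_geom hα0 hs)
    (summable_geometric_of_lt_one (Real.exp_pos _).le (Real.exp_lt_one_iff.mpr (by linarith)))

lemma f_antitone_on {α s x y : ℝ} (hα0 : 0 < α) (hs : 0 < s) (hx : 0 < x) (hxy : x ≤ y) :
    y ^ (-α) * Real.exp (-(s * y)) ≤ x ^ (-α) * Real.exp (-(s * x)) := by
  apply mul_le_mul (Real.rpow_le_rpow_of_nonpos hx hxy (by linarith))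
    (Real.exp_le_exp.mpr (by nlinarith)) (Real.exp_pos _).le (Real.rpow_nonneg hx.le _)



lemma tsum_wT_le {α s : ℝ} (hα0 : 0 < α) (hα1 : α < 1) (hs : 0 < s) :
    ∑' n, wT α s n ≤ ∫ x in Ioi (0:ℝ), x ^ (-α) * Real.exp (-(s * x)) := by
  set f : ℝ → ℝ := fun x => x ^ (-α) * Real.exp (-(s * x)) with hf
  have hint : IntegrableOn f (Ioi 0) := aux_integrable hα1 hs
  have hIoc : ∀ a b : ℝ, 0 ≤ a → IntegrableOn f (Ioc a b) := fun a b ha =>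
    hint.mono_set (fun x hx => lt_of_le_of_lt ha hx.1)
  refine Real.tsum_le_of_sum_range_le (wT_nonneg α s) fun N => ?_
  have step : ∀ i : ℕ, wT α s i ≤ ∫ x in Ioc (i:ℝ) ((i:ℝ)+1), f x := by
    intro i
    have hconst : ∫ _x in Ioc (i:ℝ) ((i:ℝ)+1), wT α s i = wT α s i := by
      rw [setIntegral_const, Real.volume_real_Ioc]
      simp
    rw [← hconst]
    refine setIntegral_mono_on ((integrableOn_const_iff).mpr (Or.inr ?_))
      (hIoc _ _ (Nat.cast_nonneg i)) measurableSet_Ioc fun x hx => ?_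
    · rw [Real.volume_Ioc]; simp
    · have hx0 : (0:ℝ) < x := lt_of_le_of_lt (Nat.cast_nonneg i) hx.1
      exact f_antitone_on hα0 hs hx0 hx.2
  have hii : ∀ k : ℕ, k < N → IntervalIntegrable f volume ((k:ℝ)) ((k:ℝ)+1) := by
    intro k _
    rw [intervalIntegrable_iff_integrableOn_Ioc_of_le (by linarith)]
    exact hIoc _ _ (Nat.cast_nonneg k)
  have adj := intervalIntegral.sum_integral_adjacent_intervals (a := fun i : ℕ => (i:ℝ))
    (μ := volume) (f := f) (n := N) (by intro k hk; push_cast; exact hii k hk)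
  have sumle : ∑ i ∈ Finset.range N, wT α s i ≤ ∫ x in (0:ℝ)..(N:ℝ), f x := by
    push_cast at adj
    rw [← adj]
    apply Finset.sum_le_sum
    intro i _
    rw [intervalIntegral.integral_of_le (by linarith)]
    exact step i
  refine sumle.trans ?_
  rw [intervalIntegral.integral_of_le (Nat.cast_nonneg N)]
  refine setIntegral_mono_set hint ?_ ?_
  · refine (ae_restrict_iff' measurableSet_Ioi).mpr (ae_of_all _ fun x hx => ?_)
    have hx0 : (0:ℝ) < x := hx
    exact mul_nonneg (Real.rpow_nonneg hx0.le _) (Real.exp_pos _).le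
  · exact HasSubset.Subset.eventuallyLE (fun x hx => hx.1)

lemma integral_Ioi_one_le_tsum_wT {α s : ℝ} (hα0 : 0 < α) (hα1 : α < 1) (hs : 0 < s) :
    ∫ x in Ioi (1:ℝ), x ^ (-α) * Real.exp (-(s * x)) ≤ ∑' n, wT α s n := by
  set f : ℝ → ℝ := fun x => x ^ (-α) * Real.exp (-(s * x)) with hf
  have hint : IntegrableOn f (Ioi 0) := aux_integrable hα1 hs
  have hint1 : IntegrableOn f (Ioi 1) := hint.mono_set (Ioi_subset_Ioi one_pos.le)
  have hIoc : ∀ a b : ℝ, 0 ≤ a → IntegrableOn f (Ioc a b) := fun a b ha =>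
    hint.mono_set (fun x hx => lt_of_le_of_lt ha hx.1)
  have key : ∀ N : ℕ, ∫ x in (1:ℝ)..((N:ℝ)+1), f x ≤ ∑' n, wT α s n := by
    intro N
    have step : ∀ i : ℕ, ∫ x in Ioc ((i:ℝ)+1) ((i:ℝ)+1+1), f x ≤ wT α s i := by
      intro i
      have hconst : ∫ _x in Ioc ((i:ℝ)+1) ((i:ℝ)+1+1), wT α s i = wT α s i := by
        rw [setIntegral_const, Real.volume_real_Ioc]
        simp
      rw [← hconst]
      refine setIntegral_mono_on (hIoc _ _ (by positivity))
        ((integrableOn_const_iff).mpr (Or.inr ?_)) measurableSet_Ioc fun x hx => ?_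
      · rw [Real.volume_Ioc]; simp
      · exact f_antitone_on hα0 hs (by positivity) hx.1.le
    have hii : ∀ k : ℕ, k < N → IntervalIntegrable f volume ((k:ℝ)+1) (((k:ℝ)+1)+1) := by
      intro k _
      rw [intervalIntegrable_iff_integrableOn_Ioc_of_le (by linarith)]
      exact hIoc _ _ (by positivity)
    have adj := intervalIntegral.sum_integral_adjacent_intervals
      (a := fun i : ℕ => (i:ℝ)+1) (μ := volume) (f := f) (n := N)
      (by intro k hk; push_cast; exact hii k hk)
    push_cast at adj
    calc ∫ x in (1:ℝ)..((N:ℝ)+1), f x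
        = ∑ k ∈ Finset.range N, ∫ x in ((k:ℝ)+1)..((k:ℝ)+1+1), f x := by
          rw [adj]; norm_num
      _ ≤ ∑ k ∈ Finset.range N, wT α s k := by
          refine Finset.sum_le_sum fun i _ => ?_
          rw [intervalIntegral.integral_of_le (by linarith)]
          exact step i
      _ ≤ ∑' n, wT α s n := Summable.sum_le_tsum _ (fun i _ => wT_nonneg α s i) (summable_wT hα0 hs)
  have tend := intervalIntegral_tendsto_integral_Ioi 1 hint1
    (tendsto_atTop_add_const_right atTop 1 tendsto_natCast_atTop_atTop)
  exact le_of_tendsto tend (Eventually.of_forall key)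

lemma integral_Ioc_le {α s : ℝ} (hα0 : 0 < α) (hα1 : α < 1) (hs : 0 < s) :
    ∫ x in Ioc (0:ℝ) 1, x ^ (-α) * Real.exp (-(s * x)) ≤ 1 / (1 - α) := by
  have hrint : IntegrableOn (fun x : ℝ => x ^ (-α)) (Ioc 0 1) := by
    have := (intervalIntegral.intervalIntegrable_rpow' (a := 0) (b := 1) (r := -α) (by linarith))
    rw [intervalIntegrable_iff_integrableOn_Ioc_of_le one_pos.le] at this
    exact this
  have h1 : ∫ x in Ioc (0:ℝ) 1, x ^ (-α) * Real.exp (-(s * x))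
      ≤ ∫ x in Ioc (0:ℝ) 1, x ^ (-α) := by
    refine setIntegral_mono_on
      ((aux_integrable hα1 hs).mono_set (fun x hx => hx.1)) hrint measurableSet_Ioc
      fun x hx => ?_
    have : Real.exp (-(s * x)) ≤ 1 := Real.exp_le_one_iff.mpr (by nlinarith [hx.1])
    nlinarith [Real.rpow_nonneg hx.1.le (-α), (Real.exp_pos (-(s*x))).le]
  have h2 : ∫ x in Ioc (0:ℝ) 1, x ^ (-α) = 1 / (1 - α) := by
    rw [← intervalIntegral.integral_of_le one_pos.le,
      integral_rpow (Or.inl (by linarith))]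
    rw [Real.one_rpow, Real.zero_rpow (by linarith)]
    ring_nf
  linarith








lemma phiHat_eq {α s : ℝ} (hα0 : 0 < α) (hα1 : α < 1) (hs : 0 < s) :
    phiHat α s = Real.exp (-s)
      - (1 / Real.Gamma (1 - α)) * (1 - Real.exp (-s)) * ∑' n, wT α s n := by
  have hG : 0 < Real.Gamma (1 - α) := Real.Gamma_pos_of_pos (by linarith)
  set c : ℝ := 1 / Real.Gamma (1 - α) with hc
  have hc0 : 0 < c := by positivity
  set F : ℕ → ℝ := fun n => baseKernel α n * Real.exp (-(s * n)) with hF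
  -- summability
  have habs : ∀ n : ℕ, |F n| ≤ (1 + c) * Real.exp (-s) ^ n := by
    intro n
    have hexp : Real.exp (-(s * n)) = Real.exp (-s) ^ n := by
      rw [← Real.exp_nat_mul]; ring_nf
    have hbk : |baseKernel α n| ≤ 1 + c := by
      rcases n with _ | _ | m
      · simp [baseKernel]; linarith
      · simp only [baseKernel, if_neg one_ne_zero, if_pos rfl]
        calc |1 - c| ≤ |(1:ℝ)| + |c| := abs_sub _ _
          _ = 1 + c := by rw [abs_one, abs_of_pos hc0]
      · have h2 : (m + 2 : ℕ) ≠ 0 := by omega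
        have h3 : (m + 2 : ℕ) ≠ 1 := by omega
        simp only [baseKernel, if_neg h2, if_neg h3]
        have hm1 : (1:ℝ) ≤ ((m + 2 : ℕ) : ℝ) - 1 := by push_cast; linarith [Nat.cast_nonneg (α := ℝ) m]
        have ha : (((m + 2 : ℕ) : ℝ) - 1) ^ (-α) ≤ 1 :=
          Real.rpow_le_one_of_one_le_of_nonpos hm1 (by linarith)
        have hb : (0:ℝ) ≤ (((m + 2 : ℕ) : ℝ) - 1) ^ (-α) := Real.rpow_nonneg (by linarith) _
        have hd : (0:ℝ) ≤ ((m + 2 : ℕ) : ℝ) ^ (-α) := Real.rpow_nonneg (by positivity) _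
        have he : ((m + 2 : ℕ) : ℝ) ^ (-α) ≤ (((m + 2 : ℕ) : ℝ) - 1) ^ (-α) := by
          apply Real.rpow_le_rpow_of_nonpos (by linarith) (by linarith) (by linarith)
        rw [abs_mul, abs_of_pos hc0, abs_of_nonneg (by linarith)]
        nlinarith
    rw [hF, abs_mul, abs_of_pos (Real.exp_pos _), hexp]
    apply mul_le_mul hbk le_rfl (by positivity) (by linarith)
  have hsum : Summable F := by
    apply Summable.of_abs
    apply Summable.of_nonneg_of_le (fun n => abs_nonneg _) habs
    exact ((summable_geometric_of_lt_one (Real.exp_pos _).le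
      (Real.exp_lt_one_iff.mpr (by linarith))).mul_left _)
  set T : ℝ := ∑' n, wT α s n with hT
  -- shift twice
  have h0 : phiHat α s = F 0 + ∑' n, F (n + 1) := Summable.tsum_eq_zero_add hsum
  have hsum1 : Summable (fun n => F (n + 1)) := (summable_nat_add_iff 1).mpr hsum
  have h1 : ∑' n, F (n + 1) = F 1 + ∑' n, F (n + 2) := Summable.tsum_eq_zero_add hsum1
  have hF0 : F 0 = 0 := by simp [hF, baseKernel]
  have hF1 : F 1 = (1 - c) * Real.exp (-s) := by
    simp [hF, baseKernel, hc]
  -- the tail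
  set u : ℕ → ℝ := fun n => wT α s n * Real.exp (-s) with hu
  set v : ℕ → ℝ := fun n => wT α s (n + 1) with hv
  have hsu : Summable u := (summable_wT hα0 hs).mul_right _
  have hsv : Summable v := (summable_nat_add_iff 1).mpr (summable_wT hα0 hs)
  have hF2 : ∀ n : ℕ, F (n + 2) = c * (u n - v n) := by
    intro n
    have h2 : (n + 2 : ℕ) ≠ 0 := by omega
    have h3 : (n + 2 : ℕ) ≠ 1 := by omega
    have hcast : ((n + 2 : ℕ) : ℝ) = (n : ℝ) + 2 := by push_cast; ring
    simp only [hF, baseKernel, if_neg h2, if_neg h3, hcast]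
    have e1 : ((n:ℝ) + 2) - 1 = (n:ℝ) + 1 := by ring
    have e2 : Real.exp (-(s * ((n:ℝ) + 2))) = Real.exp (-(s * ((n:ℝ)+1))) * Real.exp (-s) := by
      rw [← Real.exp_add]; ring_nf
    have hcast2 : (((n+1:ℕ)):ℝ) + 1 = (n:ℝ) + 2 := by push_cast; ring
    rw [e1]
    simp only [hu, hv, wT, hcast2]
    rw [e2, hc]
    ring
  have htail : ∑' n, F (n + 2) = c * (Real.exp (-s) * T - (T - Real.exp (-s))) := by
    have : ∑' n, F (n + 2) = ∑' n, (c * (u n - v n)) := by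
      exact tsum_congr hF2
    rw [this, tsum_mul_left, Summable.tsum_sub hsu hsv]
    have hsumu : ∑' n, u n = Real.exp (-s) * T := by
      rw [hu, tsum_mul_right, mul_comm]
    have hsumv : ∑' n, v n = T - Real.exp (-s) := by
      have := Summable.tsum_eq_zero_add (summable_wT hα0 hs)
      have hw0 : wT α s 0 = Real.exp (-s) := by
        simp [wT]
      rw [hT]
      rw [this, hw0]
      simp [hv]
    rw [hsumu, hsumv]
  rw [h0, hF0, h1, hF1, htail]
  ring


lemma T_bounds {α s : ℝ} (hα0 : 0 < α) (hα1 : α < 1) (hs : 0 < s) :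
    Real.Gamma (1 - α) * s ^ (α - 1) - 1 / (1 - α) ≤ ∑' n, wT α s n ∧
    ∑' n, wT α s n ≤ Real.Gamma (1 - α) * s ^ (α - 1) := by
  have hint := aux_integrable hα1 hs
  have hval := aux_integral hα1 hs
  have hsplit : ∫ x in Ioi (0:ℝ), x ^ (-α) * Real.exp (-(s * x))
      = (∫ x in Ioc (0:ℝ) 1, x ^ (-α) * Real.exp (-(s * x)))
        + ∫ x in Ioi (1:ℝ), x ^ (-α) * Real.exp (-(s * x)) := by
    rw [← setIntegral_union (Ioc_disjoint_Ioi le_rfl) measurableSet_Ioi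
      (hint.mono_set fun x hx => hx.1) (hint.mono_set (Ioi_subset_Ioi one_pos.le)),
      Ioc_union_Ioi_eq_Ioi one_pos.le]
  constructor
  · have h1 := integral_Ioi_one_le_tsum_wT hα0 hα1 hs
    have h2 := integral_Ioc_le hα0 hα1 hs
    linarith [hval ▸ hsplit]
  · exact (tsum_wT_le hα0 hα1 hs).trans (le_of_eq hval)

lemma core_bound {α : ℝ} (hα0 : 0 < α) (hα1 : α < 1) {s : ℝ} (hs : 0 < s) (hs1 : s ≤ 1) :
    |phiHat α s - (1 - s ^ α)| ≤ (2 + (1 / Real.Gamma (1 - α)) / (1 - α)) * s := by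
  have hG : 0 < Real.Gamma (1 - α) := Real.Gamma_pos_of_pos (by linarith)
  set c : ℝ := 1 / Real.Gamma (1 - α) with hc
  have hc0 : 0 < c := by positivity
  set T : ℝ := ∑' n, wT α s n with hT
  set E : ℝ := T - Real.Gamma (1 - α) * s ^ (α - 1) with hE
  obtain ⟨hTlb, hTub⟩ := T_bounds hα0 hα1 hs
  have hEub : E ≤ 0 := by rw [hE]; linarith
  have hElb : -(1 / (1 - α)) ≤ E := by rw [hE]; linarith
  have hexp1 : 1 - s ≤ Real.exp (-s) := by linarith [Real.add_one_le_exp (-s)]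
  have hexp2 : Real.exp (-s) ≤ 1 := Real.exp_le_one_iff.mpr (by linarith)
  have hexp3 : Real.exp (-s) ≤ 1 - s + s ^ 2 := by
    have h1 : Real.exp (-s) * (1 + s) ≤ Real.exp (-s) * Real.exp s := by
      apply mul_le_mul_of_nonneg_left _ (Real.exp_pos _).le
      linarith [Real.add_one_le_exp s]
    rw [← Real.exp_add, neg_add_cancel, Real.exp_zero] at h1
    nlinarith [Real.exp_pos (-s), sq_nonneg s]
  have hsa : s * s ^ (α - 1) = s ^ α := by
    have h := (Real.rpow_add hs 1 (α - 1)).symm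
    rw [Real.rpow_one] at h
    have e : 1 + (α - 1) = α := by ring
    rw [e] at h
    exact h
  have hu_nn : 0 ≤ s ^ (α - 1) := Real.rpow_nonneg hs.le _
  have hsα1 : s ^ α ≤ 1 := Real.rpow_le_one hs.le hs1 hα0.le
  have hsα0 : 0 ≤ s ^ α := Real.rpow_nonneg hs.le _
  have hcΓ : c * Real.Gamma (1 - α) = 1 := by rw [hc]; field_simp
  have hD : phiHat α s - (1 - s ^ α)
      = (Real.exp (-s) - 1) + (s - (1 - Real.exp (-s))) * s ^ (α - 1)
        - c * (1 - Real.exp (-s)) * E := by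
    rw [phiHat_eq hα0 hα1 hs, ← hc, ← hT]
    have hTE : T = Real.Gamma (1 - α) * s ^ (α - 1) + E := by rw [hE]; ring
    rw [hTE, ← hsa]
    linear_combination ((Real.exp (-s) - 1) * s ^ (α - 1)) * hcΓ
  have h1 : |Real.exp (-s) - 1| ≤ s := abs_le.mpr ⟨by linarith, by linarith⟩
  have h2 : |(s - (1 - Real.exp (-s))) * s ^ (α - 1)| ≤ s := by
    have hnn : 0 ≤ s - (1 - Real.exp (-s)) := by linarith
    have hub : s - (1 - Real.exp (-s)) ≤ s ^ 2 := by nlinarith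
    rw [abs_of_nonneg (mul_nonneg hnn hu_nn)]
    calc (s - (1 - Real.exp (-s))) * s ^ (α - 1) ≤ s ^ 2 * s ^ (α - 1) := by
          exact mul_le_mul_of_nonneg_right hub hu_nn
      _ = s * (s * s ^ (α - 1)) := by ring
      _ = s * s ^ α := by rw [hsa]
      _ ≤ s * 1 := by exact mul_le_mul_of_nonneg_left hsα1 hs.le
      _ = s := mul_one s
  have h3 : |c * (1 - Real.exp (-s)) * E| ≤ c / (1 - α) * s := by
    rw [abs_mul, abs_mul, abs_of_pos hc0, abs_of_nonneg (by linarith : (0:ℝ) ≤ 1 - Real.exp (-s))]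
    have hEabs : |E| ≤ 1 / (1 - α) := abs_le.mpr ⟨hElb, hEub.trans (le_of_lt (div_pos one_pos (by linarith)))⟩
    have h1me : 1 - Real.exp (-s) ≤ s := by linarith
    have hstep : c * (1 - Real.exp (-s)) * |E| ≤ c * s * (1 / (1 - α)) := by
      have hn1 : (0:ℝ) ≤ 1 - Real.exp (-s) := by linarith
      have := mul_le_mul (mul_le_mul_of_nonneg_left h1me hc0.le) hEabs (abs_nonneg E)
        (by positivity)
      exact this
    calc c * (1 - Real.exp (-s)) * |E| ≤ c * s * (1 / (1 - α)) := hstep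
      _ = c / (1 - α) * s := by ring
  calc |phiHat α s - (1 - s ^ α)|
      ≤ |(Real.exp (-s) - 1) + (s - (1 - Real.exp (-s))) * s ^ (α - 1)|
        + |c * (1 - Real.exp (-s)) * E| := by rw [hD]; exact abs_sub _ _
    _ ≤ |Real.exp (-s) - 1| + |(s - (1 - Real.exp (-s))) * s ^ (α - 1)|
        + |c * (1 - Real.exp (-s)) * E| := by
          have := abs_add_le (Real.exp (-s) - 1) ((s - (1 - Real.exp (-s))) * s ^ (α - 1))
          linarith
    _ ≤ s + s + c / (1 - α) * s := by linarith
    _ = (2 + c / (1 - α)) * s := by ring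

/-- Second-order Abelian bound: there are `C_R > 0` and `s₀ ∈ (0,1]` with
`|φ̂(s) - (1 - s^α)| ≤ C_R s` for `s ∈ (0, s₀)`, and consequently
`|φ̂(s) - (1 - s^α)| ≤ C_R s^{α+δ}` for any `δ ∈ (0, 1-α]` and `s ∈ (0, s₀]`. -/
theorem phiHat_second_order_abelian (α : ℝ) (hα : α ∈ Set.Ioo (0 : ℝ) 1) :
    ∃ C : ℝ, 0 < C ∧ ∃ s₀ ∈ Set.Ioc (0 : ℝ) 1,
      (∀ s : ℝ, 0 < s → s < s₀ → |phiHat α s - (1 - s ^ α)| ≤ C * s) ∧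
      (∀ δ ∈ Set.Ioc (0 : ℝ) (1 - α), ∀ s : ℝ, 0 < s → s ≤ s₀ →
        |phiHat α s - (1 - s ^ α)| ≤ C * s ^ (α + δ)) := by
  obtain ⟨hα0, hα1⟩ := hα
  have hG : 0 < Real.Gamma (1 - α) := Real.Gamma_pos_of_pos (by linarith)
  have hCpos : (0:ℝ) < 2 + (1 / Real.Gamma (1 - α)) / (1 - α) := by
    have : (0:ℝ) < (1 / Real.Gamma (1 - α)) / (1 - α) := div_pos (by positivity) (by linarith)
    linarith
  refine ⟨2 + (1 / Real.Gamma (1 - α)) / (1 - α), hCpos, 1, ⟨one_pos, le_rfl⟩, ?_, ?_⟩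
  · intro s hs hs1
    exact core_bound hα0 hα1 hs hs1.le
  · intro δ hδ s hs hs1
    have hcore := core_bound hα0 hα1 hs hs1
    have hmono : s ≤ s ^ (α + δ) := by
      have := Real.rpow_le_rpow_of_exponent_ge hs hs1 (by linarith [hδ.2] : α + δ ≤ 1)
      rwa [Real.rpow_one] at this
    have hC : (0:ℝ) ≤ 2 + (1 / Real.Gamma (1 - α)) / (1 - α) := hCpos.le
    calc |phiHat α s - (1 - s ^ α)| ≤ (2 + (1 / Real.Gamma (1 - α)) / (1 - α)) * s := hcore
      _ ≤ (2 + (1 / Real.Gamma (1 - α)) / (1 - α)) * s ^ (α + δ) :=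
          mul_le_mul_of_nonneg_left hmono hC
end

section
/- Let (φ_n)_{n≥1} be a nonnegative real sequence with Σ_{n≥1} φ_n = 1, let a ∈ (0,1), let τ ≥ 1 be an integer, and let ψ be the renewal kernel of φ with parameter a; set ψ_0 := 0 and define the step function ζ(t) := ((1−a)/a)·τ·ψ_{⌊tτ⌋} for t ≥ 0. Then for every z > 0, t ↦ e^{−zt} ζ(t) is integrable on (0,∞) and ∫_0^∞ e^{−zt} ζ(t) dt = (1−a) · (τ(1 − e^{−z/τ})/z) · G(e^{−z/τ})/(1 − a·G(e^{−z/τ})), where G(x) := Σ_{n≥1} φ_n x^n. -/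
open MeasureTheory Filter Set

/-- Discrete convolution powers: `convPow f k` is `f^{*(k+1)}`. -/
noncomputable def convPow (f : ℕ → ℝ) : ℕ → ℕ → ℝ
  | 0 => f
  | (k + 1) => fun n => ∑ m ∈ Finset.Ico 1 n, convPow f k m * f (n - m)

/-- Renewal kernel of `f` with parameter `a`: `ψ_n = Σ_{k ≥ 1} a^k (f^{*k})_n`. -/
noncomputable def renewalKernel (f : ℕ → ℝ) (a : ℝ) (n : ℕ) : ℝ :=
  ∑' k : ℕ, a ^ (k + 1) * convPow f k n

/-- The rescaled step function `ζ(t) = ((1-a)/a)·τ·ψ_{⌊tτ⌋}`. -/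
noncomputable def stepKernel (f : ℕ → ℝ) (a : ℝ) (τ : ℕ) (t : ℝ) : ℝ :=
  ((1 - a) / a) * (τ : ℝ) * renewalKernel f a ⌊t * (τ : ℝ)⌋₊

lemma convPow_zero_eq (f : ℕ → ℝ) (hf : f 0 = 0) (k : ℕ) : convPow f k 0 = 0 := by
  cases k with
  | zero => exact hf
  | succ k => simp [convPow]

lemma convPow_nonneg (f : ℕ → ℝ) (hf : ∀ n, 0 ≤ f n) (k : ℕ) : ∀ n, 0 ≤ convPow f k n := by
  induction k with
  | zero => exact hf
  | succ k ih =>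
    intro n
    exact Finset.sum_nonneg fun m _ => mul_nonneg (ih m) (hf _)

lemma convPow_succ_range (f : ℕ → ℝ) (hf : f 0 = 0) (k n : ℕ) :
    convPow f (k + 1) n = ∑ m ∈ Finset.range (n + 1), convPow f k m * f (n - m) := by
  show (∑ m ∈ Finset.Ico 1 n, convPow f k m * f (n - m)) = _
  rw [Finset.range_eq_Ico]
  refine Finset.sum_subset ?_ ?_
  · intro m hm
    have := Finset.mem_Ico.mp hm
    exact Finset.mem_Ico.mpr ⟨Nat.zero_le _, by omega⟩
  · intro m hm hm'
    have h1 := Finset.mem_Ico.mp hm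
    have h2 : m < 1 ∨ n ≤ m := by
      by_contra h; push_neg at h; exact hm' (Finset.mem_Ico.mpr ⟨by omega, by omega⟩)
    rcases h2 with h | h
    · have : m = 0 := by omega
      rw [this, convPow_zero_eq f hf, zero_mul]
    · have : m = n := by omega
      rw [this, Nat.sub_self, hf, mul_zero]

lemma convPow_scale (f : ℕ → ℝ) (x : ℝ) (k : ℕ) :
    ∀ n, convPow (fun m => f m * x ^ m) k n = convPow f k n * x ^ n := by
  induction k with
  | zero => intro n; rfl
  | succ k ih =>
    intro n
    show (∑ m ∈ Finset.Ico 1 n, _) = (∑ m ∈ Finset.Ico 1 n, _) * x ^ n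
    rw [Finset.sum_mul]
    refine Finset.sum_congr rfl fun m hm => ?_
    simp only [Finset.mem_Ico] at hm
    rw [ih m]
    have : x ^ m * x ^ (n - m) = x ^ n := by
      rw [← pow_add]; congr 1; omega
    rw [show convPow f k m * x ^ m * (f (n - m) * x ^ (n - m))
        = convPow f k m * f (n - m) * (x ^ m * x ^ (n - m)) by ring, this]

lemma convPow_hasSum (g : ℕ → ℝ) (h0 : g 0 = 0) (hnn : ∀ n, 0 ≤ g n) (S : ℝ)
    (hS : HasSum g S) (k : ℕ) : HasSum (convPow g k) (S ^ (k + 1)) := by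
  induction k with
  | zero => simpa [convPow] using hS
  | succ k ih =>
    have hknn := convPow_nonneg g hnn k
    have h1 : Summable fun n => ‖convPow g k n‖ := by
      simpa [Real.norm_of_nonneg, abs_of_nonneg, hknn _] using ih.summable.abs
    have h2 : Summable fun n => ‖g n‖ := by
      simpa [abs_of_nonneg, hnn _] using hS.summable.abs
    have h3 := hasSum_sum_range_mul_of_summable_norm h1 h2
    rw [ih.tsum_eq, hS.tsum_eq] at h3
    have heq : (fun n => ∑ m ∈ Finset.range (n + 1), convPow g k m * g (n - m))
        = convPow g (k + 1) := by
      funext n; rw [convPow_succ_range g h0]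
    rw [heq] at h3
    rw [pow_succ]
    exact h3

lemma integral_exp_Ico (z A B : ℝ) (hz : 0 < z) (hAB : A ≤ B) :
    ∫ t in Set.Ico A B, Real.exp (-(z * t)) =
      (Real.exp (-(z * A)) - Real.exp (-(z * B))) / z := by
  rw [MeasureTheory.setIntegral_congr_set Ico_ae_eq_Ioc, ← intervalIntegral.integral_of_le hAB]
  have key : ∀ t ∈ Set.uIcc A B,
      HasDerivAt (fun s => -Real.exp (-(z * s)) / z) (Real.exp (-(z * t))) t := by
    intro t _
    have h1 : HasDerivAt (fun s : ℝ => -(z * s)) (-z) t := by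
      simpa [mul_comm, neg_mul] using ((hasDerivAt_id t).const_mul (-z))
    have h4 := ((h1.exp).div_const z).neg
    have h5 : (fun s => -Real.exp (-(z * s)) / z) = -fun x => Real.exp (-(z * x)) / z := by
      funext s; simp only [Pi.neg_apply, neg_div]
    rw [h5]
    refine h4.congr_deriv ?_
    · rw [mul_neg, neg_div, neg_neg, mul_div_assoc, div_self (ne_of_gt hz), mul_one]
  rw [intervalIntegral.integral_eq_sub_of_hasDerivAt key
    (Continuous.intervalIntegrable (by continuity) _ _)]
  field_simp
  ring


/-- Laplace transform of the rescaled renewal step function: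
`∫_0^∞ e^{-zt} ζ(t) dt = (1-a)·(τ(1-e^{-z/τ})/z)·G(e^{-z/τ})/(1 - a G(e^{-z/τ}))`. -/
theorem stepKernel_laplace (φ : ℕ → ℝ) (hφ0 : φ 0 = 0) (hφnn : ∀ n, 0 ≤ φ n)
    (hsum : HasSum φ 1) (a : ℝ) (ha : a ∈ Set.Ioo (0 : ℝ) 1)
    (τ : ℕ) (hτ : 1 ≤ τ) (z : ℝ) (hz : 0 < z) :
    IntegrableOn (fun t => Real.exp (-(z * t)) * stepKernel φ a τ t) (Set.Ioi 0) ∧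
    ∫ t in Set.Ioi (0 : ℝ), Real.exp (-(z * t)) * stepKernel φ a τ t =
      (1 - a) * ((τ : ℝ) * (1 - Real.exp (-(z / (τ : ℝ)))) / z) *
        ((∑' n : ℕ, φ n * Real.exp (-(z / (τ : ℝ))) ^ n) /
          (1 - a * ∑' n : ℕ, φ n * Real.exp (-(z / (τ : ℝ))) ^ n)) := by
  obtain ⟨ha0, ha1⟩ := ha
  have hτ0 : (0 : ℝ) < τ := by exact_mod_cast hτ
  set x := Real.exp (-(z / (τ : ℝ))) with hxdef
  have hx0 : 0 < x := Real.exp_pos _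
  have hx1 : x < 1 := by
    rw [hxdef, Real.exp_lt_one_iff]
    have : 0 < z / (τ : ℝ) := div_pos hz hτ0
    linarith
  set G := ∑' n : ℕ, φ n * x ^ n with hGdef
  have hgnn : ∀ n, 0 ≤ φ n * x ^ n := fun n => mul_nonneg (hφnn n) (pow_nonneg hx0.le n)
  have hgle : ∀ n, φ n * x ^ n ≤ φ n := fun n =>
    mul_le_of_le_one_right (hφnn n) (pow_le_one₀ hx0.le hx1.le)
  have hgsum : Summable (fun n => φ n * x ^ n) :=
    Summable.of_nonneg_of_le hgnn hgle hsum.summable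
  have hG0 : 0 ≤ G := tsum_nonneg hgnn
  have hG1 : G ≤ 1 := by
    rw [hGdef, ← hsum.tsum_eq]
    exact Summable.tsum_le_tsum hgle hgsum hsum.summable
  have haG1 : a * G < 1 := lt_of_le_of_lt (by nlinarith) ha1
  have haG0 : 0 ≤ a * G := mul_nonneg ha0.le hG0
  -- Cauchy product
  have hck : ∀ k, HasSum (fun n => convPow φ k n * x ^ n) (G ^ (k + 1)) := by
    intro k
    have h := convPow_hasSum (fun n => φ n * x ^ n) (by simp [hφ0]) hgnn G hgsum.hasSum k
    have he : convPow (fun n => φ n * x ^ n) k = fun n => convPow φ k n * x ^ n :=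
      funext (convPow_scale φ x k)
    rwa [he] at h
  -- double sum
  set F : ℕ × ℕ → ℝ := fun p => a ^ (p.1 + 1) * (convPow φ p.1 p.2 * x ^ p.2) with hFdef
  have hFnn : 0 ≤ F := fun p =>
    mul_nonneg (pow_nonneg ha0.le _)
      (mul_nonneg (convPow_nonneg φ hφnn _ _) (pow_nonneg hx0.le _))
  have hFk : ∀ k, HasSum (fun n => F (k, n)) ((a * G) ^ (k + 1)) := fun k => by
    simpa [mul_pow] using (hck k).mul_left (a ^ (k + 1))
  have hgeo : HasSum (fun k : ℕ => (a * G) ^ (k + 1)) (a * G / (1 - a * G)) := by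
    have h := (hasSum_geometric_of_lt_one haG0 haG1).mul_left (a * G)
    simpa [pow_succ, mul_comm, div_eq_mul_inv] using h
  have hFsum : Summable F := by
    refine (summable_prod_of_nonneg hFnn).mpr ⟨fun k => (hFk k).summable, ?_⟩
    have : (fun k => ∑' n, F (k, n)) = fun k => (a * G) ^ (k + 1) := by
      funext k; exact (hFk k).tsum_eq
    rw [this]
    exact hgeo.summable
  have hFt : ∑' p, F p = a * G / (1 - a * G) := by
    rw [Summable.tsum_prod' hFsum (fun k => (hFk k).summable)]
    calc (∑' k, ∑' n, F (k, n)) = ∑' k : ℕ, (a * G) ^ (k + 1) := by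
          exact tsum_congr fun k => (hFk k).tsum_eq
      _ = a * G / (1 - a * G) := hgeo.tsum_eq
  have hFswap : Summable (F ∘ Prod.swap) :=
    hFsum.comp_injective Prod.swap_injective
  have hψn : ∀ n, (∑' k, F (k, n)) = renewalKernel φ a n * x ^ n := by
    intro n
    rw [renewalKernel, ← tsum_mul_right]
    exact tsum_congr fun k => by ring
  have hFswap2 := (summable_prod_of_nonneg (f := F ∘ Prod.swap)
      (fun p => hFnn p.swap)).mp hFswap
  have hψsummable : Summable (fun n => renewalKernel φ a n * x ^ n) := by
    have h := hFswap2.2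
    simp only [Function.comp_def, Prod.swap] at h
    have he : (fun n => ∑' k, F (k, n)) = fun n => renewalKernel φ a n * x ^ n := funext hψn
    rwa [he] at h
  have hψt : ∑' n, renewalKernel φ a n * x ^ n = a * G / (1 - a * G) := by
    have h1 : ∑' p, (F ∘ Prod.swap) p = ∑' p, F p := by
      have := (Equiv.prodComm ℕ ℕ).tsum_eq F
      simpa [Function.comp_def] using this
    rw [Summable.tsum_prod' hFswap hFswap2.1] at h1
    simp only [Function.comp_def, Prod.swap] at h1
    rw [hFt] at h1
    calc ∑' n, renewalKernel φ a n * x ^ n = ∑' n, ∑' k, F (k, n) :=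
          (tsum_congr fun n => (hψn n).symm)
      _ = a * G / (1 - a * G) := h1
  have hψnn : ∀ n, 0 ≤ renewalKernel φ a n := fun n =>
    tsum_nonneg fun k => mul_nonneg (pow_nonneg ha0.le _) (convPow_nonneg φ hφnn k n)
  -- the integral part
  set C := (1 - a) / a * (τ : ℝ) with hCdef
  have hC0 : 0 ≤ C := mul_nonneg (div_nonneg (by linarith) ha0.le) hτ0.le
  set f : ℝ → ℝ := fun t => Real.exp (-(z * t)) * stepKernel φ a τ t with hfdef
  set I : ℕ → Set ℝ := fun n => Set.Ico ((n : ℝ) / τ) (((n : ℝ) + 1) / τ) with hIdef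
  have hImeas : ∀ n, MeasurableSet (I n) := fun n => measurableSet_Ico
  have hle : ∀ n : ℕ, (n : ℝ) / τ ≤ ((n : ℝ) + 1) / τ := fun n =>
    (div_le_div_iff_of_pos_right hτ0).mpr (by linarith)
  have hIdisj : Pairwise (Function.onFun Disjoint I) := by
    intro m n hmn
    simp only [Function.onFun, hIdef]
    rw [Set.Ico_disjoint_Ico]
    rcases lt_or_gt_of_ne hmn with h | h
    · refine le_trans (min_le_left _ _) (le_trans ?_ (le_max_right _ _))
      exact (div_le_div_iff_of_pos_right hτ0).mpr (by exact_mod_cast h)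
    · refine le_trans (min_le_right _ _) (le_trans ?_ (le_max_left _ _))
      exact (div_le_div_iff_of_pos_right hτ0).mpr (by exact_mod_cast h)
  have hIunion : (⋃ n, I n) = Set.Ici (0 : ℝ) := by
    ext t
    simp only [Set.mem_iUnion, hIdef, Set.mem_Ico, Set.mem_Ici]
    constructor
    · rintro ⟨n, h1, h2⟩
      exact le_trans (by positivity) h1
    · intro ht
      refine ⟨⌊t * τ⌋₊, ?_, ?_⟩
      · rw [div_le_iff₀ hτ0]
        exact Nat.floor_le (by positivity)
      · rw [lt_div_iff₀ hτ0]
        exact Nat.lt_floor_add_one _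
  have hfloor : ∀ n : ℕ, ∀ t ∈ I n, ⌊t * (τ : ℝ)⌋₊ = n := by
    intro n t ht
    obtain ⟨h1, h2⟩ := ht
    have h1' : (n : ℝ) ≤ t * τ := by rwa [div_le_iff₀ hτ0] at h1
    have h2' : t * τ < (n : ℝ) + 1 := by rwa [lt_div_iff₀ hτ0] at h2
    exact (Nat.floor_eq_iff (le_trans n.cast_nonneg h1')).mpr ⟨h1', h2'⟩
  have hstep : ∀ n : ℕ, Set.EqOn f
      (fun t => Real.exp (-(z * t)) * (C * renewalKernel φ a n)) (I n) := by
    intro n t ht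
    simp only [hfdef, stepKernel, hfloor n t ht, hCdef]
  have hxpow : ∀ n : ℕ, Real.exp (-(z * ((n : ℝ) / τ))) = x ^ n := by
    intro n
    rw [hxdef, ← Real.exp_nat_mul]
    congr 1
    ring
  have hexpint : ∀ n : ℕ, (∫ t in I n, Real.exp (-(z * t))) = (x ^ n - x ^ (n + 1)) / z := by
    intro n
    rw [hIdef]
    rw [integral_exp_Ico z _ _ hz (hle n)]
    have hB := hxpow (n + 1)
    push_cast at hB
    rw [hxpow n, hB]
  have hval : ∀ n : ℕ, (∫ t in I n, f t)
      = C * renewalKernel φ a n * ((x ^ n - x ^ (n + 1)) / z) := by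
    intro n
    rw [setIntegral_congr_fun (hImeas n) (hstep n), integral_mul_const, hexpint n]
    ring
  have hInt : ∀ n : ℕ, IntegrableOn f (I n) := by
    intro n
    refine IntegrableOn.congr_fun ?_ (fun t ht => (hstep n ht).symm) (hImeas n)
    have haux : IntegrableOn (fun t => Real.exp (-(z * t)) * (C * renewalKernel φ a n))
        (Set.Icc ((n : ℝ) / τ) (((n : ℝ) + 1) / τ)) :=
      Continuous.integrableOn_Icc (by fun_prop)
    exact haux.mono_set Set.Ico_subset_Icc_self
  have hnormval : ∀ n : ℕ, (∫ t in I n, ‖f t‖)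
      = C * renewalKernel φ a n * ((x ^ n - x ^ (n + 1)) / z) := by
    intro n
    have h1 : Set.EqOn (fun t => ‖f t‖) f (I n) := by
      intro t ht
      have hft : f t = Real.exp (-(z * t)) * (C * renewalKernel φ a n) := hstep n ht
      have hnn : 0 ≤ f t := by
        rw [hft]
        have := hψnn n
        positivity
      simp only [Real.norm_eq_abs, abs_of_nonneg hnn]
    rw [setIntegral_congr_fun (hImeas n) h1, hval n]
  have hfactor : (fun n : ℕ => C * renewalKernel φ a n * ((x ^ n - x ^ (n + 1)) / z))
      = fun n => (C * (1 - x) / z) * (renewalKernel φ a n * x ^ n) := by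
    funext n
    rw [pow_succ]
    ring
  have hsummable_norm : Summable (fun n => ∫ t in I n, ‖f t‖) := by
    have hs2 : Summable (fun n : ℕ => (C * (1 - x) / z) * (renewalKernel φ a n * x ^ n)) :=
      hψsummable.mul_left _
    rw [show (fun n => ∫ t in I n, ‖f t‖)
        = fun n : ℕ => C * renewalKernel φ a n * ((x ^ n - x ^ (n + 1)) / z) from funext hnormval,
      hfactor]
    exact hs2
  have hIntU : IntegrableOn f (⋃ n, I n) :=
    integrableOn_iUnion_of_summable_integral_norm hInt hsummable_norm
  have hIci : IntegrableOn f (Set.Ici 0) := hIunion ▸ hIntU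
  have hIoi : IntegrableOn f (Set.Ioi 0) := hIci.mono_set Set.Ioi_subset_Ici_self
  refine ⟨hIoi, ?_⟩
  have hIoiIci : (∫ t in Set.Ioi (0 : ℝ), f t) = ∫ t in Set.Ici (0 : ℝ), f t :=
    (MeasureTheory.integral_Ici_eq_integral_Ioi).symm
  calc (∫ t in Set.Ioi (0 : ℝ), f t) = ∫ t in (⋃ n, I n), f t := by rw [hIoiIci, hIunion]
    _ = ∑' n, ∫ t in I n, f t := integral_iUnion hImeas hIdisj hIntU
    _ = ∑' n : ℕ, (C * (1 - x) / z) * (renewalKernel φ a n * x ^ n) := by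
        rw [show (fun n => ∫ t in I n, f t)
          = fun n : ℕ => C * renewalKernel φ a n * ((x ^ n - x ^ (n + 1)) / z) from funext hval,
          hfactor]
    _ = (C * (1 - x) / z) * (a * G / (1 - a * G)) := by rw [tsum_mul_left, hψt]
    _ = (1 - a) * ((τ : ℝ) * (1 - x) / z) * (G / (1 - a * G)) := by
        rw [hCdef]
        have h1 : (1 : ℝ) - a * G ≠ 0 := ne_of_gt (by linarith)
        field_simp
end

section
/- Fix α ∈ (0,1), γ > 0 and z > 0. Then lim_{τ→∞} ∫_0^∞ e^{−zt} ζ^τ(t) dt = γ/(γ + z^α), where the limit is taken along positive integers τ large enough that γτ^{−α} < 1. (Pointwise convergence of the Laplace transforms of the rescaled renewal kernels to that of the Mittag-Leffler density; this is the analytic core of Lemma 2.1.) -/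
open MeasureTheory Filter Set Topology

/-- `ζ^τ`, the rescaled renewal kernel of the base kernel with `a_τ = 1 - γ τ^{-α}`. -/
noncomputable def zetaTau (α γ : ℝ) (τ : ℕ) (t : ℝ) : ℝ :=
  stepKernel (baseKernel α) (1 - γ * (τ : ℝ) ^ (-α)) τ t

namespace ZetaAux


variable {α : ℝ}

lemma Gamma_pos (hα : α ∈ Set.Ioo (0:ℝ) 1) : 0 < Real.Gamma (1 - α) :=
  Real.Gamma_pos_of_pos (by linarith [hα.2])

lemma one_le_Gamma (hα : α ∈ Set.Ioo (0:ℝ) 1) : 1 ≤ Real.Gamma (1 - α) := by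
  obtain ⟨h0, h1⟩ := hα
  set x := 1 - α with hxdef
  have hx0 : 0 < x := by simp [hxdef]; linarith
  have hx1 : x < 1 := by simp [hxdef]; linarith
  have hconv := Real.convexOn_log_Gamma
  have h2x : Real.log (Real.Gamma (2 - x)) ≤ 0 := by
    have := hconv.2 (mem_Ioi.mpr one_pos) (mem_Ioi.mpr two_pos) hx0.le
      (by linarith : (0:ℝ) ≤ 1 - x) (by ring)
    simp only [smul_eq_mul, Function.comp_apply] at this
    rw [show x * 1 + (1 - x) * 2 = 2 - x by ring] at this
    simpa [Real.Gamma_one, Real.Gamma_two] using this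
  have h1x : (0:ℝ) ≤ Real.log (Real.Gamma x) + Real.log (Real.Gamma (2 - x)) := by
    have := hconv.2 (mem_Ioi.mpr hx0) (mem_Ioi.mpr (by linarith : (0:ℝ) < 2 - x))
      (by norm_num : (0:ℝ) ≤ 1/2) (by norm_num : (0:ℝ) ≤ 1/2) (by norm_num)
    simp only [smul_eq_mul, Function.comp_apply] at this
    rw [show (1:ℝ)/2 * x + 1/2 * (2 - x) = 1 by ring] at this
    rw [Real.Gamma_one, Real.log_one] at this
    linarith
  have hlog : 0 ≤ Real.log (Real.Gamma x) := by linarith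
  calc (1:ℝ) = Real.exp 0 := Real.exp_zero.symm
    _ ≤ Real.exp (Real.log (Real.Gamma x)) := Real.exp_le_exp.mpr hlog
    _ = Real.Gamma x := Real.exp_log (Real.Gamma_pos_of_pos hx0)

/-- the telescoping tail sequence -/
noncomputable def dAux (α : ℝ) (n : ℕ) : ℝ :=
  if n = 0 then 1 else (n:ℝ) ^ (-α) / Real.Gamma (1 - α)

lemma dAux_zero : dAux α 0 = 1 := rfl

lemma baseKernel_zero : baseKernel α 0 = 0 := rfl

lemma baseKernel_succ (n : ℕ) : baseKernel α (n + 1) = dAux α n - dAux α (n + 1) := by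
  rcases Nat.eq_zero_or_pos n with rfl | hn
  · simp [baseKernel, dAux]
  · have hn1 : n + 1 ≠ 1 := by omega
    have hn0 : n ≠ 0 := by omega
    simp only [baseKernel, dAux, Nat.succ_ne_zero, hn1, hn0, if_false]
    push_cast
    ring

lemma dAux_nonneg (hα : α ∈ Set.Ioo (0:ℝ) 1) (n : ℕ) : 0 ≤ dAux α n := by
  unfold dAux
  split
  · norm_num
  · exact div_nonneg (Real.rpow_nonneg (Nat.cast_nonneg _) _) (Gamma_pos hα).le

lemma dAux_le_one (hα : α ∈ Set.Ioo (0:ℝ) 1) (n : ℕ) : dAux α n ≤ 1 := by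
  unfold dAux
  split
  · exact le_refl 1
  · rename_i hn
    have h1 : (n:ℝ) ^ (-α) ≤ 1 := by
      have : (1:ℝ) ≤ (n:ℝ) := by exact_mod_cast Nat.one_le_iff_ne_zero.mpr hn
      calc (n:ℝ) ^ (-α) ≤ (n:ℝ) ^ (0:ℝ) :=
            Real.rpow_le_rpow_of_exponent_le this (by linarith [hα.1])
        _ = 1 := Real.rpow_zero _
    have hG := one_le_Gamma hα
    have hGpos := Gamma_pos hα
    rw [div_le_one hGpos]
    linarith

lemma dAux_antitone (hα : α ∈ Set.Ioo (0:ℝ) 1) (n : ℕ) : dAux α (n + 1) ≤ dAux α n := by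
  rcases Nat.eq_zero_or_pos n with rfl | hn
  · simpa [dAux] using dAux_le_one hα 1
  · have hn0 : n ≠ 0 := by omega
    simp only [dAux, Nat.succ_ne_zero, hn0, if_false]
    have hGpos := Gamma_pos hα
    have hb : ((n:ℝ)+1) ^ (-α) ≤ (n:ℝ) ^ (-α) :=
      Real.rpow_le_rpow_of_nonpos (by exact_mod_cast hn) (by linarith) (by linarith [hα.1])
    have : ((n+1:ℕ):ℝ) ^ (-α) ≤ (n:ℝ) ^ (-α) := by push_cast; exact hb
    exact div_le_div_of_nonneg_right this hGpos.le |>.trans (le_refl _)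

lemma baseKernel_nonneg (hα : α ∈ Set.Ioo (0:ℝ) 1) (n : ℕ) : 0 ≤ baseKernel α n := by
  cases n with
  | zero => simp [baseKernel_zero]
  | succ m => rw [baseKernel_succ]; linarith [dAux_antitone hα m]


variable {α x : ℝ}

lemma sum_range_baseKernel (hα : α ∈ Set.Ioo (0:ℝ) 1) (N : ℕ) :
    ∑ i ∈ Finset.range (N + 1), baseKernel α i = 1 - dAux α N := by
  rw [Finset.sum_range_succ']
  have : ∀ i ∈ Finset.range N, baseKernel α (i + 1) = dAux α i - dAux α (i + 1) :=
    fun i _ => baseKernel_succ i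
  rw [Finset.sum_congr rfl this, Finset.sum_range_sub' (dAux α), baseKernel_zero, dAux_zero]
  ring

lemma dAux_tendsto (hα : α ∈ Set.Ioo (0:ℝ) 1) : Tendsto (dAux α) atTop (𝓝 0) := by
  have h1 : Tendsto (fun n : ℕ => ((n:ℝ)) ^ (-α) / Real.Gamma (1 - α)) atTop (𝓝 0) := by
    have := (tendsto_rpow_neg_atTop hα.1).comp tendsto_natCast_atTop_atTop (α := ℕ)
    simpa using this.div_const (Real.Gamma (1 - α))
  apply h1.congr'
  filter_upwards [eventually_ge_atTop 1] with n hn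
  have : n ≠ 0 := by omega
  simp [dAux, this]

lemma summable_baseKernel (hα : α ∈ Set.Ioo (0:ℝ) 1) : Summable (baseKernel α) := by
  apply summable_of_sum_range_le (c := 1) (baseKernel_nonneg hα)
  intro n
  cases n with
  | zero => simp
  | succ N =>
    rw [sum_range_baseKernel hα N]
    linarith [dAux_nonneg hα N]

lemma hasSum_baseKernel (hα : α ∈ Set.Ioo (0:ℝ) 1) : HasSum (baseKernel α) 1 := by
  have hs := summable_baseKernel hα
  have h1 : Tendsto (fun N => ∑ i ∈ Finset.range (N + 1), baseKernel α i) atTop (𝓝 1) := by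
    have : Tendsto (fun N => 1 - dAux α N) atTop (𝓝 (1 - 0)) :=
      tendsto_const_nhds.sub (dAux_tendsto hα)
    simpa using this.congr (fun N => (sum_range_baseKernel hα N).symm)
  have h2 := (tendsto_add_atTop_iff_nat (f := fun N => ∑ i ∈ Finset.range N, baseKernel α i) 1).mp h1
  have := hs.hasSum.tendsto_sum_nat
  have : (∑' n, baseKernel α n) = 1 := tendsto_nhds_unique this h2
  exact this ▸ hs.hasSum

lemma tsum_baseKernel (hα : α ∈ Set.Ioo (0:ℝ) 1) : ∑' n, baseKernel α n = 1 :=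
  (hasSum_baseKernel hα).tsum_eq

noncomputable def phiGF (α x : ℝ) : ℝ := ∑' n, baseKernel α n * x ^ n

lemma summable_phi_pow (hα : α ∈ Set.Ioo (0:ℝ) 1) (hx : 0 ≤ x) (hx1 : x ≤ 1) :
    Summable (fun n => baseKernel α n * x ^ n) := by
  apply Summable.of_nonneg_of_le
    (fun n => mul_nonneg (baseKernel_nonneg hα n) (pow_nonneg hx n))
    (fun n => ?_) (summable_baseKernel hα)
  calc baseKernel α n * x ^ n ≤ baseKernel α n * 1 :=
      mul_le_mul_of_nonneg_left (pow_le_one₀ hx hx1) (baseKernel_nonneg hα n)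
    _ = baseKernel α n := mul_one _

lemma phiGF_nonneg (hα : α ∈ Set.Ioo (0:ℝ) 1) (hx : 0 ≤ x) : 0 ≤ phiGF α x :=
  tsum_nonneg fun n => mul_nonneg (baseKernel_nonneg hα n) (pow_nonneg hx n)

lemma phiGF_le_one (hα : α ∈ Set.Ioo (0:ℝ) 1) (hx : 0 ≤ x) (hx1 : x ≤ 1) : phiGF α x ≤ 1 := by
  have := Summable.tsum_le_tsum (f := fun n => baseKernel α n * x ^ n) (g := baseKernel α)
    (fun n => by
      calc baseKernel α n * x ^ n ≤ baseKernel α n * 1 :=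
          mul_le_mul_of_nonneg_left (pow_le_one₀ hx hx1) (baseKernel_nonneg hα n)
        _ = baseKernel α n := mul_one _)
    (summable_phi_pow hα hx hx1) (summable_baseKernel hα)
  rwa [tsum_baseKernel hα] at this

lemma phiGF_one (hα : α ∈ Set.Ioo (0:ℝ) 1) : phiGF α 1 = 1 := by
  unfold phiGF
  simp only [one_pow, mul_one]
  exact tsum_baseKernel hα

lemma phiGF_le_x (hα : α ∈ Set.Ioo (0:ℝ) 1) (hx : 0 ≤ x) (hx1 : x ≤ 1) : phiGF α x ≤ x := by
  have hle : ∀ n, baseKernel α n * x ^ n ≤ baseKernel α n * x := by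
    intro n
    cases n with
    | zero => simp [baseKernel_zero]
    | succ m =>
      apply mul_le_mul_of_nonneg_left ?_ (baseKernel_nonneg hα _)
      calc x ^ (m + 1) = x ^ m * x := pow_succ x m
        _ ≤ 1 * x := mul_le_mul_of_nonneg_right (pow_le_one₀ hx hx1) hx
        _ = x := one_mul x
  have hs2 : Summable (fun n => baseKernel α n * x) := (summable_baseKernel hα).mul_right x
  have := Summable.tsum_le_tsum hle (summable_phi_pow hα hx hx1) hs2
  rwa [tsum_mul_right, tsum_baseKernel hα, one_mul] at this

lemma baseKernel_two_pos (hα : α ∈ Set.Ioo (0:ℝ) 1) : 0 < baseKernel α 2 := by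
  have h2 : ((2:ℕ):ℝ) ^ (-α) < 1 := by
    rw [show ((2:ℕ):ℝ) = (2:ℝ) by norm_num]
    exact Real.rpow_lt_one_of_one_lt_of_neg one_lt_two (by linarith [hα.1])
  have heq : baseKernel α 2 = (1 / Real.Gamma (1 - α)) * (1 - ((2:ℕ):ℝ) ^ (-α)) := by
    unfold baseKernel
    norm_num
  rw [heq]
  have hG := Gamma_pos hα
  exact mul_pos (by positivity) (by linarith)

lemma phiGF_pos (hα : α ∈ Set.Ioo (0:ℝ) 1) (hx : 0 < x) (hx1 : x ≤ 1) : 0 < phiGF α x := by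
  have h2 : 0 < baseKernel α 2 * x ^ 2 := mul_pos (baseKernel_two_pos hα) (pow_pos hx 2)
  calc (0:ℝ) < baseKernel α 2 * x ^ 2 := h2
    _ ≤ phiGF α x := Summable.le_tsum (summable_phi_pow hα hx.le hx1) 2
        (fun n _ => mul_nonneg (baseKernel_nonneg hα n) (pow_nonneg hx.le n))

lemma summable_d_pow (hα : α ∈ Set.Ioo (0:ℝ) 1) (hx : 0 ≤ x) (hx1 : x < 1) :
    Summable (fun n => dAux α n * x ^ n) := by
  apply Summable.of_nonneg_of_le
    (fun n => mul_nonneg (dAux_nonneg hα n) (pow_nonneg hx n)) (fun n => ?_)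
    (summable_geometric_of_lt_one hx hx1)
  calc dAux α n * x ^ n ≤ 1 * x ^ n :=
      mul_le_mul_of_nonneg_right (dAux_le_one hα n) (pow_nonneg hx n)
    _ = x ^ n := one_mul _

lemma one_sub_phiGF (hα : α ∈ Set.Ioo (0:ℝ) 1) (hx : 0 ≤ x) (hx1 : x < 1) :
    1 - phiGF α x = (1 - x) * ∑' n, dAux α n * x ^ n := by
  set D := ∑' n, dAux α n * x ^ n with hD
  have hsd := summable_d_pow hα hx hx1
  have hsd1 : Summable (fun n => dAux α (n + 1) * x ^ (n + 1)) :=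
    (summable_nat_add_iff 1).mpr hsd
  have hsd0 : Summable (fun n => dAux α n * x ^ (n + 1)) := by
    have := hsd.mul_right x
    apply this.congr
    intro n; rw [pow_succ]; ring
  have h1 : ∑' n, dAux α (n + 1) * x ^ (n + 1) = D - 1 := by
    have := Summable.tsum_eq_zero_add hsd
    rw [dAux_zero, pow_zero, mul_one] at this
    rw [hD, this]; ring
  have h2 : ∑' n, dAux α n * x ^ (n + 1) = x * D := by
    rw [hD, ← tsum_mul_left]
    congr 1; funext n; rw [pow_succ]; ring
  have hφ : phiGF α x = ∑' n, baseKernel α (n + 1) * x ^ (n + 1) := by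
    have := Summable.tsum_eq_zero_add (summable_phi_pow hα hx hx1.le)
    rw [baseKernel_zero, zero_mul, zero_add] at this
    exact this
  have hφ2 : phiGF α x = x * D - (D - 1) := by
    rw [hφ, ← h1, ← h2, ← Summable.tsum_sub hsd0 hsd1]
    congr 1; funext n; rw [baseKernel_succ]; ring
  rw [hφ2]; ring


variable {α x a : ℝ}

lemma convPow_zero_left {f : ℕ → ℝ} (hf0 : f 0 = 0) (k : ℕ) : convPow f k 0 = 0 := by
  cases k with
  | zero => exact hf0
  | succ k => simp [convPow]

lemma convPow_nonneg {f : ℕ → ℝ} (hf : ∀ n, 0 ≤ f n) (k n : ℕ) : 0 ≤ convPow f k n := by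
  induction k generalizing n with
  | zero => exact hf n
  | succ k ih => exact Finset.sum_nonneg fun m _ => mul_nonneg (ih m) (hf _)

lemma conv_range_sum_eq {f : ℕ → ℝ} (hf0 : f 0 = 0) (k n : ℕ) :
    ∑ m ∈ Finset.range (n + 1), (convPow f k m * x ^ m) * (f (n - m) * x ^ (n - m))
      = convPow f (k + 1) n * x ^ n := by
  rcases Nat.eq_zero_or_pos n with rfl | hn
  · simp [hf0, convPow]
  · rw [Finset.sum_range_succ]
    have hlast : (convPow f k n * x ^ n) * (f (n - n) * x ^ (n - n)) = 0 := by
      simp [hf0]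
    rw [hlast, add_zero, Finset.range_eq_Ico, Finset.sum_eq_sum_Ico_succ_bot hn]
    have h0 : (convPow f k 0 * x ^ 0) * (f (n - 0) * x ^ (n - 0)) = 0 := by
      simp [convPow_zero_left hf0]
    rw [h0, zero_add]
    show _ = (∑ m ∈ Finset.Ico 1 n, convPow f k m * f (n - m)) * x ^ n
    rw [Finset.sum_mul]
    apply Finset.sum_congr rfl
    intro m hm
    obtain ⟨hm1, hm2⟩ := Finset.mem_Ico.mp hm
    have hmn : m ≤ n := hm2.le
    have hxx : x ^ m * x ^ (n - m) = x ^ n := by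
      rw [← pow_add, Nat.add_sub_cancel' hmn]
    calc (convPow f k m * x ^ m) * (f (n - m) * x ^ (n - m))
        = convPow f k m * f (n - m) * (x ^ m * x ^ (n - m)) := by ring
      _ = convPow f k m * f (n - m) * x ^ n := by rw [hxx]

lemma baseKernel_zero' : baseKernel α 0 = 0 := rfl

lemma hasSum_convPow (hα : α ∈ Set.Ioo (0:ℝ) 1) (hx : 0 ≤ x) (hx1 : x ≤ 1) (k : ℕ) :
    HasSum (fun n => convPow (baseKernel α) k n * x ^ n) ((phiGF α x) ^ (k + 1)) := by
  induction k with
  | zero =>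
    have := (summable_phi_pow hα hx hx1).hasSum
    simpa [convPow, phiGF, pow_one] using this
  | succ k ih =>
    have hφs := summable_phi_pow hα hx hx1
    have hks := ih.summable
    have hnk : Summable fun n => ‖convPow (baseKernel α) k n * x ^ n‖ :=
      summable_norm_iff.mpr hks
    have hnφ : Summable fun n => ‖baseKernel α n * x ^ n‖ := summable_norm_iff.mpr hφs
    have hCP := hasSum_sum_range_mul_of_summable_norm hnk hnφ
    rw [ih.tsum_eq] at hCP
    have hφeq : (∑' n, baseKernel α n * x ^ n) = phiGF α x := rfl
    rw [hφeq, (pow_succ (phiGF α x) (k + 1)).symm] at hCP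
    have hfun : (fun n => ∑ m ∈ Finset.range (n + 1),
        (convPow (baseKernel α) k m * x ^ m) * (baseKernel α (n - m) * x ^ (n - m)))
        = fun n => convPow (baseKernel α) (k + 1) n * x ^ n :=
      funext (conv_range_sum_eq baseKernel_zero' k)
    rwa [hfun] at hCP

lemma hasSum_convPow_one (hα : α ∈ Set.Ioo (0:ℝ) 1) (k : ℕ) :
    HasSum (convPow (baseKernel α) k) 1 := by
  have := hasSum_convPow hα (zero_le_one) (le_refl 1) k
  rw [phiGF_one hα, one_pow] at this
  simpa using this

lemma convPow_le_one (hα : α ∈ Set.Ioo (0:ℝ) 1) (k n : ℕ) :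
    convPow (baseKernel α) k n ≤ 1 := by
  have h := hasSum_convPow_one hα k
  calc convPow (baseKernel α) k n
      ≤ ∑' m, convPow (baseKernel α) k m :=
        Summable.le_tsum h.summable n (fun m _ => convPow_nonneg (baseKernel_nonneg hα) k m)
    _ = 1 := h.tsum_eq

lemma summable_renewal (hα : α ∈ Set.Ioo (0:ℝ) 1) (ha0 : 0 ≤ a) (ha1 : a < 1) (n : ℕ) :
    Summable (fun k => a ^ (k + 1) * convPow (baseKernel α) k n) := by
  apply Summable.of_nonneg_of_le
    (fun k => mul_nonneg (pow_nonneg ha0 _) (convPow_nonneg (baseKernel_nonneg hα) k n))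
    (fun k => ?_)
    (((summable_geometric_of_lt_one ha0 ha1).mul_left a).congr
      (fun k => (pow_succ' a k).symm))
  calc a ^ (k + 1) * convPow (baseKernel α) k n ≤ a ^ (k + 1) * 1 :=
      mul_le_mul_of_nonneg_left (convPow_le_one hα k n) (pow_nonneg ha0 _)
    _ = a ^ (k + 1) := mul_one _

lemma renewalKernel_nonneg (hα : α ∈ Set.Ioo (0:ℝ) 1) (ha0 : 0 ≤ a) (n : ℕ) :
    0 ≤ renewalKernel (baseKernel α) a n :=
  tsum_nonneg fun k => mul_nonneg (pow_nonneg ha0 _)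
    (convPow_nonneg (baseKernel_nonneg hα) k n)

lemma renewalKernel_le (hα : α ∈ Set.Ioo (0:ℝ) 1) (ha0 : 0 ≤ a) (ha1 : a < 1) (n : ℕ) :
    renewalKernel (baseKernel α) a n ≤ a / (1 - a) := by
  have h := (hasSum_geometric_of_lt_one ha0 ha1).mul_left a
  have hfun : (fun k : ℕ => a * a ^ k) = fun k : ℕ => a ^ (k + 1) := funext fun k => by ring
  rw [hfun] at h
  have hb : ∀ k, a ^ (k + 1) * convPow (baseKernel α) k n ≤ a ^ (k + 1) := fun k => by
    calc a ^ (k + 1) * convPow (baseKernel α) k n ≤ a ^ (k + 1) * 1 :=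
        mul_le_mul_of_nonneg_left (convPow_le_one hα k n) (pow_nonneg ha0 _)
      _ = a ^ (k + 1) := mul_one _
  have hle := Summable.tsum_le_tsum hb (summable_renewal hα ha0 ha1 n) h.summable
  rw [h.tsum_eq] at hle
  simpa [renewalKernel, div_eq_mul_inv] using hle

lemma renewal_hasSum_GF (hα : α ∈ Set.Ioo (0:ℝ) 1) (hx : 0 ≤ x) (hx1 : x < 1)
    (ha0 : 0 ≤ a) (ha1 : a < 1) :
    HasSum (fun n => renewalKernel (baseKernel α) a n * x ^ n)
      (a * phiGF α x / (1 - a * phiGF α x)) := by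
  set φ := baseKernel α with hφdef
  set y := phiGF α x with hydef
  have hy0 : 0 ≤ y := phiGF_nonneg hα hx
  have hy1 : y < 1 := lt_of_le_of_lt (phiGF_le_x hα hx hx1.le) hx1
  have hay0 : 0 ≤ a * y := mul_nonneg ha0 hy0
  have hay1 : a * y < 1 := by
    calc a * y ≤ 1 * y := mul_le_mul_of_nonneg_right ha1.le hy0
      _ = y := one_mul y
      _ < 1 := hy1
  have hk_sum : ∀ k : ℕ, HasSum (fun n => a ^ (k + 1) * convPow φ k n * x ^ n)
      ((a * y) ^ (k + 1)) := by
    intro k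
    have h := (hasSum_convPow hα hx hx1.le k).mul_left (a ^ (k + 1))
    have hfun : (fun n => a ^ (k + 1) * (convPow φ k n * x ^ n))
        = fun n => a ^ (k + 1) * convPow φ k n * x ^ n := funext fun n => by ring
    rw [hfun] at h
    rw [mul_pow]
    exact h
  have hrow : HasSum (fun k : ℕ => (a * y) ^ (k + 1)) (a * y / (1 - a * y)) := by
    have h := (hasSum_geometric_of_lt_one hay0 hay1).mul_left (a * y)
    have hfun : (fun k : ℕ => (a * y) * (a * y) ^ k) = fun k : ℕ => (a * y) ^ (k + 1) :=
      funext fun k => by ring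
    rw [hfun] at h
    rw [div_eq_mul_inv]
    exact h
  have hu_nonneg : ∀ p : ℕ × ℕ, 0 ≤ a ^ (p.1 + 1) * convPow φ p.1 p.2 * x ^ p.2 := fun p =>
    mul_nonneg (mul_nonneg (pow_nonneg ha0 _) (convPow_nonneg (baseKernel_nonneg hα) _ _))
      (pow_nonneg hx _)
  have husum : Summable (fun p : ℕ × ℕ => a ^ (p.1 + 1) * convPow φ p.1 p.2 * x ^ p.2) := by
    rw [summable_prod_of_nonneg hu_nonneg]
    refine ⟨fun k => (hk_sum k).summable, ?_⟩
    apply hrow.summable.congr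
    intro k
    exact ((hk_sum k).tsum_eq).symm
  have hswap : (∑' n, ∑' k, a ^ (k + 1) * convPow φ k n * x ^ n)
      = ∑' k, ∑' n, a ^ (k + 1) * convPow φ k n * x ^ n :=
    Summable.tsum_comm (f := fun k n => a ^ (k + 1) * convPow φ k n * x ^ n) husum
  have hpern : ∀ n, (∑' k, a ^ (k + 1) * convPow φ k n * x ^ n)
      = renewalKernel φ a n * x ^ n := by
    intro n
    rw [renewalKernel, ← tsum_mul_right]
  have hRHS : (∑' k, ∑' n, a ^ (k + 1) * convPow φ k n * x ^ n) = a * y / (1 - a * y) := by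
    rw [← hrow.tsum_eq]
    congr 1
    funext k
    exact (hk_sum k).tsum_eq
  -- summability of the n-indexed sequence
  have husum' : Summable (fun p : ℕ × ℕ => a ^ (p.2 + 1) * convPow φ p.2 p.1 * x ^ p.1) :=
    husum.prod_symm
  have hsn : Summable (fun n => renewalKernel φ a n * x ^ n) := by
    have h2 := ((summable_prod_of_nonneg (fun p => hu_nonneg ⟨p.2, p.1⟩)).mp husum').2
    exact h2.congr fun n => hpern n
  have hval : (∑' n, renewalKernel φ a n * x ^ n) = a * y / (1 - a * y) := by
    rw [← hRHS, ← hswap]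
    exact tsum_congr fun n => (hpern n).symm
  exact hval ▸ hsn.hasSum


variable {α x a z : ℝ}

lemma integral_exp_Ico {z : ℝ} (hz : 0 < z) {b c : ℝ} (hbc : b ≤ c) :
    ∫ t in Set.Ico b c, Real.exp (-(z * t))
      = (Real.exp (-(z * b)) - Real.exp (-(z * c))) / z := by
  rw [integral_Ico_eq_integral_Ioo, ← integral_Ioc_eq_integral_Ioo,
    ← intervalIntegral.integral_of_le hbc]
  have hderiv : ∀ t ∈ Set.uIcc b c,
      HasDerivAt (fun u => Real.exp (-(z * u)) / (-z)) (Real.exp (-(z * t))) t := by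
    intro t _
    have h1 : HasDerivAt (fun u : ℝ => -(z * u)) (-z) t := by
      have h0 := hasDerivAt_mul_const (x := t) (-z)
      have e : (fun u : ℝ => -(z * u)) = fun u => u * -z := by funext u; ring
      rw [e]; exact h0
    have h2 := h1.exp
    have h3 := h2.div_const (-z)
    have : Real.exp (-(z * t)) * -z / (-z) = Real.exp (-(z * t)) := by
      field_simp
    rwa [this] at h3
  have hcont : Continuous fun t : ℝ => Real.exp (-(z * t)) := by
    exact Real.continuous_exp.comp ((continuous_const.mul continuous_id).neg)
  rw [intervalIntegral.integral_eq_sub_of_hasDerivAt hderiv (hcont.intervalIntegrable b c)]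
  rw [div_neg, div_neg]
  ring

lemma floor_piece {τ : ℕ} (hτ : 1 ≤ τ) {n : ℕ} {t : ℝ}
    (ht : t ∈ Set.Ico ((n : ℝ) / τ) (((n : ℝ) + 1) / τ)) : ⌊t * (τ : ℝ)⌋₊ = n := by
  have hτpos : (0 : ℝ) < τ := by exact_mod_cast hτ
  obtain ⟨h1, h2⟩ := ht
  have hge : (n : ℝ) ≤ t * τ := by
    rwa [div_le_iff₀ hτpos] at h1
  have hlt : t * τ < (n : ℝ) + 1 := by
    rwa [lt_div_iff₀ hτpos] at h2
  have ht0 : 0 ≤ t * τ := le_trans (by positivity) hge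
  rw [Nat.floor_eq_iff ht0]
  exact ⟨hge, hlt⟩

lemma union_Ico {τ : ℕ} (hτ : 1 ≤ τ) :
    Set.Ici (0 : ℝ) = ⋃ n : ℕ, Set.Ico ((n : ℝ) / τ) (((n : ℝ) + 1) / τ) := by
  have hτpos : (0 : ℝ) < τ := by exact_mod_cast hτ
  ext t
  simp only [Set.mem_Ici, Set.mem_iUnion, Set.mem_Ico]
  constructor
  · intro ht
    refine ⟨⌊t * τ⌋₊, ?_, ?_⟩
    · rw [div_le_iff₀ hτpos]
      exact Nat.floor_le (by positivity)
    · rw [lt_div_iff₀ hτpos]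
      exact Nat.lt_floor_add_one _
  · rintro ⟨n, h1, _⟩
    exact le_trans (by positivity) h1

lemma pairwise_disjoint_pieces {τ : ℕ} (hτ : 1 ≤ τ) :
    Pairwise (Function.onFun Disjoint
      (fun n : ℕ => Set.Ico ((n : ℝ) / τ) (((n : ℝ) + 1) / τ))) := by
  have hτpos : (0 : ℝ) < τ := by exact_mod_cast hτ
  have key : ∀ m n : ℕ, m < n → Disjoint (Set.Ico ((m : ℝ) / τ) (((m : ℝ) + 1) / τ))
      (Set.Ico ((n : ℝ) / τ) (((n : ℝ) + 1) / τ)) := by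
    intro m n hmn
    rw [Set.disjoint_left]
    rintro t ⟨_, h2⟩ ⟨h3, _⟩
    have : ((m : ℝ) + 1) / τ ≤ (n : ℝ) / τ := by
      apply div_le_div_of_nonneg_right ?_ hτpos.le |>.trans (le_refl _)
      have : (m : ℝ) + 1 ≤ n := by exact_mod_cast hmn
      exact this
    linarith
  intro m n hmn
  rcases lt_or_gt_of_ne hmn with h | h
  · exact key m n h
  · exact (key n m h).symm

lemma exp_pow_piece {τ : ℕ} (hτ : 1 ≤ τ) (n : ℕ) :
    Real.exp (-(z * ((n : ℝ) / τ))) = Real.exp (-(z / τ)) ^ n := by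
  rw [← Real.exp_nat_mul]
  congr 1
  ring

lemma integral_step (hα : α ∈ Set.Ioo (0:ℝ) 1) (hz : 0 < z) {τ : ℕ} (hτ : 1 ≤ τ)
    (ha0 : 0 < a) (ha1 : a < 1) :
    ∫ t in Set.Ioi (0:ℝ), Real.exp (-(z * t)) * stepKernel (baseKernel α) a τ t
      = ((1 - a) / a) * (τ : ℝ) *
        ((∑' n, renewalKernel (baseKernel α) a n * Real.exp (-(z / τ)) ^ n)
          * ((1 - Real.exp (-(z / τ))) / z)) := by
  have hτpos : (0 : ℝ) < τ := by exact_mod_cast hτ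
  set ψ := renewalKernel (baseKernel α) a with hψdef
  set x := Real.exp (-(z / τ)) with hxdef
  set g : ℝ → ℝ := fun t => Real.exp (-(z * t)) * ψ ⌊t * (τ : ℝ)⌋₊ with hgdef
  have hψnonneg : ∀ n, 0 ≤ ψ n := renewalKernel_nonneg hα ha0.le
  have hψle : ∀ n, ψ n ≤ a / (1 - a) := renewalKernel_le hα ha0.le ha1
  -- measurability
  have h1a : 0 < 1 - a := by linarith
  have hmeas : Measurable g := by
    have h1 : Measurable fun t : ℝ => Real.exp (-(z * t)) :=
      (Real.continuous_exp.comp ((continuous_const.mul continuous_id).neg)).measurable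
    have hfl : Measurable fun t : ℝ => ⌊t * (τ : ℝ)⌋₊ :=
      Nat.measurable_floor.comp (measurable_id.mul_const ((τ:ℝ)))
    have h2 : Measurable fun t : ℝ => ψ ⌊t * (τ : ℝ)⌋₊ := (measurable_from_nat (f := ψ)).comp hfl
    exact h1.mul h2
  -- integrability on Ici 0
  have hdom : IntegrableOn (fun t : ℝ => (a / (1 - a)) * Real.exp (-(z * t)))
      (Set.Ici (0:ℝ)) := by
    rw [integrableOn_Ici_iff_integrableOn_Ioi]
    have h0 : IntegrableOn (fun t : ℝ => Real.exp (-z * t)) (Set.Ioi (0:ℝ)) :=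
      exp_neg_integrableOn_Ioi 0 hz
    have h1 : IntegrableOn (fun t : ℝ => Real.exp (-(z * t))) (Set.Ioi (0:ℝ)) := by
      simpa [neg_mul] using h0
    exact h1.const_mul _
  have hgint : IntegrableOn g (Set.Ici (0:ℝ)) := by
    apply Integrable.mono hdom hmeas.aestronglyMeasurable.restrict
    apply ae_of_all
    intro t
    rw [Real.norm_eq_abs, Real.norm_eq_abs]
    have hpos1 : 0 ≤ Real.exp (-(z * t)) * ψ ⌊t * (τ : ℝ)⌋₊ :=
      mul_nonneg (Real.exp_pos _).le (hψnonneg _)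
    have hpos2 : (0:ℝ) ≤ a / (1 - a) * Real.exp (-(z * t)) := by positivity
    rw [abs_of_nonneg hpos1, abs_of_nonneg hpos2]
    calc Real.exp (-(z * t)) * ψ ⌊t * (τ : ℝ)⌋₊
        ≤ Real.exp (-(z * t)) * (a / (1 - a)) :=
          mul_le_mul_of_nonneg_left (hψle _) (Real.exp_pos _).le
      _ = a / (1 - a) * Real.exp (-(z * t)) := mul_comm _ _
  -- per-piece values
  have hpiece : ∀ n : ℕ, (∫ t in Set.Ico ((n:ℝ)/τ) (((n:ℝ)+1)/τ), g t)
      = (ψ n * x ^ n) * ((1 - x) / z) := by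
    intro n
    have hbc : (n:ℝ)/τ ≤ ((n:ℝ)+1)/τ := by gcongr; linarith
    have he1 : Real.exp (-(z * (((n:ℝ)+1)/τ))) = x ^ (n+1) := by
      have h := exp_pow_piece (z := z) hτ (n+1)
      push_cast at h
      rw [hxdef]
      exact h
    calc (∫ t in Set.Ico ((n:ℝ)/τ) (((n:ℝ)+1)/τ), g t)
        = ∫ t in Set.Ico ((n:ℝ)/τ) (((n:ℝ)+1)/τ), Real.exp (-(z*t)) * ψ n := by
          apply setIntegral_congr_fun measurableSet_Ico
          intro t ht
          simp only [hgdef]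
          rw [floor_piece hτ ht]
      _ = (∫ t in Set.Ico ((n:ℝ)/τ) (((n:ℝ)+1)/τ), Real.exp (-(z*t))) * ψ n :=
          integral_mul_const _ _
      _ = ((Real.exp (-(z*((n:ℝ)/τ))) - Real.exp (-(z*(((n:ℝ)+1)/τ)))) / z) * ψ n := by
          rw [integral_exp_Ico hz hbc]
      _ = ((x ^ n - x ^ (n+1)) / z) * ψ n := by
          rw [he1, exp_pow_piece hτ n, hxdef]
      _ = (ψ n * x ^ n) * ((1 - x) / z) := by rw [pow_succ]; ring
  have hsum := hasSum_integral_iUnion (μ := volume)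
    (s := fun n : ℕ => Set.Ico ((n:ℝ)/τ) (((n:ℝ)+1)/τ)) (f := g)
    (fun n => measurableSet_Ico) (pairwise_disjoint_pieces hτ)
    (by rw [← union_Ico hτ]; exact hgint)
  have hIci : (∫ t in Set.Ici (0:ℝ), g t) = ∑' n : ℕ, (ψ n * x ^ n) * ((1 - x) / z) := by
    rw [union_Ico hτ, ← hsum.tsum_eq]
    exact tsum_congr hpiece
  have hLHS : (∫ t in Set.Ioi (0:ℝ), Real.exp (-(z * t)) * stepKernel (baseKernel α) a τ t)
      = ((1 - a)/a) * (τ:ℝ) * ∫ t in Set.Ici (0:ℝ), g t := by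
    rw [← integral_Ici_eq_integral_Ioi, ← integral_const_mul]
    apply setIntegral_congr_fun measurableSet_Ici
    intro t _
    simp only [hgdef, stepKernel]
    rw [hψdef]
    ring
  rw [hLHS, hIci, tsum_mul_right]


variable {α s z : ℝ}

/-- the Dirichlet-type sum -/
noncomputable def SS (α s : ℝ) : ℝ :=
  ∑' n : ℕ, ((n : ℝ) + 1) ^ (-α) * Real.exp (-(s * ((n : ℝ) + 1)))

lemma tendsto_E : Tendsto (fun s : ℝ => (1 - Real.exp (-s)) / s) (𝓝[≠] (0:ℝ)) (𝓝 1) := by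
  have h : HasDerivAt (fun s : ℝ => 1 - Real.exp (-s)) 1 0 := by
    have h1 : HasDerivAt (fun s : ℝ => -s) (-1 : ℝ) 0 := (hasDerivAt_id (0:ℝ)).neg
    have h2 := h1.exp
    have h3 := h2.const_sub 1
    simpa using h3
  have h2 := hasDerivAt_iff_tendsto_slope.mp h
  apply h2.congr'
  filter_upwards [self_mem_nhdsWithin] with t ht
  rw [slope_def_field]
  simp [div_eq_mul_inv]

lemma tendsto_rpow_zero {q : ℝ} (hq : 0 < q) :
    Tendsto (fun u : ℝ => u ^ q) (𝓝[>] (0:ℝ)) (𝓝 0) := by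
  have h := (Real.continuousAt_rpow_const 0 q (Or.inr hq.le)).tendsto
  rw [Real.zero_rpow hq.ne'] at h
  exact h.mono_left nhdsWithin_le_nhds

lemma union_Ioc_nat : (⋃ n : ℕ, Set.Ioc ((n : ℝ)) ((n : ℝ) + 1)) = Set.Ioi (0:ℝ) := by
  ext t
  simp only [Set.mem_iUnion, Set.mem_Ioc, Set.mem_Ioi]
  constructor
  · rintro ⟨n, h1, _⟩
    exact lt_of_le_of_lt (by positivity) h1
  · intro ht
    have hc1 : 1 ≤ ⌈t⌉₊ := Nat.one_le_iff_ne_zero.mpr (by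
      intro h0
      have h := Nat.le_ceil t
      rw [h0] at h
      exact absurd (lt_of_lt_of_le ht h) (by simp))
    have hcast : ((⌈t⌉₊ - 1 : ℕ) : ℝ) = (⌈t⌉₊ : ℝ) - 1 := by
      push_cast [hc1]
      ring
    refine ⟨⌈t⌉₊ - 1, ?_, ?_⟩
    · rw [hcast]
      have := Nat.ceil_lt_add_one ht.le
      linarith
    · rw [hcast]
      have := Nat.le_ceil t
      linarith

lemma union_Ioc_nat_one : (⋃ n : ℕ, Set.Ioc ((n : ℝ) + 1) ((n : ℝ) + 2)) = Set.Ioi (1:ℝ) := by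
  ext t
  simp only [Set.mem_iUnion, Set.mem_Ioc, Set.mem_Ioi]
  constructor
  · rintro ⟨n, h1, _⟩
    have : (0:ℝ) ≤ n := Nat.cast_nonneg n
    linarith
  · intro ht
    have ht' : t - 1 ∈ Set.Ioi (0:ℝ) := by simp; linarith
    rw [← union_Ioc_nat] at ht'
    simp only [Set.mem_iUnion, Set.mem_Ioc] at ht'
    obtain ⟨n, h1, h2⟩ := ht'
    exact ⟨n, by linarith, by linarith⟩

lemma pairwise_disjoint_Ioc_nat0 : Pairwise (Function.onFun Disjoint
    (fun n : ℕ => Set.Ioc ((n : ℝ)) ((n : ℝ) + 1))) := by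
  have key : ∀ m n : ℕ, m < n → Disjoint (Set.Ioc ((m:ℝ)) ((m:ℝ) + 1))
      (Set.Ioc ((n:ℝ)) ((n:ℝ) + 1)) := by
    intro m n hmn
    rw [Set.disjoint_left]
    rintro t ⟨_, h2⟩ ⟨h3, _⟩
    have : (m : ℝ) + 1 ≤ n := by exact_mod_cast hmn
    linarith
  intro m n hmn
  rcases lt_or_gt_of_ne hmn with h | h
  · exact key m n h
  · exact (key n m h).symm

lemma pairwise_disjoint_Ioc_nat1 : Pairwise (Function.onFun Disjoint
    (fun n : ℕ => Set.Ioc ((n : ℝ) + 1) ((n : ℝ) + 2))) := by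
  have key : ∀ m n : ℕ, m < n → Disjoint (Set.Ioc ((m:ℝ) + 1) ((m:ℝ) + 2))
      (Set.Ioc ((n:ℝ) + 1) ((n:ℝ) + 2)) := by
    intro m n hmn
    rw [Set.disjoint_left]
    rintro t ⟨_, h2⟩ ⟨h3, _⟩
    have : (m : ℝ) + 1 ≤ n := by exact_mod_cast hmn
    linarith
  intro m n hmn
  rcases lt_or_gt_of_ne hmn with h | h
  · exact key m n h
  · exact (key n m h).symm

lemma f_integrableOn (hα : α ∈ Set.Ioo (0:ℝ) 1) (hs : 0 < s) :
    IntegrableOn (fun t : ℝ => t ^ (-α) * Real.exp (-(s * t))) (Set.Ioi (0:ℝ)) := by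
  have h := integrableOn_rpow_mul_exp_neg_mul_rpow (p := 1) (s := -α) (b := s)
    (by linarith [hα.2]) zero_lt_one hs
  have heq : (fun x : ℝ => x ^ (-α) * Real.exp (-s * x ^ (1:ℝ)))
      = fun t : ℝ => t ^ (-α) * Real.exp (-(s * t)) := by
    funext t
    rw [Real.rpow_one, neg_mul]
  rwa [heq] at h

lemma f_integral_value (hα : α ∈ Set.Ioo (0:ℝ) 1) (hs : 0 < s) :
    ∫ t in Set.Ioi (0:ℝ), t ^ (-α) * Real.exp (-(s * t))
      = s ^ (α - 1) * Real.Gamma (1 - α) := by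
  have h := Real.integral_rpow_mul_exp_neg_mul_Ioi (a := 1 - α) (r := s)
    (by linarith [hα.2]) hs
  have h1 : ((1:ℝ) - α) - 1 = -α := by ring
  rw [h1] at h
  rw [h, one_div, Real.inv_rpow hs.le, ← Real.rpow_neg hs.le, neg_sub]

lemma f_antitone (hα : α ∈ Set.Ioo (0:ℝ) 1) (hs : 0 < s) {t1 t2 : ℝ}
    (h1 : 0 < t1) (h12 : t1 ≤ t2) :
    t2 ^ (-α) * Real.exp (-(s * t2)) ≤ t1 ^ (-α) * Real.exp (-(s * t1)) := by
  have h2 : 0 < t2 := lt_of_lt_of_le h1 h12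
  apply mul_le_mul
  · exact Real.rpow_le_rpow_of_nonpos h1 h12 (by linarith [hα.1])
  · apply Real.exp_le_exp.mpr
    nlinarith
  · positivity
  · positivity

lemma u_le_integral (hα : α ∈ Set.Ioo (0:ℝ) 1) (hs : 0 < s) (n : ℕ) :
    ((n:ℝ) + 1) ^ (-α) * Real.exp (-(s * ((n:ℝ) + 1)))
      ≤ ∫ t in Set.Ioc ((n:ℝ)) ((n:ℝ) + 1), t ^ (-α) * Real.exp (-(s * t)) := by
  have hsub : Set.Ioc ((n:ℝ)) ((n:ℝ) + 1) ⊆ Set.Ioi (0:ℝ) := fun t ht =>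
    lt_of_le_of_lt (Nat.cast_nonneg n) ht.1
  have hvol : (volume (Set.Ioc ((n:ℝ)) ((n:ℝ) + 1))) = 1 := by
    rw [Real.volume_Ioc]
    norm_num
  have h := setIntegral_ge_of_const_le (μ := volume) (s := Set.Ioc ((n:ℝ)) ((n:ℝ) + 1))
    measurableSet_Ioc (by rw [hvol]; exact ENNReal.one_ne_top)
    (fun t ht => f_antitone hα hs (lt_of_le_of_lt (Nat.cast_nonneg n) ht.1) ht.2)
    ((f_integrableOn hα hs).mono_set hsub)
  rwa [measureReal_def, hvol, ENNReal.toReal_one, one_smul] at h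

lemma integral_le_u (hα : α ∈ Set.Ioo (0:ℝ) 1) (hs : 0 < s) (n : ℕ) :
    (∫ t in Set.Ioc ((n:ℝ) + 1) ((n:ℝ) + 2), t ^ (-α) * Real.exp (-(s * t)))
      ≤ ((n:ℝ) + 1) ^ (-α) * Real.exp (-(s * ((n:ℝ) + 1))) := by
  have hsub : Set.Ioc ((n:ℝ) + 1) ((n:ℝ) + 2) ⊆ Set.Ioi (0:ℝ) := fun t ht => by
    have := Nat.cast_nonneg (α := ℝ) n
    simp only [Set.mem_Ioc] at ht
    simp only [Set.mem_Ioi]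
    linarith [ht.1]
  have hvol : (volume (Set.Ioc ((n:ℝ) + 1) ((n:ℝ) + 2))) = 1 := by
    rw [Real.volume_Ioc]
    norm_num
  have hconst : IntegrableOn (fun _ : ℝ => ((n:ℝ) + 1) ^ (-α) * Real.exp (-(s * ((n:ℝ) + 1))))
      (Set.Ioc ((n:ℝ) + 1) ((n:ℝ) + 2)) volume :=
    integrableOn_const (by rw [hvol]; exact ENNReal.one_ne_top)
  have h := setIntegral_mono_on ((f_integrableOn hα hs).mono_set hsub) hconst
    measurableSet_Ioc (fun t ht => by
      have hpos : (0:ℝ) < (n:ℝ) + 1 := by positivity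
      exact f_antitone hα hs hpos ht.1.le)
  rwa [setIntegral_const, measureReal_def, hvol, ENNReal.toReal_one, one_smul] at h

lemma hasSum_upper (hα : α ∈ Set.Ioo (0:ℝ) 1) (hs : 0 < s) :
    HasSum (fun n : ℕ => ∫ t in Set.Ioc ((n:ℝ)) ((n:ℝ) + 1), t ^ (-α) * Real.exp (-(s * t)))
      (∫ t in Set.Ioi (0:ℝ), t ^ (-α) * Real.exp (-(s * t))) := by
  have h := hasSum_integral_iUnion (μ := volume)
    (s := fun n : ℕ => Set.Ioc ((n:ℝ)) ((n:ℝ) + 1))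
    (fun n => measurableSet_Ioc) pairwise_disjoint_Ioc_nat0
    (by rw [union_Ioc_nat]; exact f_integrableOn hα hs)
  rwa [union_Ioc_nat] at h

lemma hasSum_lower (hα : α ∈ Set.Ioo (0:ℝ) 1) (hs : 0 < s) :
    HasSum (fun n : ℕ => ∫ t in Set.Ioc ((n:ℝ) + 1) ((n:ℝ) + 2), t ^ (-α) * Real.exp (-(s * t)))
      (∫ t in Set.Ioi (1:ℝ), t ^ (-α) * Real.exp (-(s * t))) := by
  have hsub : Set.Ioi (1:ℝ) ⊆ Set.Ioi (0:ℝ) := fun t (ht : (1:ℝ) < t) => show (0:ℝ) < t from lt_trans zero_lt_one ht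
  have h := hasSum_integral_iUnion (μ := volume)
    (s := fun n : ℕ => Set.Ioc ((n:ℝ) + 1) ((n:ℝ) + 2))
    (fun n => measurableSet_Ioc) pairwise_disjoint_Ioc_nat1
    (by rw [union_Ioc_nat_one]; exact (f_integrableOn hα hs).mono_set hsub)
  rwa [union_Ioc_nat_one] at h

lemma summable_SS (hα : α ∈ Set.Ioo (0:ℝ) 1) (hs : 0 < s) :
    Summable (fun n : ℕ => ((n:ℝ) + 1) ^ (-α) * Real.exp (-(s * ((n:ℝ) + 1)))) :=
  Summable.of_nonneg_of_le (fun n => by positivity) (u_le_integral hα hs)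
    (hasSum_upper hα hs).summable

lemma SS_le (hα : α ∈ Set.Ioo (0:ℝ) 1) (hs : 0 < s) :
    SS α s ≤ s ^ (α - 1) * Real.Gamma (1 - α) := by
  have h := Summable.tsum_le_tsum (u_le_integral hα hs) (summable_SS hα hs)
    (hasSum_upper hα hs).summable
  rwa [(hasSum_upper hα hs).tsum_eq, f_integral_value hα hs] at h

lemma le_SS (hα : α ∈ Set.Ioo (0:ℝ) 1) (hs : 0 < s) :
    s ^ (α - 1) * Real.Gamma (1 - α) - 1 / (1 - α) ≤ SS α s := by
  have h1 : (∫ t in Set.Ioi (1:ℝ), t ^ (-α) * Real.exp (-(s * t))) ≤ SS α s := by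
    have h := Summable.tsum_le_tsum (integral_le_u hα hs) (hasSum_lower hα hs).summable
      (summable_SS hα hs)
    rwa [(hasSum_lower hα hs).tsum_eq] at h
  have hint1 : IntegrableOn (fun t : ℝ => t ^ (-α) * Real.exp (-(s * t)))
      (Set.Ioc (0:ℝ) 1) := (f_integrableOn hα hs).mono_set Set.Ioc_subset_Ioi_self
  have hint2 : IntegrableOn (fun t : ℝ => t ^ (-α) * Real.exp (-(s * t)))
      (Set.Ioi (1:ℝ)) := (f_integrableOn hα hs).mono_set (fun t (ht : (1:ℝ) < t) => show (0:ℝ) < t from lt_trans zero_lt_one ht)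
  have h2 : (∫ t in Set.Ioi (0:ℝ), t ^ (-α) * Real.exp (-(s * t)))
      = (∫ t in Set.Ioc (0:ℝ) 1, t ^ (-α) * Real.exp (-(s * t)))
        + ∫ t in Set.Ioi (1:ℝ), t ^ (-α) * Real.exp (-(s * t)) := by
    rw [← setIntegral_union (Set.Ioc_disjoint_Ioi le_rfl) measurableSet_Ioi hint1 hint2,
      Set.Ioc_union_Ioi_eq_Ioi zero_le_one]
  have hrpow_int : IntegrableOn (fun t : ℝ => t ^ (-α)) (Set.Ioc (0:ℝ) 1) := by
    have := intervalIntegral.intervalIntegrable_rpow' (a := 0) (b := 1) (by linarith [hα.2] : (-1:ℝ) < -α)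
    rwa [intervalIntegrable_iff_integrableOn_Ioc_of_le zero_le_one] at this
  have h3 : (∫ t in Set.Ioc (0:ℝ) 1, t ^ (-α) * Real.exp (-(s * t))) ≤ 1 / (1 - α) := by
    have hmono := setIntegral_mono_on hint1 hrpow_int measurableSet_Ioc (fun t ht => by
      have ht0 : 0 < t := ht.1
      have hexp : Real.exp (-(s * t)) ≤ 1 := by
        rw [Real.exp_le_one_iff]
        nlinarith
      calc t ^ (-α) * Real.exp (-(s * t)) ≤ t ^ (-α) * 1 :=
          mul_le_mul_of_nonneg_left hexp (Real.rpow_nonneg ht0.le _)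
        _ = t ^ (-α) := mul_one _)
    have hval : (∫ t in Set.Ioc (0:ℝ) 1, t ^ (-α)) = 1 / (1 - α) := by
      rw [← intervalIntegral.integral_of_le zero_le_one,
        integral_rpow (Or.inl (by linarith [hα.2]))]
      rw [Real.one_rpow, Real.zero_rpow (by linarith [hα.2] : -α + 1 ≠ 0)]
      rw [show -α + 1 = 1 - α by ring]
      ring
    linarith [hmono, hval.le, hval.ge]
  have h4 := f_integral_value hα hs
  linarith

lemma tendsto_sSS (hα : α ∈ Set.Ioo (0:ℝ) 1) :
    Tendsto (fun s : ℝ => s ^ (1 - α) * SS α s) (𝓝[>] (0:ℝ))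
      (𝓝 (Real.Gamma (1 - α))) := by
  have h1α : (0:ℝ) < 1 - α := by linarith [hα.2]
  have hub : ∀ᶠ s in 𝓝[>] (0:ℝ), s ^ (1-α) * SS α s ≤ Real.Gamma (1 - α) := by
    filter_upwards [self_mem_nhdsWithin] with s hs
    have hs : (0:ℝ) < s := hs
    have hone : s ^ (1-α) * s ^ (α-1) = 1 := by
      rw [← Real.rpow_add hs]
      norm_num
    calc s ^ (1-α) * SS α s ≤ s ^ (1-α) * (s ^ (α-1) * Real.Gamma (1-α)) :=
        mul_le_mul_of_nonneg_left (SS_le hα hs) (Real.rpow_nonneg hs.le _)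
      _ = Real.Gamma (1-α) := by rw [← mul_assoc, hone, one_mul]
  have hlb : ∀ᶠ s in 𝓝[>] (0:ℝ),
      Real.Gamma (1-α) - s ^ (1-α) / (1-α) ≤ s ^ (1-α) * SS α s := by
    filter_upwards [self_mem_nhdsWithin] with s hs
    have hs : (0:ℝ) < s := hs
    have hone : s ^ (1-α) * s ^ (α-1) = 1 := by
      rw [← Real.rpow_add hs]
      norm_num
    have h := mul_le_mul_of_nonneg_left (le_SS hα hs) (Real.rpow_nonneg hs.le (1-α))
    calc Real.Gamma (1-α) - s ^ (1-α) / (1-α)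
        = s ^ (1-α) * (s ^ (α-1) * Real.Gamma (1-α) - 1/(1-α)) := by
          rw [mul_sub, ← mul_assoc, hone, one_mul]
          ring
      _ ≤ s ^ (1-α) * SS α s := h
  have hlow : Tendsto (fun s : ℝ => Real.Gamma (1-α) - s ^ (1-α) / (1-α)) (𝓝[>] (0:ℝ))
      (𝓝 (Real.Gamma (1-α))) := by
    have h := (tendsto_rpow_zero h1α).div_const (1-α)
    have h2 := (tendsto_const_nhds :
      Tendsto (fun _ : ℝ => Real.Gamma (1-α)) (𝓝[>] (0:ℝ)) (𝓝 (Real.Gamma (1-α)))).sub h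
    simpa using h2
  exact tendsto_of_tendsto_of_tendsto_of_le_of_le' hlow tendsto_const_nhds hlb hub

lemma dGF_eq (hα : α ∈ Set.Ioo (0:ℝ) 1) (hs : 0 < s) :
    (∑' n, dAux α n * Real.exp (-s) ^ n)
      = 1 + (1 / Real.Gamma (1 - α)) * SS α s := by
  have hx0 : (0:ℝ) ≤ Real.exp (-s) := (Real.exp_pos _).le
  have hx1 : Real.exp (-s) < 1 := Real.exp_lt_one_iff.mpr (by linarith)
  have h := Summable.tsum_eq_zero_add (summable_d_pow hα hx0 hx1)
  rw [dAux_zero, pow_zero, mul_one] at h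
  rw [h]
  congr 1
  have hterm : ∀ n : ℕ, dAux α (n+1) * Real.exp (-s) ^ (n+1)
      = (1 / Real.Gamma (1-α)) * (((n:ℝ)+1) ^ (-α) * Real.exp (-(s * ((n:ℝ)+1)))) := by
    intro n
    have hne : n + 1 ≠ 0 := Nat.succ_ne_zero n
    have hd : dAux α (n+1) = ((n+1:ℕ):ℝ) ^ (-α) / Real.Gamma (1-α) := by
      unfold dAux
      rw [if_neg hne]
    have hexp : Real.exp (-s) ^ (n+1) = Real.exp (-(s * ((n:ℝ)+1))) := by
      rw [← Real.exp_nat_mul]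
      congr 1
      push_cast
      ring
    rw [hd, hexp]
    push_cast
    ring
  rw [tsum_congr hterm, tsum_mul_left]
  rfl

lemma dsum_nonneg (hα : α ∈ Set.Ioo (0:ℝ) 1) {x : ℝ} (hx : 0 ≤ x) :
    0 ≤ ∑' n, dAux α n * x ^ n :=
  tsum_nonneg fun n => mul_nonneg (dAux_nonneg hα n) (pow_nonneg hx n)

lemma tendsto_phi_exp (hα : α ∈ Set.Ioo (0:ℝ) 1) :
    Tendsto (fun s : ℝ => phiGF α (Real.exp (-s))) (𝓝[>] (0:ℝ)) (𝓝 1) := by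
  have h1α : (0:ℝ) < 1 - α := by linarith [hα.2]
  have hΓ := Gamma_pos hα
  -- V s := 1 - phiGF(exp(-s)) tends to 0
  have hV : Tendsto (fun s : ℝ => 1 - phiGF α (Real.exp (-s))) (𝓝[>] (0:ℝ)) (𝓝 0) := by
    have hub : ∀ᶠ s in 𝓝[>] (0:ℝ),
        1 - phiGF α (Real.exp (-s)) ≤ s + s ^ α := by
      filter_upwards [self_mem_nhdsWithin] with s hs
      have hs : (0:ℝ) < s := hs
      have hx0 : (0:ℝ) ≤ Real.exp (-s) := (Real.exp_pos _).le
      have hx1 : Real.exp (-s) < 1 := Real.exp_lt_one_iff.mpr (by linarith)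
      rw [one_sub_phiGF hα hx0 hx1, dGF_eq hα hs]
      have hb1 : 1 - Real.exp (-s) ≤ s := by
        have := Real.add_one_le_exp (-s)
        linarith
      have hb0 : 0 ≤ 1 - Real.exp (-s) := by linarith
      have hSSle : (1 / Real.Gamma (1-α)) * SS α s ≤ s ^ (α-1) := by
        have := SS_le hα hs
        rw [div_mul_eq_mul_div, div_le_iff₀ hΓ] -- (1*SS)/Γ ≤ s^{α-1} ↔ 1*SS ≤ s^{α-1}*Γ
        rw [one_mul]
        linarith
      have hSS0 : 0 ≤ SS α s := tsum_nonneg fun n => by positivity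
      have hd1 : 1 + (1 / Real.Gamma (1-α)) * SS α s ≤ 1 + s ^ (α-1) := by linarith
      have hd0 : 0 ≤ 1 + (1 / Real.Gamma (1-α)) * SS α s := by positivity
      calc (1 - Real.exp (-s)) * (1 + (1 / Real.Gamma (1-α)) * SS α s)
          ≤ s * (1 + s ^ (α-1)) := mul_le_mul hb1 hd1 hd0 hs.le
        _ = s + s * s ^ (α-1) := by ring
        _ = s + s ^ α := by
            congr 1
            rw [show s * s ^ (α-1) = s ^ (1:ℝ) * s ^ (α-1) by rw [Real.rpow_one],
              ← Real.rpow_add hs]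
            norm_num
    have hlb : ∀ᶠ s in 𝓝[>] (0:ℝ), 0 ≤ 1 - phiGF α (Real.exp (-s)) := by
      filter_upwards [self_mem_nhdsWithin] with s hs
      have hs : (0:ℝ) < s := hs
      have hx0 : (0:ℝ) ≤ Real.exp (-s) := (Real.exp_pos _).le
      have hx1 : Real.exp (-s) < 1 := Real.exp_lt_one_iff.mpr (by linarith)
      rw [one_sub_phiGF hα hx0 hx1]
      exact mul_nonneg (by linarith) (dsum_nonneg hα hx0)
    have hupper : Tendsto (fun s : ℝ => s + s ^ α) (𝓝[>] (0:ℝ)) (𝓝 0) := by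
      have h1 : Tendsto (fun s : ℝ => s) (𝓝[>] (0:ℝ)) (𝓝 0) :=
        tendsto_id.mono_left nhdsWithin_le_nhds
      have h2 := tendsto_rpow_zero hα.1
      simpa using h1.add h2
    exact tendsto_of_tendsto_of_tendsto_of_le_of_le' tendsto_const_nhds hupper hlb hub
  have h := (tendsto_const_nhds :
    Tendsto (fun _ : ℝ => (1:ℝ)) (𝓝[>] (0:ℝ)) (𝓝 (1:ℝ))).sub hV
  simpa using h

lemma tendsto_W (hα : α ∈ Set.Ioo (0:ℝ) 1) (hz : 0 < z) :
    Tendsto (fun s : ℝ => (z / s) ^ α * (1 - Real.exp (-s))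
        * (1 + (1 / Real.Gamma (1 - α)) * SS α s)) (𝓝[>] (0:ℝ)) (𝓝 (z ^ α)) := by
  have hΓ := Gamma_pos hα
  have h1α : (0:ℝ) < 1 - α := by linarith [hα.2]
  -- rewrite on the filter
  have hEq : ∀ᶠ s in 𝓝[>] (0:ℝ), z ^ α * ((1 - Real.exp (-s)) / s)
      * (s ^ (1-α) + (1 / Real.Gamma (1-α)) * (s ^ (1-α) * SS α s))
      = (z / s) ^ α * (1 - Real.exp (-s)) * (1 + (1 / Real.Gamma (1-α)) * SS α s) := by
    filter_upwards [self_mem_nhdsWithin] with s hs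
    have hs : (0:ℝ) < s := hs
    have h1 : (z / s) ^ α = z ^ α / s ^ α := Real.div_rpow hz.le hs.le α
    have h2 : s ^ (1-α) = s / s ^ α := by
      rw [Real.rpow_sub hs, Real.rpow_one]
    have hsα : (0:ℝ) < s ^ α := Real.rpow_pos_of_pos hs α
    rw [h1, h2]
    field_simp
  have hlim : Tendsto (fun s : ℝ => z ^ α * ((1 - Real.exp (-s)) / s)
      * (s ^ (1-α) + (1 / Real.Gamma (1-α)) * (s ^ (1-α) * SS α s))) (𝓝[>] (0:ℝ))
      (𝓝 (z ^ α * 1 * (0 + (1 / Real.Gamma (1-α)) * Real.Gamma (1-α)))) := by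
    have hE : Tendsto (fun s : ℝ => (1 - Real.exp (-s)) / s) (𝓝[>] (0:ℝ)) (𝓝 1) :=
      tendsto_E.mono_left (nhdsWithin_mono 0 (fun t ht => ne_of_gt ht))
    have hK := tendsto_sSS hα
    have hP := tendsto_rpow_zero h1α
    exact ((tendsto_const_nhds.mul hE).mul
      (hP.add (tendsto_const_nhds.mul hK)))
  have hval : z ^ α * 1 * (0 + (1 / Real.Gamma (1-α)) * Real.Gamma (1-α)) = z ^ α := by
    rw [one_div, inv_mul_cancel₀ hΓ.ne']; ring
  rw [hval] at hlim
  exact hlim.congr' hEq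


variable {α γ z : ℝ}

lemma final_algebra (hα : α ∈ Set.Ioo (0:ℝ) 1) (hz : 0 < z) (hγ : 0 < γ) {τ : ℕ}
    (hτ1 : 1 ≤ τ) (hsmall : γ * (τ:ℝ) ^ (-α) < 1) :
    (∫ t in Set.Ioi (0:ℝ), Real.exp (-(z * t))
        * stepKernel (baseKernel α) (1 - γ * (τ:ℝ) ^ (-α)) τ t)
      = γ * ((1 - Real.exp (-(z / (τ:ℝ)))) / (z / (τ:ℝ))) * phiGF α (Real.exp (-(z / (τ:ℝ))))
        / ((z / (z / (τ:ℝ))) ^ α * (1 - Real.exp (-(z / (τ:ℝ))))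
            * (1 + (1 / Real.Gamma (1 - α)) * SS α (z / (τ:ℝ)))
          + γ * phiGF α (Real.exp (-(z / (τ:ℝ))))) := by
  have hτpos : (0:ℝ) < τ := by exact_mod_cast hτ1
  have hτα : (0:ℝ) < (τ:ℝ) ^ (-α) := Real.rpow_pos_of_pos hτpos _
  have hT0 : (0:ℝ) < (τ:ℝ) ^ α := Real.rpow_pos_of_pos hτpos _
  set a : ℝ := 1 - γ * (τ:ℝ) ^ (-α) with ha_def
  have ha0 : 0 < a := by rw [ha_def]; linarith
  have ha1 : a < 1 := by rw [ha_def]; nlinarith [mul_pos hγ hτα]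
  set s : ℝ := z / (τ:ℝ) with hs_def
  have hsτ : 0 < s := div_pos hz hτpos
  set x : ℝ := Real.exp (-s) with hx_def
  have hx0 : (0:ℝ) < x := Real.exp_pos _
  have hx1 : x < 1 := by rw [hx_def]; exact Real.exp_lt_one_iff.mpr (by linarith)
  set Φ := phiGF α x with hΦ_def
  have hΦ0 : 0 < Φ := by rw [hΦ_def]; exact phiGF_pos hα hx0 hx1.le
  have hΦx : Φ ≤ x := by rw [hΦ_def]; exact phiGF_le_x hα hx0.le hx1.le
  have haΦ : a * Φ < 1 := by nlinarith
  have h1aΦ : 0 < 1 - a * Φ := by linarith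
  set D := ∑' n, dAux α n * x ^ n with hD_def
  have hxD : (1 - x) * D = 1 - Φ := by
    rw [hD_def, hΦ_def]
    exact (one_sub_phiGF hα hx0.le hx1).symm
  have hdGF : D = 1 + (1 / Real.Gamma (1 - α)) * SS α s := by
    rw [hD_def, hx_def]
    exact dGF_eq hα hsτ
  have hzz : z / s = (τ:ℝ) := by rw [hs_def]; field_simp
  have hint := integral_step (a := a) hα hz hτ1 ha0 ha1
  rw [← hs_def, ← hx_def] at hint
  have hGF := (renewal_hasSum_GF hα hx0.le hx1 ha0.le ha1).tsum_eq
  rw [← hΦ_def] at hGF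
  rw [hint, hGF, hzz, ← hdGF]
  -- now pure algebra
  have h1a : 1 - a = γ * (τ:ℝ) ^ (-α) := by rw [ha_def]; ring
  have hττ : (τ:ℝ) ^ (-α) * (τ:ℝ) ^ α = 1 := by
    rw [← Real.rpow_add hτpos]
    norm_num
  have hγa : γ = (1 - a) * (τ:ℝ) ^ α := by rw [h1a, mul_assoc, hττ, mul_one]
  have hden : (τ:ℝ) ^ α * (1 - x) * D + γ * Φ = (τ:ℝ) ^ α * (1 - a * Φ) := by
    calc (τ:ℝ) ^ α * (1 - x) * D + γ * Φ
        = (τ:ℝ) ^ α * ((1 - x) * D) + ((1 - a) * (τ:ℝ) ^ α) * Φ := by rw [mul_assoc, ← hγa]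
      _ = (τ:ℝ) ^ α * (1 - Φ) + (1 - a) * (τ:ℝ) ^ α * Φ := by rw [hxD]
      _ = (τ:ℝ) ^ α * (1 - a * Φ) := by ring
  rw [hden, hγa, hs_def]
  field_simp

theorem zetaTau_laplace_tendsto' (α γ z : ℝ) (hα : α ∈ Set.Ioo (0 : ℝ) 1)
    (hγ : 0 < γ) (hz : 0 < z) :
    Filter.Tendsto
      (fun τ : ℕ => ∫ t in Set.Ioi (0 : ℝ), Real.exp (-(z * t)) * zetaTau α γ τ t)
      Filter.atTop (nhds (γ / (γ + z ^ α))) := by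
  have hzα : (0:ℝ) < z ^ α := Real.rpow_pos_of_pos hz α
  have hs_t : Tendsto (fun τ : ℕ => z / (τ:ℝ)) atTop (𝓝[>] 0) := by
    rw [tendsto_nhdsWithin_iff]
    constructor
    · exact tendsto_const_div_atTop_nhds_zero_nat z
    · filter_upwards [eventually_ge_atTop 1] with τ hτ
      have : (0:ℝ) < τ := by exact_mod_cast hτ
      exact div_pos hz this
  have hE : Tendsto (fun τ : ℕ => (1 - Real.exp (-(z / (τ:ℝ)))) / (z / (τ:ℝ)))
      atTop (𝓝 1) :=
    (tendsto_E.mono_left (nhdsWithin_mono 0 fun t ht => ne_of_gt ht)).comp hs_t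
  have hΦ : Tendsto (fun τ : ℕ => phiGF α (Real.exp (-(z / (τ:ℝ))))) atTop (𝓝 1) :=
    (tendsto_phi_exp hα).comp hs_t
  have hW : Tendsto (fun τ : ℕ => (z / (z / (τ:ℝ))) ^ α * (1 - Real.exp (-(z / (τ:ℝ))))
      * (1 + (1 / Real.Gamma (1 - α)) * SS α (z / (τ:ℝ)))) atTop (𝓝 (z ^ α)) :=
    (tendsto_W hα hz).comp hs_t
  have hA : Tendsto (fun τ : ℕ => γ * ((1 - Real.exp (-(z / (τ:ℝ)))) / (z / (τ:ℝ)))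
      * phiGF α (Real.exp (-(z / (τ:ℝ))))) atTop (𝓝 (γ * 1 * 1)) :=
    (tendsto_const_nhds.mul hE).mul hΦ
  have hB : Tendsto (fun τ : ℕ => (z / (z / (τ:ℝ))) ^ α * (1 - Real.exp (-(z / (τ:ℝ))))
      * (1 + (1 / Real.Gamma (1 - α)) * SS α (z / (τ:ℝ)))
      + γ * phiGF α (Real.exp (-(z / (τ:ℝ))))) atTop (𝓝 (z ^ α + γ * 1)) :=
    hW.add (tendsto_const_nhds.mul hΦ)
  have hBne : z ^ α + γ * 1 ≠ 0 := by positivity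
  have hlim := hA.div hB hBne
  have hval : γ * 1 * 1 / (z ^ α + γ * 1) = γ / (γ + z ^ α) := by
    rw [mul_one, mul_one, add_comm]
  rw [hval] at hlim
  have hsmall : ∀ᶠ τ : ℕ in atTop, γ * (τ:ℝ) ^ (-α) < 1 := by
    have h := ((tendsto_rpow_neg_atTop hα.1).comp
      (tendsto_natCast_atTop_atTop (R := ℝ))).const_mul γ
    rw [mul_zero] at h
    exact h.eventually_lt_const zero_lt_one
  have hev : (fun τ : ℕ => γ * ((1 - Real.exp (-(z / (τ:ℝ)))) / (z / (τ:ℝ)))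
      * phiGF α (Real.exp (-(z / (τ:ℝ))))
      / ((z / (z / (τ:ℝ))) ^ α * (1 - Real.exp (-(z / (τ:ℝ))))
          * (1 + (1 / Real.Gamma (1 - α)) * SS α (z / (τ:ℝ)))
        + γ * phiGF α (Real.exp (-(z / (τ:ℝ))))))
      =ᶠ[atTop] fun τ : ℕ =>
        ∫ t in Set.Ioi (0 : ℝ), Real.exp (-(z * t)) * zetaTau α γ τ t := by
    filter_upwards [eventually_ge_atTop 1, hsmall] with τ hτ1 hτs
    have h := final_algebra hα hz hγ hτ1 hτs
    simp only [zetaTau]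
    rw [h]
  exact Filter.Tendsto.congr' hev hlim


end ZetaAux

/-- Pointwise convergence of the Laplace transforms of the rescaled renewal kernels:
`∫_0^∞ e^{-zt} ζ^τ(t) dt → γ/(γ + z^α)` as `τ → ∞` along the integers. -/
theorem zetaTau_laplace_tendsto (α γ z : ℝ) (hα : α ∈ Set.Ioo (0 : ℝ) 1)
    (hγ : 0 < γ) (hz : 0 < z) :
    Filter.Tendsto
      (fun τ : ℕ => ∫ t in Set.Ioi (0 : ℝ), Real.exp (-(z * t)) * zetaTau α γ τ t)
      Filter.atTop (nhds (γ / (γ + z ^ α))) := by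
  exact ZetaAux.zetaTau_laplace_tendsto' α γ z hα hγ hz
end

section
/- Let α ∈ (0,1) and γ > 0. For every t > 0 the function u ↦ f_{α,γ}(u) is integrable on (0,t) and ∫_0^t f_{α,γ}(u) du = 1 − E_α(−γ t^α). -/
open MeasureTheory Filter Set

/-- Two-parameter Mittag-Leffler function `E_{α,β}(z) = Σ_{k≥0} z^k/Γ(αk+β)`. -/
noncomputable def mittagLeffler (α β z : ℝ) : ℝ :=
  ∑' k : ℕ, z ^ k / Real.Gamma (α * k + β)

/-- The Mittag-Leffler density `f_{α,γ}(t) = γ t^{α-1} E_{α,α}(-γ t^α)`. -/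
noncomputable def mlKernel (α γ t : ℝ) : ℝ :=
  γ * t ^ (α - 1) * mittagLeffler α α (-γ * t ^ α)

lemma gamma_ratio_le {α s : ℝ} (hα : 0 < α) (hs : 2 ≤ s) :
    (s - 1) ^ α * Real.Gamma s ≤ Real.Gamma (s + α) := by
  have h1 : (0:ℝ) < s - 1 := by linarith
  have hs0 : (0:ℝ) < s := by linarith
  have hsl := Real.convexOn_log_Gamma.slope_mono_adjacent
    (x := s - 1) (y := s) (z := s + α)
    (by simpa using h1) (by simp; linarith) (by linarith) (by linarith)
  have hΓs : Real.Gamma s = (s - 1) * Real.Gamma (s - 1) := by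
    have := Real.Gamma_add_one (ne_of_gt h1)
    rw [sub_add_cancel] at this
    exact this
  have hΓpos : ∀ x : ℝ, 0 < x → 0 < Real.Gamma x := fun x hx => Real.Gamma_pos_of_pos hx
  have hlog : Real.log (Real.Gamma s) = Real.log (s - 1) + Real.log (Real.Gamma (s - 1)) := by
    rw [hΓs, Real.log_mul (ne_of_gt h1) (ne_of_gt (hΓpos _ h1))]
  simp only [Function.comp] at hsl
  have key : α * Real.log (s - 1) + Real.log (Real.Gamma s) ≤ Real.log (Real.Gamma (s + α)) := by
    have h2 : s - (s - 1) = 1 := by ring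
    have h3 : s + α - s = α := by ring
    rw [h2, h3, div_one, hlog] at hsl
    have h4 := (le_div_iff₀ hα).mp hsl
    nlinarith [h4]
  calc (s - 1) ^ α * Real.Gamma s
      = Real.exp (α * Real.log (s - 1) + Real.log (Real.Gamma s)) := by
        rw [Real.exp_add, Real.exp_log (hΓpos _ hs0), Real.rpow_def_of_pos h1, mul_comm α]
    _ ≤ Real.exp (Real.log (Real.Gamma (s + α))) := Real.exp_le_exp.mpr key
    _ = Real.Gamma (s + α) := Real.exp_log (hΓpos _ (by linarith))

lemma summable_ml {α β : ℝ} (hα : 0 < α) (hβ : 0 < β) (y : ℝ) :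
    Summable (fun k : ℕ => y ^ k / Real.Gamma (α * k + β)) := by
  apply summable_of_ratio_norm_eventually_le (r := 1/2) (by norm_num)
  set M : ℝ := max 1 ((2 * |y| + 1) ^ α⁻¹) with hM
  obtain ⟨N, hN⟩ := exists_nat_ge ((M + 2 - β) / α)
  filter_upwards [eventually_ge_atTop N] with k hk
  have hkN : (N : ℝ) ≤ (k : ℝ) := Nat.cast_le.mpr hk
  have hs : M + 2 ≤ α * k + β := by
    have := (div_le_iff₀ hα).mp hN
    nlinarith [mul_le_mul_of_nonneg_left hkN hα.le]
  set s : ℝ := α * k + β with hsdef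
  have hM1 : (1:ℝ) ≤ M := le_max_left _ _
  have hs2 : 2 ≤ s := by simp only [hsdef]; linarith
  have hspos : 0 < s := by linarith
  have hΓ := gamma_ratio_le hα hs2
  have hMα : 2 * |y| + 1 ≤ M ^ α := by
    calc 2 * |y| + 1 = ((2 * |y| + 1) ^ α⁻¹) ^ α := by
          rw [Real.rpow_inv_rpow (by positivity) (ne_of_gt hα)]
      _ ≤ M ^ α := Real.rpow_le_rpow (by positivity) (le_max_right _ _) hα.le
  have hs1 : M ≤ s - 1 := by linarith
  have hbig : 2 * |y| + 1 ≤ (s - 1) ^ α :=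
    hMα.trans (Real.rpow_le_rpow (by linarith) hs1 hα.le)
  have hΓs : 0 < Real.Gamma s := Real.Gamma_pos_of_pos hspos
  have hΓsα : 0 < Real.Gamma (s + α) := Real.Gamma_pos_of_pos (by linarith)
  have hcast : α * ((k:ℕ)+1 : ℕ) + β = s + α := by push_cast; simp only [hsdef]; ring
  rw [hcast]
  have h1 : ‖y ^ (k+1) / Real.Gamma (s + α)‖ = |y| ^ (k+1) / Real.Gamma (s + α) := by
    rw [norm_div, norm_pow, Real.norm_eq_abs, Real.norm_eq_abs, abs_of_pos hΓsα]
  have h2 : ‖y ^ k / Real.Gamma s‖ = |y| ^ k / Real.Gamma s := by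
    rw [norm_div, norm_pow, Real.norm_eq_abs, Real.norm_eq_abs, abs_of_pos hΓs]
  rw [h1, h2]
  have hΓbig : (2 * |y| + 1) * Real.Gamma s ≤ Real.Gamma (s + α) := by
    calc (2 * |y| + 1) * Real.Gamma s ≤ (s-1) ^ α * Real.Gamma s :=
          mul_le_mul_of_nonneg_right hbig hΓs.le
      _ ≤ _ := hΓ
  calc |y| ^ (k+1) / Real.Gamma (s + α)
      ≤ |y| ^ (k+1) / ((2 * |y| + 1) * Real.Gamma s) := by
        gcongr
    _ = (|y| / (2 * |y| + 1)) * (|y| ^ k / Real.Gamma s) := by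
        rw [pow_succ]; field_simp
    _ ≤ (1/2) * (|y| ^ k / Real.Gamma s) := by
        have hhalf : |y| / (2 * |y| + 1) ≤ 1/2 := by
          rw [div_le_iff₀ (by positivity)]; nlinarith [abs_nonneg y]
        exact mul_le_mul_of_nonneg_right hhalf (by positivity)

lemma rpow_split {α : ℝ} (c u : ℝ) (hu : 0 < u) (k : ℕ) :
    u ^ (α * k + c) = u ^ c * (u ^ α) ^ k := by
  rw [← Real.rpow_natCast (u ^ α) k, ← Real.rpow_mul hu.le, ← Real.rpow_add hu]
  congr 1; ring

lemma mlKernel_eq_tsum {α : ℝ} (γ : ℝ) (u : ℝ) (hu : 0 < u) :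
    mlKernel α γ u
      = ∑' k : ℕ, (γ * (-γ) ^ k / Real.Gamma (α * k + α)) * u ^ (α * k + (α - 1)) := by
  unfold mlKernel mittagLeffler
  rw [← tsum_mul_left]
  refine tsum_congr fun k => ?_
  rw [rpow_split (α - 1) u hu k]
  ring

lemma norm_ml_term {α γ : ℝ} (hγ : 0 < γ) (hα : 0 < α) (u : ℝ) (hu : 0 < u) (k : ℕ) :
    ‖(γ * (-γ) ^ k / Real.Gamma (α * k + α)) * u ^ (α * k + (α - 1))‖
      = (γ ^ (k+1) / Real.Gamma (α * k + α)) * u ^ (α * k + (α - 1)) := by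
  have hΓ : 0 < Real.Gamma (α * k + α) := Real.Gamma_pos_of_pos (by positivity)
  have hup : 0 < u ^ (α * k + (α - 1)) := Real.rpow_pos_of_pos hu _
  rw [Real.norm_eq_abs, abs_mul, abs_div, abs_mul, abs_pow, abs_neg,
    abs_of_pos hγ, abs_of_pos hΓ, abs_of_pos hup, pow_succ]
  ring

/-- Cumulative Mittag-Leffler kernel: `∫_0^t f_{α,γ}(u) du = 1 - E_α(-γ t^α)`. -/
theorem mlKernel_integral (α γ : ℝ) (hα : α ∈ Set.Ioo (0 : ℝ) 1) (hγ : 0 < γ)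
    (t : ℝ) (ht : 0 < t) :
    IntegrableOn (mlKernel α γ) (Set.Ioo 0 t) ∧
    ∫ u in Set.Ioo (0 : ℝ) t, mlKernel α γ u = 1 - mittagLeffler α 1 (-γ * t ^ α) := by
  obtain ⟨hα0, hα1⟩ := hα
  set c : ℕ → ℝ := fun k => γ * (-γ) ^ k / Real.Gamma (α * k + α) with hc
  set F : ℕ → ℝ → ℝ := fun k u => c k * u ^ (α * k + (α - 1)) with hF
  have hexp : ∀ k : ℕ, (-1 : ℝ) < α * k + (α - 1) := by
    intro k
    have : (0:ℝ) ≤ α * k := by positivity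
    linarith
  have hexp0 : ∀ k : ℕ, (0 : ℝ) < α * k + α := by
    intro k
    have : (0:ℝ) ≤ α * k := by positivity
    linarith
  have hΓpos : ∀ k : ℕ, 0 < Real.Gamma (α * k + α) :=
    fun k => Real.Gamma_pos_of_pos (hexp0 k)
  -- integrability of power functions on (0, t)
  have base_int : ∀ p : ℝ, -1 < p → IntegrableOn (fun u : ℝ => u ^ p) (Set.Ioo 0 t) := by
    intro p hp
    have h := intervalIntegral.intervalIntegrable_rpow' (a := 0) (b := t) hp
    rw [intervalIntegrable_iff_integrableOn_Ioc_of_le ht.le] at h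
    exact h.mono_set Set.Ioo_subset_Ioc_self
  have base_val : ∀ p : ℝ, -1 < p →
      ∫ u in Set.Ioo (0:ℝ) t, u ^ p = t ^ (p+1) / (p+1) := by
    intro p hp
    rw [← MeasureTheory.integral_Ioc_eq_integral_Ioo,
      ← intervalIntegral.integral_of_le ht.le, integral_rpow (Or.inl hp),
      Real.zero_rpow (by linarith : p + 1 ≠ 0), sub_zero]
  have hF_int : ∀ k, Integrable (F k) (volume.restrict (Set.Ioo (0:ℝ) t)) :=
    fun k => (base_int _ (hexp k)).const_mul (c k)
  -- value of each term integral
  have hIval : ∀ k : ℕ, ∫ u in Set.Ioo (0:ℝ) t, F k u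
      = -((-γ * t ^ α) ^ (k+1) / Real.Gamma (α * ((k:ℝ) + 1) + 1)) := by
    intro k
    have h1 : ∫ u in Set.Ioo (0:ℝ) t, F k u
        = c k * (t ^ ((α * k + (α - 1)) + 1) / ((α * k + (α - 1)) + 1)) := by
      simp only [hF]
      rw [MeasureTheory.integral_const_mul, base_val _ (hexp k)]
    rw [h1]
    have he : (α * k + (α - 1)) + 1 = α * k + α := by ring
    rw [he, rpow_split α t ht k]
    have hΓ1 : Real.Gamma (α * ((k:ℝ) + 1) + 1) = (α * k + α) * Real.Gamma (α * k + α) := by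
      have : α * ((k:ℝ) + 1) + 1 = (α * k + α) + 1 := by ring
      rw [this, Real.Gamma_add_one (ne_of_gt (hexp0 k))]
    rw [hΓ1, hc]
    have h2 := (hΓpos k).ne'
    have h3 := (hexp0 k).ne'
    rw [mul_pow, pow_succ, pow_succ]
    field_simp
  -- summability of integrals of norms
  have hF_norm_sum : Summable fun k => ∫ u in Set.Ioo (0:ℝ) t, ‖F k u‖ := by
    have heq : (fun k => ∫ u in Set.Ioo (0:ℝ) t, ‖F k u‖)
        = fun k : ℕ => (γ * t ^ α) * ((γ * t ^ α) ^ k / Real.Gamma (α * k + (α + 1))) := by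
      funext k
      have h1 : ∫ u in Set.Ioo (0:ℝ) t, ‖F k u‖
          = ∫ u in Set.Ioo (0:ℝ) t,
              (γ ^ (k+1) / Real.Gamma (α * k + α)) * u ^ (α * k + (α - 1)) := by
        refine setIntegral_congr_fun measurableSet_Ioo fun u hu => ?_
        exact norm_ml_term hγ hα0 u hu.1 k
      rw [h1, MeasureTheory.integral_const_mul, base_val _ (hexp k)]
      have he : (α * k + (α - 1)) + 1 = α * k + α := by ring
      rw [he, rpow_split α t ht k]
      have hΓ1 : Real.Gamma (α * k + (α + 1)) = (α * k + α) * Real.Gamma (α * k + α) := by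
        have : α * (k:ℝ) + (α + 1) = (α * k + α) + 1 := by ring
        rw [this, Real.Gamma_add_one (ne_of_gt (hexp0 k))]
      rw [hΓ1]
      have h2 := (hΓpos k).ne'
      have h3 := (hexp0 k).ne'
      rw [mul_pow, pow_succ]
      field_simp
    rw [heq]
    exact (summable_ml hα0 (by linarith) (γ * t ^ α)).mul_left _
  -- pointwise summability
  have hsum_pt : ∀ u : ℝ, 0 < u → Summable fun k => F k u := by
    intro u hu
    refine Summable.of_norm ?_
    have heq : (fun k => ‖F k u‖)
        = fun k : ℕ => (γ * u ^ (α - 1)) * ((γ * u ^ α) ^ k / Real.Gamma (α * k + α)) := by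
      funext k
      rw [hF, norm_ml_term hγ hα0 u hu k, rpow_split (α - 1) u hu k, mul_pow, pow_succ]
      ring
    rw [heq]
    exact (summable_ml hα0 hα0 (γ * u ^ α)).mul_left _
  -- a.e. strong measurability of mlKernel on (0,t)
  have haesm : AEStronglyMeasurable (mlKernel α γ) (volume.restrict (Set.Ioo (0:ℝ) t)) := by
    rw [aestronglyMeasurable_iff_aemeasurable]
    refine aemeasurable_of_tendsto_metrizable_ae atTop
      (f := fun n u => ∑ k ∈ Finset.range n, F k u) (fun n => ?_) ?_
    · exact (Finset.measurable_sum _ fun k _ => by fun_prop).aemeasurable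
    · filter_upwards [ae_restrict_mem measurableSet_Ioo] with u hu
      rw [mlKernel_eq_tsum γ u hu.1]
      exact (hsum_pt u hu.1).hasSum.tendsto_sum_nat
  -- the uniform bound
  set M : ℝ := max t 1 with hMdef
  have hM1 : (1:ℝ) ≤ M := le_max_right _ _
  set C : ℝ := ∑' k : ℕ, (γ * M ^ α) ^ k / Real.Gamma (α * k + α) with hCdef
  have hC_sum : Summable fun k : ℕ => (γ * M ^ α) ^ k / Real.Gamma (α * k + α) :=
    summable_ml hα0 hα0 _
  have hbound : ∀ u ∈ Set.Ioo (0:ℝ) t, ‖mlKernel α γ u‖ ≤ (γ * C) * u ^ (α - 1) := by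
    intro u hu
    have hu0 := hu.1
    have hsum_u : Summable fun k : ℕ => (γ * u ^ α) ^ k / Real.Gamma (α * k + α) :=
      summable_ml hα0 hα0 _
    have habs : ∀ k : ℕ, ‖(-γ * u ^ α) ^ k / Real.Gamma (α * k + α)‖
        = (γ * u ^ α) ^ k / Real.Gamma (α * k + α) := by
      intro k
      rw [Real.norm_eq_abs, abs_div, abs_pow, abs_of_pos (hΓpos k), abs_mul, abs_neg,
        abs_of_pos hγ, abs_of_pos (Real.rpow_pos_of_pos hu0 α)]
    have hnormsum : Summable fun k : ℕ => ‖(-γ * u ^ α) ^ k / Real.Gamma (α * k + α)‖ :=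
      Summable.congr hsum_u fun k => (habs k).symm
    have hml : ‖mittagLeffler α α (-γ * u ^ α)‖ ≤ C := by
      unfold mittagLeffler
      refine (norm_tsum_le_tsum_norm hnormsum).trans ?_
      refine Summable.tsum_le_tsum (fun k => ?_) hnormsum hC_sum
      rw [habs k]
      have hux : u ^ α ≤ M ^ α :=
        Real.rpow_le_rpow hu0.le (hu.2.le.trans (le_max_left _ _)) hα0.le
      gcongr
    have : ‖mlKernel α γ u‖ = γ * u ^ (α - 1) * ‖mittagLeffler α α (-γ * u ^ α)‖ := by
      unfold mlKernel
      rw [norm_mul, norm_mul, Real.norm_eq_abs, Real.norm_eq_abs, abs_of_pos hγ,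
        abs_of_pos (Real.rpow_pos_of_pos hu0 _)]
    rw [this]
    have h2 : 0 ≤ γ * u ^ (α - 1) := by positivity
    calc γ * u ^ (α - 1) * ‖mittagLeffler α α (-γ * u ^ α)‖
        ≤ γ * u ^ (α - 1) * C := mul_le_mul_of_nonneg_left hml h2
      _ = (γ * C) * u ^ (α - 1) := by ring
  have hint : IntegrableOn (mlKernel α γ) (Set.Ioo 0 t) := by
    refine Integrable.mono' ((base_int (α - 1) (by linarith)).const_mul (γ * C)) haesm ?_
    filter_upwards [ae_restrict_mem measurableSet_Ioo] with u hu
    exact hbound u hu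
  refine ⟨hint, ?_⟩
  -- the integral computation
  have hswap : ∫ u in Set.Ioo (0:ℝ) t, mlKernel α γ u = ∑' k, ∫ u in Set.Ioo (0:ℝ) t, F k u := by
    rw [MeasureTheory.integral_tsum_of_summable_integral_norm hF_int hF_norm_sum]
    refine setIntegral_congr_fun measurableSet_Ioo fun u hu => ?_
    simp only [hF, hc]
    exact mlKernel_eq_tsum γ u hu.1
  rw [hswap]
  have hE : mittagLeffler α 1 (-γ * t ^ α)
      = 1 + ∑' k : ℕ, (-γ * t ^ α) ^ (k+1) / Real.Gamma (α * ((k:ℝ) + 1) + 1) := by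
    unfold mittagLeffler
    rw [Summable.tsum_eq_zero_add (summable_ml hα0 one_pos (-γ * t ^ α))]
    congr 1
    · norm_num [Real.Gamma_one]
    · refine tsum_congr fun k => ?_
      push_cast
      ring_nf
  rw [hE]
  rw [tsum_congr hIval, tsum_neg]
  ring
end

section
/- For every real number y, the function u ↦ e^{(1/2 + iu)y}/(1/4 + u²) is integrable on ℝ and (1/(2π)) ∫_ℝ e^{(1/2 + iu)y}/(1/4 + u²) du = min(1, e^y). -/
open MeasureTheory

open Set Filter Topology


lemma my_integral_cexp_neg_mul_Ioi {c : ℂ} (hc : 0 < c.re) :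
    ∫ t : ℝ in Ioi (0:ℝ), Complex.exp (-(c * t)) = 1 / c := by
  have hc0 : c ≠ 0 := fun h => by simp [h] at hc
  have key := integral_Ioi_of_hasDerivAt_of_tendsto'
      (a := (0:ℝ)) (f := fun t : ℝ => -Complex.exp (-(c * t)) / c)
      (f' := fun t : ℝ => Complex.exp (-(c * t))) ?_ ?_ ?_ (m := 0)
  · rw [key]; field_simp; simp
  · intro x _
    have h0 : HasDerivAt (fun z : ℂ => -Complex.exp (-(c * z)) / c)
        (-(Complex.exp (-(c * (x:ℂ))) * -(c * 1)) / c) (x : ℂ) :=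
      (((((hasDerivAt_id (x:ℂ)).const_mul c).neg).cexp).neg).div_const c
    have := h0.comp_ofReal
    refine this.congr_deriv ?_
    rw [mul_one, mul_neg, neg_neg, mul_div_cancel_right₀ _ hc0]
  · apply (Integrable.mono' (g := fun t : ℝ => Real.exp (-c.re * t))
      ((exp_neg_integrableOn_Ioi 0 hc)) ?_ ?_)
    · apply Continuous.aestronglyMeasurable
      fun_prop
    · filter_upwards with t
      rw [Complex.norm_exp]
      simp [Complex.mul_re]
  · rw [show (0:ℂ) = 0 / c by simp]
    apply Tendsto.div_const
    rw [← neg_zero]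
    apply Tendsto.neg
    rw [tendsto_zero_iff_norm_tendsto_zero]
    have h1 : Tendsto (fun t : ℝ => Real.exp (-(c.re * t))) atTop (𝓝 0) := by
      apply Real.tendsto_exp_atBot.comp
      exact tendsto_neg_atBot_iff.mpr ((tendsto_const_mul_atTop_of_pos hc).2 tendsto_id)
    apply h1.congr
    intro t
    rw [Complex.norm_exp]
    simp [Complex.mul_re]

lemma my_integrableOn_Iic_of_neg {E : Type*} [NormedAddCommGroup E] {g : ℝ → E}
    (h : IntegrableOn (fun x => g (-x)) (Ioi (0:ℝ))) : IntegrableOn g (Iic (0:ℝ)) := by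
  have A : MeasurableEmbedding (fun x : ℝ => -x) :=
    (Homeomorph.neg ℝ).isClosedEmbedding.measurableEmbedding
  have hmap : (volume : Measure ℝ).restrict (Iic (0:ℝ))
      = Measure.map (fun x : ℝ => -x) ((volume : Measure ℝ).restrict (Ici (0:ℝ))) := by
    rw [← Measure.map_neg_eq_self (volume : Measure ℝ)]
    rw [Measure.restrict_map measurable_neg measurableSet_Iic]
    congr 1
    simp [neg_preimage]
  rw [IntegrableOn, hmap, A.integrable_map_iff]
  exact (integrableOn_Ici_iff_integrableOn_Ioi).2 h

lemma my_integral_line (a : ℝ) :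
    Integrable (fun x : ℝ => Complex.exp (((a : ℂ) * x) * Complex.I - (|x| : ℝ) / 2)) ∧
    ∫ x : ℝ, Complex.exp (((a : ℂ) * x) * Complex.I - (|x| : ℝ) / 2)
      = ((1 / 4 + a ^ 2 : ℝ) : ℂ)⁻¹ := by
  set c₁ : ℂ := 1 / 2 - (a : ℂ) * Complex.I with hc₁
  set c₂ : ℂ := 1 / 2 + (a : ℂ) * Complex.I with hc₂
  have hre₁ : 0 < c₁.re := by simp [hc₁]
  have hre₂ : 0 < c₂.re := by simp [hc₂]
  set g : ℝ → ℂ := fun x => Complex.exp (((a : ℂ) * x) * Complex.I - (|x| : ℝ) / 2) with hg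
  have hg_pos : ∀ x : ℝ, 0 < x → g x = Complex.exp (-(c₁ * x)) := by
    intro x hx
    rw [hg]
    simp only
    rw [abs_of_pos hx]
    congr 1
    push_cast
    ring
  have hg_neg : ∀ x : ℝ, 0 < x → g (-x) = Complex.exp (-(c₂ * x)) := by
    intro x hx
    rw [hg]
    simp only
    rw [abs_neg, abs_of_pos hx]
    push_cast
    congr 1
    ring
  have hInt₁ : IntegrableOn g (Ioi (0:ℝ)) := by
    apply IntegrableOn.congr_fun (f := fun x : ℝ => Complex.exp (-(c₁ * x)))
    · apply (Integrable.mono' (g := fun t : ℝ => Real.exp (-c₁.re * t))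
        ((exp_neg_integrableOn_Ioi 0 hre₁)) ?_ ?_)
      · exact Continuous.aestronglyMeasurable (by fun_prop)
      · filter_upwards with t
        rw [Complex.norm_exp]
        simp [Complex.mul_re]
    · intro x hx
      exact (hg_pos x hx).symm
    · exact measurableSet_Ioi
  have hInt₂' : IntegrableOn (fun x => g (-x)) (Ioi (0:ℝ)) := by
    apply IntegrableOn.congr_fun (f := fun x : ℝ => Complex.exp (-(c₂ * x)))
    · apply (Integrable.mono' (g := fun t : ℝ => Real.exp (-c₂.re * t))
        ((exp_neg_integrableOn_Ioi 0 hre₂)) ?_ ?_)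
      · exact Continuous.aestronglyMeasurable (by fun_prop)
      · filter_upwards with t
        rw [Complex.norm_exp]
        simp [Complex.mul_re]
    · intro x hx
      exact (hg_neg x hx).symm
    · exact measurableSet_Ioi
  have hInt₂ : IntegrableOn g (Iic (0:ℝ)) := my_integrableOn_Iic_of_neg hInt₂'
  have hIntegrable : Integrable g := by
    have := hInt₂.union hInt₁
    rwa [Iic_union_Ioi, integrableOn_univ] at this
  refine ⟨hIntegrable, ?_⟩
  have hsplit := intervalIntegral.integral_Iic_add_Ioi hInt₂ hInt₁
  have e₁ : ∫ x in Ioi (0:ℝ), g x = 1 / c₁ := by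
    rw [← my_integral_cexp_neg_mul_Ioi hre₁]
    exact setIntegral_congr_fun measurableSet_Ioi (fun x hx => hg_pos x hx)
  have e₂ : ∫ x in Iic (0:ℝ), g x = 1 / c₂ := by
    have : ∫ x in Iic (0:ℝ), g x = ∫ x in Ioi (-(0:ℝ)), g (-x) := by
      rw [← integral_comp_neg_Iic]
      simp
    rw [this, neg_zero, ← my_integral_cexp_neg_mul_Ioi hre₂]
    exact setIntegral_congr_fun measurableSet_Ioi (fun x hx => hg_neg x hx)
  have hc₁0 : c₁ ≠ 0 := fun h => by simp [h] at hre₁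
  have hc₂0 : c₂ ≠ 0 := fun h => by simp [h] at hre₂
  have hd : ((1 / 4 + a ^ 2 : ℝ) : ℂ) ≠ 0 := by
    rw [Ne, Complex.ofReal_eq_zero]
    positivity
  rw [← hsplit, e₁, e₂]
  have hI : Complex.I ^ 2 = -1 := Complex.I_sq
  rw [hc₁] at hc₁0; rw [hc₂] at hc₂0
  show 1 / (1 / 2 + (a : ℂ) * Complex.I) + 1 / (1 / 2 - (a : ℂ) * Complex.I)
      = ((1 / 4 + a ^ 2 : ℝ) : ℂ)⁻¹
  have hprod : (1 / 2 + (a:ℂ) * Complex.I) * (1 / 2 - (a:ℂ) * Complex.I)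
      = ((1 / 4 + a ^ 2 : ℝ) : ℂ) := by
    push_cast
    ring_nf
    rw [hI]
    ring
  rw [div_add_div _ _ hc₂0 hc₁0, hprod]
  rw [show (1:ℂ) * (1 / 2 - (a:ℂ)*Complex.I) + (1 / 2 + (a:ℂ)*Complex.I) * 1 = 1 by ring]
  rw [one_div]
open FourierTransform Real Complex in
lemma my_fourier (w : ℝ) :
    (𝓕 (fun x : ℝ => ((Real.exp (-|x| / 2) : ℝ) : ℂ))) w
      = ((1 / 4 + (2 * Real.pi * w) ^ 2 : ℝ) : ℂ)⁻¹ := by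
  rw [Real.fourier_real_eq_integral_exp_smul]
  have h := (my_integral_line (-(2 * Real.pi * w))).2
  rw [show (-(2 * Real.pi * w)) ^ 2 = (2 * Real.pi * w) ^ 2 by ring] at h
  rw [← h]
  refine integral_congr_ae (Filter.Eventually.of_forall fun v => ?_)
  simp only [smul_eq_mul]
  rw [Complex.ofReal_exp, ← Complex.exp_add]
  congr 1
  push_cast
  ring

open FourierTransform in
lemma my_inversion (y : ℝ) :
    ∫ v : ℝ, Complex.exp ((-2 * Real.pi * v * (-y) : ℝ) * Complex.I) •
        ((1 / 4 + (2 * Real.pi * v) ^ 2 : ℝ) : ℂ)⁻¹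
      = ((Real.exp (-|y| / 2) : ℝ) : ℂ) := by
  set f : ℝ → ℂ := fun x => ((Real.exp (-|x| / 2) : ℝ) : ℂ) with hf
  have hcont : Continuous f := by fun_prop
  have hint : Integrable f := by
    apply ((my_integral_line 0).1).congr
    filter_upwards with x
    rw [show ((0:ℝ):ℂ) * x * Complex.I - ((|x|:ℝ):ℂ) / 2 = ((-|x| / 2 : ℝ) : ℂ) by push_cast; ring]
    exact (Complex.ofReal_exp _).symm
  have hFint : Integrable (𝓕 f) := by
    rw [show 𝓕 f = fun w : ℝ => ((1 / 4 + (2 * Real.pi * w) ^ 2 : ℝ) : ℂ)⁻¹ from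
      funext my_fourier]
    apply Integrable.mono' ((integrable_inv_one_add_sq).const_mul 4)
    · apply Continuous.aestronglyMeasurable
      apply Continuous.inv₀ (by fun_prop)
      intro w
      rw [Ne, Complex.ofReal_eq_zero]
      positivity
    · filter_upwards with w
      have h1 : (0:ℝ) < 1 / 4 + (2 * Real.pi * w) ^ 2 := by positivity
      rw [norm_inv, Complex.norm_real, Real.norm_eq_abs, abs_of_pos h1]
      have hπ : (9:ℝ) ≤ Real.pi ^ 2 := by nlinarith [Real.pi_gt_three]
      have h2 : (1 + w ^ 2) / 4 ≤ 1 / 4 + (2 * Real.pi * w) ^ 2 := by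
        nlinarith [mul_le_mul_of_nonneg_right hπ (sq_nonneg w), sq_nonneg w]
      calc (1 / 4 + (2 * Real.pi * w) ^ 2)⁻¹ ≤ ((1 + w ^ 2) / 4)⁻¹ := by
            apply inv_anti₀ (by positivity) h2
        _ = 4 * (1 + w ^ 2)⁻¹ := by rw [inv_div, div_eq_mul_inv]
  have key := hint.fourierInv_fourier_eq hFint (hcont.continuousAt (x := y))
  rw [Real.fourierInv_eq_fourier_neg,
    Real.fourier_real_eq_integral_exp_smul] at key
  refine Eq.trans ?_ key
  refine integral_congr_ae (Filter.Eventually.of_forall fun v => ?_)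
  simp only []
  rw [my_fourier v]
/-- For every real `y`, `u ↦ e^{(1/2+iu)y}/(1/4+u²)` is integrable on `ℝ` and
`(1/(2π)) ∫_ℝ e^{(1/2+iu)y}/(1/4+u²) du = min(1, e^y)`. -/
theorem fourier_min_identity (y : ℝ) :
    Integrable (fun u : ℝ =>
      Complex.exp (((1 / 2 : ℂ) + (u : ℂ) * Complex.I) * (y : ℂ)) / ((1 / 4 + u ^ 2 : ℝ) : ℂ)) ∧
    (1 / (2 * (Real.pi : ℂ))) *
        ∫ u : ℝ, Complex.exp (((1 / 2 : ℂ) + (u : ℂ) * Complex.I) * (y : ℂ)) /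
          ((1 / 4 + u ^ 2 : ℝ) : ℂ)
      = ((min 1 (Real.exp y) : ℝ) : ℂ) := by
  set h : ℝ → ℂ := fun u => Complex.exp (((u * y : ℝ) : ℂ) * Complex.I)
      * ((1 / 4 + u ^ 2 : ℝ) : ℂ)⁻¹ with hh
  have hInt_h : Integrable h := by
    apply Integrable.mono' ((integrable_inv_one_add_sq).const_mul 4)
    · apply Continuous.aestronglyMeasurable
      apply Continuous.mul (by fun_prop)
      apply Continuous.inv₀ (by fun_prop)
      intro u
      rw [Ne, Complex.ofReal_eq_zero]
      positivity
    · filter_upwards with u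
      have h1 : (0:ℝ) < 1 / 4 + u ^ 2 := by positivity
      rw [hh]
      simp only []
      rw [norm_mul, norm_inv, Complex.norm_exp_ofReal_mul_I, one_mul,
        Complex.norm_real, Real.norm_eq_abs, abs_of_pos h1]
      have h2 : (1 + u ^ 2) / 4 ≤ 1 / 4 + u ^ 2 := by nlinarith [sq_nonneg u]
      calc (1 / 4 + u ^ 2)⁻¹ ≤ ((1 + u ^ 2) / 4)⁻¹ := inv_anti₀ (by positivity) h2
        _ = 4 * (1 + u ^ 2)⁻¹ := by rw [inv_div, div_eq_mul_inv]
  have hFh : (fun u : ℝ =>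
        Complex.exp (((1 / 2 : ℂ) + (u : ℂ) * Complex.I) * (y : ℂ)) / ((1 / 4 + u ^ 2 : ℝ) : ℂ))
      = fun u => ((Real.exp (y / 2) : ℝ) : ℂ) * h u := by
    funext u
    rw [hh]
    simp only []
    rw [div_eq_mul_inv, ← mul_assoc]
    congr 1
    rw [show ((1 / 2 : ℂ) + (u : ℂ) * Complex.I) * (y : ℂ)
        = ((y / 2 : ℝ) : ℂ) + ((u * y : ℝ) : ℂ) * Complex.I by push_cast; ring,
      Complex.exp_add, ← Complex.ofReal_exp]
  have hcomp : ∀ v : ℝ, Complex.exp (((-2 * Real.pi * v * (-y) : ℝ) : ℂ) * Complex.I) •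
      ((1 / 4 + (2 * Real.pi * v) ^ 2 : ℝ) : ℂ)⁻¹ = h (2 * Real.pi * v) := by
    intro v
    rw [hh]
    simp only [smul_eq_mul]
    congr 3
    push_cast
    ring
  have hIv : ∫ u : ℝ, h u = ((2 * Real.pi : ℝ) : ℂ) * ((Real.exp (-|y| / 2) : ℝ) : ℂ) := by
    have hcv := Measure.integral_comp_mul_left h (2 * Real.pi)
    have hmi := my_inversion y
    rw [show (fun v : ℝ => Complex.exp (((-2 * Real.pi * v * (-y) : ℝ) : ℂ) * Complex.I) •
        ((1 / 4 + (2 * Real.pi * v) ^ 2 : ℝ) : ℂ)⁻¹) = fun v : ℝ => h (2 * Real.pi * v) from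
      funext hcomp] at hmi
    rw [hcv] at hmi
    rw [← hmi, Complex.real_smul]
    have hp : |(2 * Real.pi)⁻¹| = (2 * Real.pi)⁻¹ := abs_of_pos (by positivity)
    rw [hp]
    push_cast
    have hπ : (Real.pi : ℂ) ≠ 0 := Complex.ofReal_ne_zero.mpr Real.pi_ne_zero
    field_simp
  have hmin : Real.exp (y / 2) * Real.exp (-|y| / 2) = min 1 (Real.exp y) := by
    rw [← Real.exp_add]
    rcases le_total y 0 with hy | hy
    · rw [abs_of_nonpos hy, min_eq_right (Real.exp_le_one_iff.mpr hy)]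
      congr 1
      ring
    · rw [abs_of_nonneg hy, min_eq_left (Real.one_le_exp_iff.mpr hy)]
      rw [show y / 2 + -y / 2 = 0 by ring, Real.exp_zero]
  constructor
  · rw [hFh]
    exact hInt_h.const_mul _
  · rw [hFh, integral_const_mul, hIv, ← hmin]
    have hπ : (Real.pi : ℂ) ≠ 0 := Complex.ofReal_ne_zero.mpr Real.pi_ne_zero
    push_cast
    field_simp
end

section
/- Let P be a real-valued random variable on a probability space with E[e^P] < ∞. Then the function u ↦ E[e^{(1/2 + iu)P}]/(1/4 + u²) is integrable on ℝ and E[(e^P − 1)^+] = E[e^P] − (1/(2π)) ∫_ℝ E[e^{(1/2 + iu)P}]/(1/4 + u²) du. (Carr–Madan representation of the undiscounted call price in log-moneyness form.) -/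
open MeasureTheory Complex Set Filter
open scoped FourierTransform

lemma integrableOn_cexp_neg_mul {a : ℂ} (ha : 0 < a.re) :
    IntegrableOn (fun x : ℝ => Complex.exp (-a * x)) (Ioi 0) := by
  apply Integrable.mono' ((exp_neg_integrableOn_Ioi 0 ha).norm)
  · exact (Complex.continuous_exp.comp (by continuity)).aestronglyMeasurable
  · filter_upwards with x
    simp [Complex.norm_exp, neg_mul, Real.norm_eq_abs,
      _root_.abs_of_nonneg (Real.exp_pos _).le, mul_comm]

lemma integral_cexp_neg_mul_Ioi {a : ℂ} (ha : 0 < a.re) :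
    ∫ x : ℝ in Ioi 0, Complex.exp (-a * x) = 1 / a := by
  have ha0 : a ≠ 0 := fun h => by simp [h] at ha
  have hderiv : ∀ x ∈ Ici (0:ℝ), HasDerivAt (fun x : ℝ => -Complex.exp (-a * x) / a)
      (Complex.exp (-a * x)) x := by
    intro x _
    have h1 : HasDerivAt (fun y : ℝ => -a * (y:ℂ)) (-a) x := by
      simpa using (Complex.ofRealCLM.hasDerivAt (x := x)).const_mul (-a)
    have h2 := (Complex.hasDerivAt_exp (-a * x)).comp x h1
    have h3 := (h2.neg).div_const a
    convert h3 using 1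
    exacts [rfl, rfl, by field_simp]
  have htend : Tendsto (fun x : ℝ => -Complex.exp (-a * x) / a) atTop (nhds 0) := by
    rw [tendsto_zero_iff_norm_tendsto_zero]
    have heq : (fun x : ℝ => ‖-Complex.exp (-a * x) / a‖) = fun x => Real.exp (-a.re * x) / ‖a‖ := by
      ext x
      simp [Complex.norm_exp, neg_mul]
    rw [heq]
    have h0 : Tendsto (fun x : ℝ => -a.re * x) atTop atBot :=
      tendsto_id.const_mul_atTop_of_neg (neg_lt_zero.2 ha)
    simpa using (Real.tendsto_exp_atBot.comp h0).div_const ‖a‖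
  have := integral_Ioi_of_hasDerivAt_of_tendsto
    (f := fun x : ℝ => -Complex.exp (-a * x) / a) (f' := fun x : ℝ => Complex.exp (-a * x))
    ((hderiv 0 (by simp)).continuousAt.continuousWithinAt)
    (fun x hx => hderiv x (Ioi_subset_Ici_self hx)) (integrableOn_cexp_neg_mul ha) htend
  rw [this]
  simp [neg_div]

open Real in
noncomputable def dampf : ℝ → ℂ := fun x => (Real.exp (-|x|/2) : ℂ)

lemma dampf_cont : Continuous dampf := by
  unfold dampf
  exact Complex.continuous_ofReal.comp (Real.continuous_exp.comp (by continuity))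

lemma dampf_integrable : Integrable dampf := by
  have hIoi : IntegrableOn dampf (Ioi 0) := by
    apply (integrableOn_cexp_neg_mul (a := (1/2 : ℂ)) (by norm_num)).congr_fun ?_ measurableSet_Ioi
    intro x hx
    unfold dampf
    rw [abs_of_pos hx, Complex.ofReal_exp]
    norm_num
    ring_nf
  have hIic : IntegrableOn dampf (Iic 0) := by
    rw [← Measure.map_neg_eq_self (volume : Measure ℝ)]
    have m : MeasurableEmbedding fun x : ℝ => -x := (Homeomorph.neg ℝ).measurableEmbedding
    rw [m.integrableOn_map_iff]
    have : (dampf ∘ fun x : ℝ => -x) = dampf := by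
      ext x; simp [dampf, abs_neg]
    rw [this]
    simpa [neg_Iic] using (integrableOn_Ici_iff_integrableOn_Ioi).mpr hIoi
  have := hIic.union hIoi
  rwa [Iic_union_Ioi, integrableOn_univ] at this

open Real in
lemma dampf_fourier (ξ : ℝ) :
    (𝓕 dampf) ξ = (((1:ℝ)/4 + (2*π*ξ)^2 : ℝ) : ℂ)⁻¹ := by
  rw [Real.fourier_real_eq_integral_exp_smul]
  set b : ℝ := 2*π*ξ with hb
  set G : ℝ → ℂ := fun x => Complex.exp (↑(-2 * π * x * ξ) * Complex.I) • dampf x with hG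
  have hGnorm : ∀ x, ‖Complex.exp (↑(-2 * π * x * ξ) * Complex.I)‖ = 1 := by
    intro x
    exact Complex.norm_exp_ofReal_mul_I _
  have hGint : Integrable G := by
    apply dampf_integrable.bdd_mul
    · exact (Complex.continuous_exp.comp (by continuity)).aestronglyMeasurable
    · exact Filter.Eventually.of_forall fun x => le_of_eq (hGnorm x)
  have hsplit : ∫ x, G x = (∫ x in Iic 0, G x) + ∫ x in Ioi 0, G x := by
    rw [← setIntegral_union (Iic_disjoint_Ioi le_rfl) measurableSet_Ioi
      hGint.integrableOn hGint.integrableOn, Iic_union_Ioi, setIntegral_univ]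
  have hpos : ∫ x in Ioi 0, G x = 1 / ((1/2 : ℂ) + b * Complex.I) := by
    rw [← integral_cexp_neg_mul_Ioi (a := (1/2 : ℂ) + b * Complex.I) (by simp)]
    refine setIntegral_congr_fun measurableSet_Ioi (fun x hx => ?_)
    have hx' : |x| = x := abs_of_pos hx
    simp only [hG, dampf, hx', smul_eq_mul, ← Complex.exp_add, Complex.ofReal_exp]
    congr 1
    push_cast [hb]
    ring
  have hneg : ∫ x in Iic 0, G x = 1 / ((1/2 : ℂ) - b * Complex.I) := by
    rw [show (0:ℝ) = -0 by ring, ← integral_comp_neg_Ioi, ← integral_cexp_neg_mul_Ioi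
      (a := (1/2 : ℂ) - b * Complex.I) (by simp)]
    refine setIntegral_congr_fun measurableSet_Ioi (fun x hx => ?_)
    have hx' : |(-x)| = x := by rw [abs_neg]; exact abs_of_pos hx
    simp only [hG, dampf, hx', smul_eq_mul, ← Complex.exp_add, Complex.ofReal_exp]
    congr 1
    push_cast [hb]
    ring
  rw [hsplit, hpos, hneg]
  have h1 : ((1/2 : ℂ) + b * Complex.I) ≠ 0 := by
    intro h
    have := congrArg Complex.re h
    simp at this
  have h2 : ((1/2 : ℂ) - b * Complex.I) ≠ 0 := by
    intro h
    have := congrArg Complex.re h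
    simp at this
  have h3 : (((1:ℝ)/4 + b^2 : ℝ) : ℂ) ≠ 0 := by
    rw [Complex.ofReal_ne_zero]
    positivity
  rw [div_add_div _ _ h2 h1]
  rw [div_eq_iff (by exact mul_ne_zero h2 h1), eq_comm, inv_mul_eq_iff_eq_mul₀ h3] at *
  push_cast
  ring_nf
  rw [Complex.I_sq]
  ring


lemma kernel_integrable : Integrable (fun u : ℝ => ((1:ℝ)/4 + u^2)⁻¹) := by
  apply (integrable_inv_one_add_sq.const_mul 4).mono'
    ((Continuous.inv₀ (by continuity) (fun u => by positivity)).aestronglyMeasurable)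
  filter_upwards with u
  rw [Real.norm_eq_abs, Pi.inv_apply, abs_of_pos (by positivity : (0:ℝ) < ((1:ℝ)/4 + u^2)⁻¹),
    show 4*((1:ℝ)+u^2)⁻¹ = (((1:ℝ)+u^2)/4)⁻¹ by field_simp]
  exact inv_anti₀ (by positivity) (by nlinarith)

open Real in
lemma kernel2_integrable : Integrable (fun ξ : ℝ => ((1:ℝ)/4 + (2*π*ξ)^2)⁻¹) := by
  have h := kernel_integrable.comp_mul_left' (R := 2*π) (by positivity)
  simpa [mul_assoc] using h

open Real in
lemma fourier_dampf_integrable : Integrable (𝓕 dampf) := by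
  have : (𝓕 dampf) = fun ξ => (((1:ℝ)/4 + (2*π*ξ)^2 : ℝ) : ℂ)⁻¹ := funext dampf_fourier
  rw [this]
  simpa using (kernel2_integrable.ofReal (𝕜 := ℂ))

open Real in
lemma kernel_eval (p : ℝ) :
    ∫ u : ℝ, Complex.exp ((u:ℂ) * p * Complex.I) / (((1:ℝ)/4 + u^2 : ℝ) : ℂ)
      = 2 * π * Real.exp (-|p|/2) := by
  have hinv := dampf_cont.fourierInv_fourier_eq dampf_integrable fourier_dampf_integrable
  have hp := congrFun hinv p
  rw [Real.fourierInv_eq_fourier_neg, Real.fourier_real_eq_integral_exp_smul] at hp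
  set H : ℝ → ℂ := fun u => Complex.exp ((u:ℂ) * p * Complex.I) / (((1:ℝ)/4 + u^2 : ℝ) : ℂ) with hH
  have heq : (fun ξ : ℝ => Complex.exp (↑(-2 * π * ξ * -p) * Complex.I) • (𝓕 dampf) ξ)
      = fun ξ : ℝ => H (2 * π * ξ) := by
    ext ξ
    rw [dampf_fourier ξ, hH]
    simp only [smul_eq_mul, div_eq_mul_inv]
    congr 2
    push_cast
    ring
  rw [heq, MeasureTheory.Measure.integral_comp_mul_left H (2*π)] at hp
  have h2π : |((2*π)⁻¹ : ℝ)| = (2*π)⁻¹ := abs_of_pos (by positivity)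
  rw [h2π] at hp
  have : ((2*π : ℝ)⁻¹ : ℝ) • (∫ u, H u) = (dampf p) := hp
  show (∫ u, H u) = _
  have hne : (2*π : ℝ) ≠ 0 := by positivity
  calc ∫ u, H u = (2*π : ℝ) • ((2*π : ℝ)⁻¹ • ∫ u, H u) := by
        rw [smul_smul, mul_inv_cancel₀ hne, one_smul]
    _ = (2*π : ℝ) • (dampf p) := by rw [this]
    _ = 2 * π * Real.exp (-|p|/2) := by
        simp [dampf, Complex.real_smul]


open Real

/-- Carr–Madan representation of the undiscounted call price in log-moneyness form:
if `E[e^P] < ∞`, then the damped characteristic function is integrable on the line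
`Re z = 1/2` and `E[(e^P - 1)^+] = E[e^P] - (1/(2π)) ∫_ℝ E[e^{(1/2+iu)P}]/(1/4+u²) du`. -/
theorem carr_madan_representation {Ω : Type*} [MeasurableSpace Ω]
    (ℙ : Measure Ω) [IsProbabilityMeasure ℙ] (P : Ω → ℝ) (hP : Measurable P)
    (hint : Integrable (fun ω => Real.exp (P ω)) ℙ) :
    Integrable (fun u : ℝ =>
      (∫ ω, Complex.exp (((1 / 2 : ℂ) + (u : ℂ) * Complex.I) * (P ω : ℂ)) ∂ℙ) /
        ((1 / 4 + u ^ 2 : ℝ) : ℂ)) ∧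
    ((∫ ω, max (Real.exp (P ω) - 1) 0 ∂ℙ : ℝ) : ℂ)
      = ((∫ ω, Real.exp (P ω) ∂ℙ : ℝ) : ℂ)
        - (1 / (2 * (Real.pi : ℂ))) *
          ∫ u : ℝ, (∫ ω, Complex.exp (((1 / 2 : ℂ) + (u : ℂ) * Complex.I) * (P ω : ℂ)) ∂ℙ) /
            ((1 / 4 + u ^ 2 : ℝ) : ℂ) := by
  -- integrability of e^{P/2}
  have hhalf : Integrable (fun ω => Real.exp (P ω / 2)) ℙ := by
    apply (hint.add (integrable_const 1)).mono'
      ((Real.measurable_exp.comp (hP.div_const 2)).aestronglyMeasurable)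
    filter_upwards with ω
    simp only [Function.comp_apply, Pi.add_apply, Real.norm_eq_abs]
    rw [abs_of_pos (Real.exp_pos _)]
    rcases le_or_gt (P ω) 0 with h | h
    · have : Real.exp (P ω / 2) ≤ 1 := Real.exp_le_one_iff.2 (by linarith)
      have h2 : (0:ℝ) < Real.exp (P ω) := Real.exp_pos _
      linarith
    · have : Real.exp (P ω / 2) ≤ Real.exp (P ω) := Real.exp_le_exp.2 (by linarith)
      linarith
  -- the product function
  set F : ℝ × Ω → ℂ := fun z =>
    Complex.exp (((1 / 2 : ℂ) + (z.1 : ℂ) * Complex.I) * (P z.2 : ℂ)) /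
      ((1 / 4 + z.1 ^ 2 : ℝ) : ℂ) with hF
  have hmeas : AEStronglyMeasurable F ((volume : Measure ℝ).prod ℙ) := by
    apply Measurable.aestronglyMeasurable
    apply Measurable.div
    · exact Complex.measurable_exp.comp
        ((measurable_const.add ((Complex.measurable_ofReal.comp measurable_fst).mul
          measurable_const)).mul (Complex.measurable_ofReal.comp (hP.comp measurable_snd)))
    · exact Complex.measurable_ofReal.comp ((measurable_const.add
        ((measurable_fst.pow_const 2))) )
  have hFnorm : ∀ z : ℝ × Ω, ‖F z‖ = ((1:ℝ)/4 + z.1^2)⁻¹ * Real.exp (P z.2 / 2) := by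
    intro z
    have hpos : (0:ℝ) < 1/4 + z.1^2 := by positivity
    rw [hF]
    simp only [norm_div, Complex.norm_exp, Complex.norm_real, Real.norm_eq_abs]
    rw [abs_of_pos (by linarith : (0:ℝ) < 1/4 + z.1^2)]
    have : (((1 / 2 : ℂ) + (z.1 : ℂ) * Complex.I) * (P z.2 : ℂ)).re = P z.2 / 2 := by
      simp [Complex.add_re, Complex.mul_re]
      ring
    rw [this, div_eq_inv_mul]
  have hFint : Integrable F ((volume : Measure ℝ).prod ℙ) := by
    apply (kernel_integrable.mul_prod hhalf).mono' hmeas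
    filter_upwards with z
    rw [hFnorm z]
  -- part 1 : integrability
  have hpull : (fun u : ℝ =>
      (∫ ω, Complex.exp (((1 / 2 : ℂ) + (u : ℂ) * Complex.I) * (P ω : ℂ)) ∂ℙ) /
        ((1 / 4 + u ^ 2 : ℝ) : ℂ)) = fun u : ℝ => ∫ ω, F (u, ω) ∂ℙ := by
    ext u
    rw [hF]
    simp only
    rw [integral_div]
  have hpart1 : Integrable (fun u : ℝ =>
      (∫ ω, Complex.exp (((1 / 2 : ℂ) + (u : ℂ) * Complex.I) * (P ω : ℂ)) ∂ℙ) /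
        ((1 / 4 + u ^ 2 : ℝ) : ℂ)) := by
    rw [hpull]; exact hFint.integral_prod_left
  refine ⟨hpart1, ?_⟩
  -- inner integral over u for fixed ω
  have hinner : ∀ ω, (∫ u : ℝ, F (u, ω)) = ((2 * π * Real.exp (P ω / 2 - |P ω| / 2) : ℝ) : ℂ) := by
    intro ω
    have h1 : (fun u : ℝ => F (u, ω)) = fun u : ℝ =>
        Complex.exp ((P ω / 2 : ℝ) : ℂ) *
          (Complex.exp ((u:ℂ) * (P ω : ℂ) * Complex.I) / ((1/4 + u^2 : ℝ) : ℂ)) := by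
      ext u
      rw [hF]
      simp only
      rw [mul_div_assoc', ← Complex.exp_add]
      congr 2
      push_cast
      ring
    rw [h1, integral_const_mul, kernel_eval (P ω)]
    have hsplitc : ((P ω / 2 - |P ω| / 2 : ℝ) : ℂ) = ((P ω / 2 : ℝ) : ℂ) + ((-|P ω| / 2 : ℝ) : ℂ) := by
      push_cast; ring
    rw [Complex.ofReal_mul, Complex.ofReal_mul, Complex.ofReal_exp, Complex.ofReal_exp,
      hsplitc, Complex.exp_add]
    push_cast
    ring
  -- swap the integrals
  have hswap : (∫ u : ℝ, ∫ ω, F (u, ω) ∂ℙ)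
      = ∫ ω, (∫ u : ℝ, F (u, ω)) ∂ℙ :=
    integral_integral_swap hFint
  have hmin_int : Integrable (fun ω => Real.exp (P ω / 2 - |P ω| / 2)) ℙ := by
    apply (integrable_const (1:ℝ)).mono'
      ((Real.measurable_exp.comp ((hP.div_const 2).sub ((hP.abs).div_const 2))).aestronglyMeasurable)
    filter_upwards with ω
    simp only [Function.comp_apply, Pi.sub_apply, Real.norm_eq_abs]
    rw [abs_of_pos (Real.exp_pos _)]
    apply Real.exp_le_one_iff.2
    rcases abs_cases (P ω) with ⟨h, _⟩ | ⟨h, _⟩ <;> rw [h] <;> simp <;> linarith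
  -- compute the full double integral
  have hcalc : (∫ u : ℝ, (∫ ω, Complex.exp (((1 / 2 : ℂ) + (u : ℂ) * Complex.I) * (P ω : ℂ)) ∂ℙ) /
        ((1 / 4 + u ^ 2 : ℝ) : ℂ))
      = 2 * (π : ℂ) * ((∫ ω, Real.exp (P ω / 2 - |P ω| / 2) ∂ℙ : ℝ) : ℂ) := by
    rw [hpull, hswap]
    have : (fun ω => ∫ u : ℝ, F (u, ω)) = fun ω =>
        2 * (π:ℂ) * ((Real.exp (P ω / 2 - |P ω| / 2) : ℝ) : ℂ) := by
      ext ω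
      rw [hinner ω]
      push_cast
      ring
    rw [this]
    have h2 : ∀ ω, 2 * (π:ℂ) * ((Real.exp (P ω / 2 - |P ω| / 2) : ℝ) : ℂ)
        = (((2 * π * Real.exp (P ω / 2 - |P ω| / 2) : ℝ)) : ℂ) := by
      intro ω; push_cast; ring
    simp only [h2]
    rw [show (∫ ω, (((2 * π * Real.exp (P ω / 2 - |P ω| / 2) : ℝ)) : ℂ) ∂ℙ)
        = (((∫ ω, 2 * π * Real.exp (P ω / 2 - |P ω| / 2) ∂ℙ : ℝ)) : ℂ) from integral_ofReal]
    rw [integral_const_mul]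
    push_cast
    ring
  rw [hcalc]
  have hπ : ((π : ℂ)) ≠ 0 := Complex.ofReal_ne_zero.2 Real.pi_ne_zero
  have hsimp : (1 / (2 * (π : ℂ))) * (2 * (π : ℂ) * ((∫ ω, Real.exp (P ω / 2 - |P ω| / 2) ∂ℙ : ℝ) : ℂ))
      = ((∫ ω, Real.exp (P ω / 2 - |P ω| / 2) ∂ℙ : ℝ) : ℂ) := by
    field_simp
  rw [hsimp]
  -- reduce to a real identity
  rw [← Complex.ofReal_sub]
  congr 1
  have hptwise : (fun ω => max (Real.exp (P ω) - 1) 0)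
      = fun ω => Real.exp (P ω) - Real.exp (P ω / 2 - |P ω| / 2) := by
    ext ω
    rcases le_or_gt 0 (P ω) with h | h
    · rw [_root_.abs_of_nonneg h]
      have : Real.exp (P ω / 2 - P ω / 2) = 1 := by norm_num
      rw [this, max_eq_left]
      have := Real.one_le_exp h
      linarith
    · rw [_root_.abs_of_neg h]
      have : P ω / 2 - -(P ω) / 2 = P ω := by ring
      rw [this, max_eq_right]
      · rw [sub_self]
      · have := Real.exp_le_one_iff.2 h.le
        linarith
  rw [hptwise, integral_sub hint hmin_int]
end

section
/- Let K > 0 and let P and P' be real-valued random variables (possibly on different probability spaces) with E[e^P] < ∞, E[e^{P'}] < ∞ and E[e^{P'}] = E[e^P]. Then |K·E[(e^{P'} − 1)^+] − K·E[(e^P − 1)^+]| ≤ (K/(2π)) ∫_ℝ |E[e^{(1/2+iu)P'}] − E[e^{(1/2+iu)P}]|/(1/4 + u²) du. (Carr–Madan bound: the difference of call prices is controlled by the integrated difference of damped characteristic functions on the line Re z = 1/2.) -/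
open MeasureTheory

open MeasureTheory Real Set Filter FourierTransform Complex Topology

namespace CarrMadanAux

lemma integral_cexp_neg_mul_Ioi {c : ℂ} (hc : 0 < c.re) :
    ∫ x : ℝ in Ioi (0:ℝ), Complex.exp (-(c * x)) = 1 / c := by
  have hc0 : c ≠ 0 := fun h => by simp [h] at hc
  have hderiv : ∀ x ∈ Ici (0:ℝ), HasDerivAt (fun x : ℝ => -Complex.exp (-(c * x)) / c)
      (Complex.exp (-(c * x))) x := by
    intro x _
    have h1 : HasDerivAt (fun x : ℝ => -(c * (x:ℂ))) (-c) x := by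
      simpa [Pi.neg_def] using ((Complex.ofRealCLM.hasDerivAt (x := x)).const_mul c).neg
    have h3 := ((h1.cexp).div_const c).neg
    have h4 : c * (Complex.exp (-(c * x)) / c) = Complex.exp (-(c * x)) := by
      field_simp
    simpa [Pi.neg_def, neg_div, mul_comm, mul_div_assoc, h4] using h3
  have hint : IntegrableOn (fun x : ℝ => Complex.exp (-(c * x))) (Ioi (0:ℝ)) := by
    refine (exp_neg_integrableOn_Ioi 0 hc).mono' ?_ ?_
    · exact (Complex.continuous_exp.comp (by continuity)).aestronglyMeasurable
    · filter_upwards with x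
      simp [Complex.norm_exp, Complex.mul_re, mul_comm]
  have htend : Tendsto (fun x : ℝ => -Complex.exp (-(c * x)) / c) atTop (𝓝 0) := by
    rw [tendsto_zero_iff_norm_tendsto_zero]
    have heq : (fun x : ℝ => ‖-Complex.exp (-(c * x)) / c‖) =
        fun x : ℝ => Real.exp (-(c.re * x)) / ‖c‖ := by
      ext x
      simp [norm_div, Complex.norm_exp, Complex.mul_re]
    rw [heq]
    have h2 : Tendsto (fun x : ℝ => -(c.re * x)) atTop atBot :=
      tendsto_neg_atBot_iff.mpr (Tendsto.const_mul_atTop hc tendsto_id)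
    simpa using (Real.tendsto_exp_atBot.comp h2).div_const ‖c‖
  have := integral_Ioi_of_hasDerivAt_of_tendsto' hderiv hint htend
  rw [this]
  simp [neg_div]

lemma integrable_exp_neg_abs_half : Integrable (fun x : ℝ => Real.exp (-|x| / 2)) := by
  have h1 : IntegrableOn (fun x : ℝ => Real.exp (-|x| / 2)) (Ioi (0:ℝ)) := by
    refine (exp_neg_integrableOn_Ioi 0 (by norm_num : (0:ℝ) < 1/2)).congr_fun ?_ measurableSet_Ioi
    intro x hx
    simp only
    rw [abs_of_pos hx]
    ring_nf
  have hIci : IntegrableOn (fun x : ℝ => Real.exp (-|x| / 2)) (Ici (0:ℝ)) := by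
    rwa [integrableOn_Ici_iff_integrableOn_Ioi]
  have h2 : IntegrableOn (fun x : ℝ => Real.exp (-|x| / 2)) (Iic (0:ℝ)) := by
    rw [← (Measure.measurePreserving_neg (volume : Measure ℝ)).integrableOn_comp_preimage
        (Homeomorph.neg ℝ).measurableEmbedding]
    simpa only [Function.comp_def, abs_neg, neg_preimage, neg_Iic, neg_zero] using hIci
  have : Iic (0:ℝ) ∪ Ioi 0 = univ := Iic_union_Ioi
  rw [← integrableOn_univ, ← this]
  exact h2.union h1

lemma fourier_exp_abs (ξ : ℝ) :
    𝓕 (fun x : ℝ => (Real.exp (-|x| / 2) : ℂ)) ξ = ((1 / (1/4 + 4*π^2*ξ^2) : ℝ) : ℂ) := by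
  set c₁ : ℂ := 1/2 + (2*π*ξ : ℝ) * Complex.I with hc₁def
  set c₂ : ℂ := 1/2 - (2*π*ξ : ℝ) * Complex.I with hc₂def
  have hre₁ : c₁.re = 1/2 := by simp [hc₁def]
  have hre₂ : c₂.re = 1/2 := by simp [hc₂def, Complex.sub_re]
  have hpos₁ : 0 < c₁.re := by rw [hre₁]; norm_num
  have hpos₂ : 0 < c₂.re := by rw [hre₂]; norm_num
  have hc₁0 : c₁ ≠ 0 := fun h => by rw [h] at hpos₁; simp at hpos₁
  have hc₂0 : c₂ ≠ 0 := fun h => by rw [h] at hpos₂; simp at hpos₂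
  rw [Real.fourier_real_eq_integral_exp_smul]
  have hint : Integrable (fun v : ℝ =>
      Complex.exp (↑(-2 * π * v * ξ) * Complex.I) • (Real.exp (-|v| / 2) : ℂ)) := by
    refine integrable_exp_neg_abs_half.mono' ?_ ?_
    · refine Continuous.aestronglyMeasurable ?_
      continuity
    · filter_upwards with v
      simp [Complex.norm_exp, Real.abs_exp]
  rw [← intervalIntegral.integral_Iic_add_Ioi (b := (0:ℝ)) hint.integrableOn hint.integrableOn]
  have h1 : ∫ v in Ioi (0:ℝ), Complex.exp (↑(-2 * π * v * ξ) * Complex.I) •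
      (Real.exp (-|v| / 2) : ℂ) = 1 / c₁ := by
    rw [← integral_cexp_neg_mul_Ioi hpos₁]
    refine setIntegral_congr_fun measurableSet_Ioi (fun v hv => ?_)
    simp only [smul_eq_mul]
    rw [abs_of_pos hv, Complex.ofReal_exp, ← Complex.exp_add]
    congr 1
    rw [hc₁def]
    push_cast
    ring
  have h2 : ∫ v in Iic (0:ℝ), Complex.exp (↑(-2 * π * v * ξ) * Complex.I) •
      (Real.exp (-|v| / 2) : ℂ) = 1 / c₂ := by
    have hcn := integral_comp_neg_Ioi (0:ℝ) (fun v : ℝ =>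
      Complex.exp (↑(-2 * π * v * ξ) * Complex.I) • (Real.exp (-|v| / 2) : ℂ))
    rw [neg_zero] at hcn
    rw [← hcn, ← integral_cexp_neg_mul_Ioi hpos₂]
    refine setIntegral_congr_fun measurableSet_Ioi (fun v hv => ?_)
    simp only [smul_eq_mul, abs_neg]
    rw [abs_of_pos hv, Complex.ofReal_exp, ← Complex.exp_add]
    congr 1
    rw [hc₂def]
    push_cast
    ring
  rw [h1, h2]
  have hprod : c₁ * c₂ = ((1/4 + 4*π^2*ξ^2 : ℝ) : ℂ) := by
    rw [hc₁def, hc₂def]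
    push_cast
    ring_nf
    rw [Complex.I_sq]
    ring
  have hsum : c₁ + c₂ = 1 := by rw [hc₁def, hc₂def]; ring
  rw [div_add_div _ _ hc₂0 hc₁0, one_mul, mul_one, hsum, mul_comm c₂ c₁, hprod]
  norm_cast

lemma integrable_inv_quarter : Integrable (fun u : ℝ => 1 / (1/4 + u^2)) := by
  have h := (integrable_inv_one_add_sq).const_mul 4
  refine h.mono' ?_ ?_
  · refine Continuous.aestronglyMeasurable ?_
    refine continuous_const.div (by continuity) (fun x => by positivity)
  · filter_upwards with u
    have h1 : (0:ℝ) < 1/4 + u^2 := by positivity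
    have h2 : (0:ℝ) < 1 + u^2 := by positivity
    rw [Real.norm_eq_abs, abs_of_pos (by positivity)]
    have h4 : (4:ℝ) * (1 + u^2)⁻¹ = 4 / (1 + u^2) := by rw [div_eq_mul_inv]
    rw [h4, div_le_div_iff₀ h1 h2]
    nlinarith [sq_nonneg u]

lemma integrable_inv_ft : Integrable (fun ξ : ℝ => 1 / (1/4 + 4*π^2*ξ^2)) := by
  have h := (integrable_inv_one_add_sq).const_mul 4
  have hπ := Real.pi_gt_three
  refine h.mono' ?_ ?_
  · refine Continuous.aestronglyMeasurable ?_
    refine continuous_const.div (by continuity) (fun x => by positivity)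
  · filter_upwards with ξ
    have h1 : (0:ℝ) < 1/4 + 4*π^2*ξ^2 := by positivity
    have h2 : (0:ℝ) < 1 + ξ^2 := by positivity
    rw [Real.norm_eq_abs, abs_of_pos (by positivity)]
    have h4 : (4:ℝ) * (1 + ξ^2)⁻¹ = 4 / (1 + ξ^2) := by rw [div_eq_mul_inv]
    rw [h4, div_le_div_iff₀ h1 h2]
    have hπ2 : (9:ℝ) ≤ π^2 := by nlinarith [Real.pi_gt_three]
    nlinarith [sq_nonneg ξ, mul_le_mul_of_nonneg_right hπ2 (sq_nonneg ξ)]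

lemma cauchy_fourier (x : ℝ) :
    ∫ u : ℝ, Complex.exp ((u:ℂ) * (x:ℂ) * Complex.I) / ((1/4 : ℂ) + (u:ℂ)^2)
      = ((2 * π * Real.exp (-|x| / 2) : ℝ) : ℂ) := by
  set f : ℝ → ℂ := fun y => (Real.exp (-|y|/2) : ℂ) with hfdef
  have hf_cont : Continuous f :=
    Complex.continuous_ofReal.comp (Real.continuous_exp.comp ((_root_.continuous_abs.neg).div_const 2))
  have hf_int : Integrable f := integrable_exp_neg_abs_half.ofReal
  have hFT : 𝓕 f = fun ξ : ℝ => ((1/(1/4+4*π^2*ξ^2) : ℝ) : ℂ) := funext fourier_exp_abs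
  have hFT_int : Integrable (𝓕 f) := by rw [hFT]; exact integrable_inv_ft.ofReal
  have hinv := hf_int.fourierInv_fourier_eq hFT_int (hf_cont.continuousAt (x := x))
  rw [Real.fourierInv_eq', hFT] at hinv
  simp only [RCLike.inner_apply, conj_trivial, mul_comm x] at hinv
  set g : ℝ → ℂ := fun u => Complex.exp ((u:ℂ) * (x:ℂ) * Complex.I) / ((1/4 : ℂ) + (u:ℂ)^2)
    with hgdef
  have hcomp : (fun ξ : ℝ =>
      Complex.exp ((2*π*(ξ*x) : ℝ) * Complex.I) • ((1/(1/4+4*π^2*ξ^2) : ℝ) : ℂ))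
      = fun ξ : ℝ => g (2*π*ξ) := by
    funext ξ
    simp only [hgdef, smul_eq_mul]
    have harg : ((2*π*(ξ*x) : ℝ) : ℂ) * Complex.I = ((2*π*ξ : ℝ) : ℂ) * (x:ℂ) * Complex.I := by
      push_cast; ring
    have hden : ((1/4 : ℂ) + ((2*π*ξ : ℝ) : ℂ)^2) = ((1/4 + 4*π^2*ξ^2 : ℝ) : ℂ) := by
      push_cast; ring
    rw [harg, hden, Complex.ofReal_div, Complex.ofReal_one, mul_one_div]
  rw [hcomp] at hinv
  have hscale := MeasureTheory.Measure.integral_comp_mul_left g (2*π)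
  rw [hinv] at hscale
  have h2π : (0:ℝ) < 2*π := by positivity
  rw [abs_of_pos (inv_pos.mpr h2π)] at hscale
  have : ∫ u : ℝ, g u = (2*π : ℝ) • f x := by
    rw [hscale, smul_smul, mul_inv_cancel₀ (ne_of_gt h2π), one_smul]
  rw [hgdef] at this
  rw [this, hfdef]
  simp only [Complex.real_smul]
  push_cast
  ring


lemma min_exp_eq (x : ℝ) : Real.exp (x/2) * Real.exp (-|x|/2) = min (Real.exp x) 1 := by
  rcases le_total x 0 with h | h
  · rw [abs_of_nonpos h, min_eq_left (Real.exp_le_one_iff.mpr h), ← Real.exp_add]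
    congr 1
    ring
  · have h1 : 1 ≤ Real.exp x := by
      rw [← Real.exp_zero]
      exact Real.exp_le_exp.mpr h
    rw [_root_.abs_of_nonneg h, min_eq_right h1, ← Real.exp_add]
    rw [show x/2 + -x/2 = 0 by ring, Real.exp_zero]

lemma max_exp_eq (x : ℝ) : max (Real.exp x - 1) 0 = Real.exp x - min (Real.exp x) 1 := by
  rcases le_total (Real.exp x) 1 with h | h
  · rw [min_eq_left h, max_eq_right (by linarith), sub_self]
  · rw [min_eq_right h, max_eq_left (by linarith)]

lemma model_repr {Ω : Type*} [MeasurableSpace Ω] (ℙ : Measure Ω) [IsProbabilityMeasure ℙ]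
    (P : Ω → ℝ) (hP : Measurable P) (hint : Integrable (fun ω => Real.exp (P ω)) ℙ) :
    Integrable (fun u : ℝ =>
      (∫ ω, Complex.exp (((1/2 : ℂ) + (u:ℂ) * Complex.I) * (P ω : ℂ)) ∂ℙ)
        / ((1/4 : ℂ) + (u:ℂ)^2)) ∧
    ∫ u : ℝ, (∫ ω, Complex.exp (((1/2 : ℂ) + (u:ℂ) * Complex.I) * (P ω : ℂ)) ∂ℙ)
        / ((1/4 : ℂ) + (u:ℂ)^2)
      = ((2 * π * ∫ ω, min (Real.exp (P ω)) 1 ∂ℙ : ℝ) : ℂ) := by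
  have hhalf : Integrable (fun ω => Real.exp (P ω / 2)) ℙ := by
    refine ((integrable_const (1:ℝ)).add hint).mono' ?_ ?_
    · exact (Real.measurable_exp.comp (hP.div_const 2)).aestronglyMeasurable
    · filter_upwards with ω
      rw [Real.norm_eq_abs, abs_of_pos (Real.exp_pos _)]
      rcases le_total (P ω) 0 with h | h
      · have h1 : Real.exp (P ω / 2) ≤ 1 := Real.exp_le_one_iff.mpr (by linarith)
        have h2 := Real.exp_pos (P ω)
        simp only [Pi.add_apply]
        linarith
      · have h1 : Real.exp (P ω / 2) ≤ Real.exp (P ω) := Real.exp_le_exp.mpr (by linarith)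
        have h2 := Real.exp_pos (P ω / 2)
        simp only [Pi.add_apply]
        linarith
  set G : ℝ × Ω → ℂ := fun p =>
    Complex.exp (((1/2 : ℂ) + (p.1:ℂ) * Complex.I) * (P p.2 : ℂ)) / ((1/4 : ℂ) + (p.1:ℂ)^2)
    with hGdef
  have hGmeas : AEStronglyMeasurable G ((volume : Measure ℝ).prod ℙ) := by
    apply Measurable.aestronglyMeasurable
    apply Measurable.div
    · exact Complex.measurable_exp.comp
        ((measurable_const.add ((Complex.measurable_ofReal.comp measurable_fst).mul
          measurable_const)).mul (Complex.measurable_ofReal.comp (hP.comp measurable_snd)))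
    · exact measurable_const.add ((Complex.measurable_ofReal.comp measurable_fst).pow
        measurable_const)
  have harg : ∀ (u x : ℝ), ((1/2 : ℂ) + (u:ℂ) * Complex.I) * (x : ℂ)
      = ((x/2 : ℝ) : ℂ) + ((u * x : ℝ) : ℂ) * Complex.I := by
    intro u x
    push_cast
    ring
  have hden : ∀ u : ℝ, ((1/4 : ℂ) + (u:ℂ)^2) = ((1/4 + u^2 : ℝ) : ℂ) := by
    intro u
    push_cast
    ring
  have hdenpos : ∀ u : ℝ, (0:ℝ) < 1/4 + u^2 := fun u => by positivity
  have hGnorm : ∀ p : ℝ × Ω, ‖G p‖ = (1 / (1/4 + p.1^2)) * Real.exp (P p.2 / 2) := by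
    intro p
    rw [hGdef]
    simp only
    rw [norm_div, harg, hden]
    rw [Complex.norm_exp, Complex.norm_real, Real.norm_eq_abs,
      abs_of_pos (hdenpos _)]
    have : (((P p.2 / 2 : ℝ) : ℂ) + ((p.1 * P p.2 : ℝ) : ℂ) * Complex.I).re = P p.2 / 2 := by
      simp
    rw [this]
    rw [div_eq_mul_inv, one_div, mul_comm]
    norm_num
  have hGint : Integrable G ((volume : Measure ℝ).prod ℙ) := by
    refine (integrable_inv_quarter.mul_prod hhalf).mono' hGmeas ?_
    filter_upwards with p
    rw [hGnorm p]
  have hinner : ∀ ω : Ω, (∫ u : ℝ, G (u, ω))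
      = ((2 * π * min (Real.exp (P ω)) 1 : ℝ) : ℂ) := by
    intro ω
    have hfact : ∀ u : ℝ, G (u, ω)
        = ((Real.exp (P ω / 2) : ℝ) : ℂ)
          * (Complex.exp ((u:ℂ) * (P ω : ℂ) * Complex.I) / ((1/4 : ℂ) + (u:ℂ)^2)) := by
      intro u
      rw [hGdef]
      simp only
      rw [harg, Complex.ofReal_exp, mul_div_assoc', ← Complex.exp_add]
      congr 2
      push_cast
      ring
    simp_rw [hfact]
    rw [integral_const_mul, cauchy_fourier (P ω), ← Complex.ofReal_mul]
    congr 1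
    rw [← min_exp_eq]
    ring
  have heqfun : (fun u : ℝ =>
      (∫ ω, Complex.exp (((1/2 : ℂ) + (u:ℂ) * Complex.I) * (P ω : ℂ)) ∂ℙ)
        / ((1/4 : ℂ) + (u:ℂ)^2)) = fun u : ℝ => ∫ ω, G (u, ω) ∂ℙ := by
    funext u
    rw [hGdef]
    simp only
    rw [integral_div]
  constructor
  · rw [heqfun]
    exact hGint.integral_prod_left
  · rw [heqfun]
    have hswap := MeasureTheory.integral_integral_swap
      (f := fun (u : ℝ) (ω : Ω) => G (u, ω)) (μ := (volume : Measure ℝ)) (ν := ℙ) hGint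
    rw [hswap]
    simp_rw [hinner]
    rw [show (2 * π * ∫ ω, min (Real.exp (P ω)) 1 ∂ℙ : ℝ)
        = ∫ ω, 2 * π * min (Real.exp (P ω)) 1 ∂ℙ from (integral_const_mul _ _).symm]
    exact integral_ofReal (𝕜 := ℂ) (f := fun ω => 2 * π * min (Real.exp (P ω)) 1)


lemma min_integrable {Ω : Type*} [MeasurableSpace Ω] (ℙ : Measure Ω) [IsProbabilityMeasure ℙ]
    (P : Ω → ℝ) (hP : Measurable P) :
    Integrable (fun ω => min (Real.exp (P ω)) 1) ℙ := by
  refine (integrable_const (1:ℝ)).mono' ?_ ?_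
  · exact ((Real.measurable_exp.comp hP).min measurable_const).aestronglyMeasurable
  · filter_upwards with ω
    rw [Real.norm_eq_abs, _root_.abs_of_pos (lt_min (Real.exp_pos _) one_pos)]
    exact min_le_right _ _

lemma max_integral {Ω : Type*} [MeasurableSpace Ω] (ℙ : Measure Ω) [IsProbabilityMeasure ℙ]
    (P : Ω → ℝ) (hP : Measurable P) (hint : Integrable (fun ω => Real.exp (P ω)) ℙ) :
    ∫ ω, max (Real.exp (P ω) - 1) 0 ∂ℙ
      = (∫ ω, Real.exp (P ω) ∂ℙ) - ∫ ω, min (Real.exp (P ω)) 1 ∂ℙ := by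
  rw [← integral_sub hint (min_integrable ℙ P hP)]
  simp_rw [max_exp_eq]

end CarrMadanAux

open CarrMadanAux Real

/-- Carr–Madan bound: the difference of (undiscounted) call prices is controlled by
the integrated difference of damped characteristic functions on the line `Re z = 1/2`. -/
theorem carr_madan_bound {Ω Ω' : Type*} [MeasurableSpace Ω] [MeasurableSpace Ω']
    (ℙ : Measure Ω) (ℙ' : Measure Ω') [IsProbabilityMeasure ℙ] [IsProbabilityMeasure ℙ']
    (K : ℝ) (hK : 0 < K) (P : Ω → ℝ) (P' : Ω' → ℝ) (hP : Measurable P) (hP' : Measurable P')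
    (hint : Integrable (fun ω => Real.exp (P ω)) ℙ)
    (hint' : Integrable (fun ω => Real.exp (P' ω)) ℙ')
    (heq : ∫ ω, Real.exp (P' ω) ∂ℙ' = ∫ ω, Real.exp (P ω) ∂ℙ) :
    |K * ∫ ω, max (Real.exp (P' ω) - 1) 0 ∂ℙ' - K * ∫ ω, max (Real.exp (P ω) - 1) 0 ∂ℙ|
      ≤ (K / (2 * Real.pi)) *
        ∫ u : ℝ,
          ‖((∫ ω, Complex.exp (((1 / 2 : ℂ) + (u : ℂ) * Complex.I) * (P' ω : ℂ)) ∂ℙ')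
              - ∫ ω, Complex.exp (((1 / 2 : ℂ) + (u : ℂ) * Complex.I) * (P ω : ℂ)) ∂ℙ)‖
          / (1 / 4 + u ^ 2) := by

  have h2π : (0:ℝ) < 2 * π := by positivity
  obtain ⟨hI, hV⟩ := model_repr ℙ P hP hint
  obtain ⟨hI', hV'⟩ := model_repr ℙ' P' hP' hint'
  set m : ℝ := ∫ ω, min (Real.exp (P ω)) 1 ∂ℙ with hm
  set m' : ℝ := ∫ ω, min (Real.exp (P' ω)) 1 ∂ℙ' with hm'
  set I₀ : ℝ := ∫ u : ℝ,
      ‖((∫ ω, Complex.exp (((1 / 2 : ℂ) + (u : ℂ) * Complex.I) * (P' ω : ℂ)) ∂ℙ')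
          - ∫ ω, Complex.exp (((1 / 2 : ℂ) + (u : ℂ) * Complex.I) * (P ω : ℂ)) ∂ℙ)‖
      / (1 / 4 + u ^ 2) with hI₀
  -- key bound : 2π |m' - m| ≤ I₀
  have hsub : ∫ u : ℝ,
      ((∫ ω, Complex.exp (((1/2 : ℂ) + (u:ℂ) * Complex.I) * (P' ω : ℂ)) ∂ℙ')
          / ((1/4 : ℂ) + (u:ℂ)^2)
        - (∫ ω, Complex.exp (((1/2 : ℂ) + (u:ℂ) * Complex.I) * (P ω : ℂ)) ∂ℙ)
          / ((1/4 : ℂ) + (u:ℂ)^2))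
      = ((2 * π * m' : ℝ) : ℂ) - ((2 * π * m : ℝ) : ℂ) := by
    rw [integral_sub hI' hI, hV, hV']
  have hkey : 2 * π * |m' - m| ≤ I₀ := by
    have hb := norm_integral_le_integral_norm (μ := (volume : Measure ℝ))
      (f := fun u : ℝ =>
        (∫ ω, Complex.exp (((1/2 : ℂ) + (u:ℂ) * Complex.I) * (P' ω : ℂ)) ∂ℙ')
            / ((1/4 : ℂ) + (u:ℂ)^2)
          - (∫ ω, Complex.exp (((1/2 : ℂ) + (u:ℂ) * Complex.I) * (P ω : ℂ)) ∂ℙ)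
            / ((1/4 : ℂ) + (u:ℂ)^2))
    rw [hsub] at hb
    have hL : ‖((2 * π * m' : ℝ) : ℂ) - ((2 * π * m : ℝ) : ℂ)‖ = 2 * π * |m' - m| := by
      rw [← Complex.ofReal_sub, Complex.norm_real, Real.norm_eq_abs,
        show 2 * π * m' - 2 * π * m = 2 * π * (m' - m) by ring, abs_mul,
        _root_.abs_of_pos h2π]
    rw [hL] at hb
    refine hb.trans (le_of_eq ?_)
    rw [hI₀]
    congr 1
    funext u
    rw [div_sub_div_same, norm_div]
    congr 1
    rw [show ((1/4 : ℂ) + (u:ℂ)^2) = ((1/4 + u^2 : ℝ) : ℂ) by push_cast; ring]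
    rw [Complex.norm_real, Real.norm_eq_abs, _root_.abs_of_pos (by positivity : (0:ℝ) < 1/4 + u^2)]
  have hd : |m' - m| ≤ I₀ / (2 * π) := by
    rw [le_div_iff₀ h2π]
    linarith [hkey]
  rw [max_integral ℙ' P' hP' hint', max_integral ℙ P hP hint, heq, ← hm, ← hm']
  rw [show K * ((∫ ω, Real.exp (P ω) ∂ℙ) - m') - K * ((∫ ω, Real.exp (P ω) ∂ℙ) - m)
      = K * (m - m') by ring]
  rw [abs_mul, _root_.abs_of_pos hK, abs_sub_comm]
  calc K * |m' - m| ≤ K * (I₀ / (2 * π)) := mul_le_mul_of_nonneg_left hd hK.le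
    _ = K / (2 * π) * I₀ := by ring
end
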